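/- arXiv:2310.06354 — 13 statements merged into one kernel-verified Lean document; each statement's English description precedes it below -/
import Mathlib

section
/- Let Δ ≥ 2 and let 𝒮 be a collection (with repetition allowed) of copies of the star K_{1,Δ} on a common vertex set V with |V| = n. Write n = a(2Δ-1) + b with a, b nonnegative integers, a ≥ 1, 0 ≤ b ≤ 2Δ-2, and write b(Δ-1) = k₁(2Δ-1) + k₂ with k₁, k₂ nonnegative integers, 0 ≤ k₂ ≤ Δ. If 𝒮 is rainbow K_{1,Δ}-free, then |𝒮| ≤ a(Δ-1)² + k₁(Δ-1). -/
/-- A copy of the star K_{1,Δ} on the vertex set `V`: a center together with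
a set of `Δ` leaves not containing the center. -/
structure StarGraph (V : Type) (Δ : ℕ) where
  center : V
  leaves : Finset V
  card_leaves : leaves.card = Δ
  center_not_mem : center ∉ leaves

/-- `x` and `y` are adjacent in the star `S`. -/
def StarGraph.Adj {V : Type} {Δ : ℕ} (S : StarGraph V Δ) (x y : V) : Prop :=
  (x = S.center ∧ y ∈ S.leaves) ∨ (y = S.center ∧ x ∈ S.leaves)

/-- The collection `S` has a rainbow star with center `u` and leaf set `L`:
there is an injective (on `L`) assignment of the leaves to members of the
collection such that each edge from `u` to a leaf lies in the assigned star. -/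
def IsRainbowStarAt {V : Type} {Δ t : ℕ} (S : Fin t → StarGraph V Δ) (u : V) (L : Finset V) : Prop :=
  u ∉ L ∧ ∃ g : V → Fin t, Set.InjOn g ↑L ∧ ∀ l ∈ L, (S (g l)).Adj u l

/-- The collection `S` contains a rainbow `K_{1,Δ}`. -/
def HasRainbowStar {V : Type} {Δ t : ℕ} (S : Fin t → StarGraph V Δ) : Prop :=
  ∃ (u : V) (L : Finset V), L.card = Δ ∧ IsRainbowStarAt S u L

open Finset

lemma keyB {V : Type} [Fintype V] [DecidableEq V] {Δ t : ℕ} (hΔ : 2 ≤ Δ)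
    (S : Fin t → StarGraph V Δ) (hfree : ¬ HasRainbowStar S) (u : V) :
    (univ.filter (fun i : Fin t => (S i).center = u)).card +
      (univ.filter (fun v : V => ∃ i, (S i).center = v ∧ u ∈ (S i).leaves)).card + 1 ≤ Δ := by
  classical
  by_contra hcon
  push_neg at hcon
  set I₁ : Finset (Fin t) := univ.filter (fun i : Fin t => (S i).center = u) with hI₁
  set Du : Finset V := univ.filter (fun v : V => ∃ i, (S i).center = v ∧ u ∈ (S i).leaves) with hDu
  have hge : Δ ≤ I₁.card + Du.card := by omega
  have ht0 : 0 < t := by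
    rcases Nat.eq_zero_or_pos t with h0 | h
    · exfalso
      subst h0
      have h1 : I₁ = ∅ := by
        apply Finset.eq_empty_of_forall_notMem; intro i _; exact i.elim0
      have h2 : Du = ∅ := by
        apply Finset.eq_empty_of_forall_notMem; intro v hv
        rw [hDu, mem_filter] at hv
        obtain ⟨i, _⟩ := hv.2
        exact i.elim0
      rw [h1, h2] at hge; simp at hge; omega
    · exact h
  obtain i₀ : Fin t := ⟨0, ht0⟩
  have hphi : ∀ v : V, ∃ i : Fin t, v ∈ Du → ((S i).center = v ∧ u ∈ (S i).leaves) := by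
    intro v
    by_cases hv : v ∈ Du
    · rw [hDu, mem_filter] at hv
      obtain ⟨i, hi⟩ := hv.2
      exact ⟨i, fun _ => hi⟩
    · exact ⟨i₀, fun h => absurd h hv⟩
  choose φ hφ using hphi
  have hφc : ∀ v ∈ Du, (S (φ v)).center = v := fun v hv => (hφ v hv).1
  have hφl : ∀ v ∈ Du, u ∈ (S (φ v)).leaves := fun v hv => (hφ v hv).2
  set I₂ : Finset (Fin t) := Du.image φ with hI₂
  have hI₂card : I₂.card = Du.card := by
    rw [hI₂]
    apply Finset.card_image_of_injOn
    intro v₁ h₁ v₂ h₂ heq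
    rw [← hφc v₁ h₁, ← hφc v₂ h₂, heq]
  have hdisj : Disjoint I₁ I₂ := by
    rw [Finset.disjoint_left]
    intro i hi1 hi2
    rw [hI₁, mem_filter] at hi1
    rw [hI₂, mem_image] at hi2
    obtain ⟨v, hv, hvi⟩ := hi2
    have h1 : (S i).center = v := by rw [← hvi]; exact hφc v hv
    have h2 : u ∈ (S i).leaves := by rw [← hvi]; exact hφl v hv
    apply (S i).center_not_mem
    rw [hi1.2]
    exact h2
  have hcardU : Δ ≤ (I₁ ∪ I₂).card := by
    rw [Finset.card_union_of_disjoint hdisj, hI₂card]; exact hge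
  obtain ⟨J, hJsub, hJcard⟩ := Finset.exists_subset_card_eq hcardU
  -- neighbor sets
  set N : Fin t → Finset V := fun i => if (S i).center = u then (S i).leaves else {(S i).center} with hN
  -- every member of J not centered at u came from I₂
  have hmemI₂ : ∀ i ∈ J, (S i).center ≠ u → ∃ v ∈ Du, φ v = i ∧ (S i).center = v ∧ u ∈ (S i).leaves := by
    intro i hiJ hic
    have := hJsub hiJ
    rw [Finset.mem_union] at this
    rcases this with h | h
    · rw [hI₁, mem_filter] at h; exact absurd h.2 hic
    · rw [hI₂, mem_image] at h
      obtain ⟨v, hv, hvi⟩ := h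
      exact ⟨v, hv, hvi, by rw [← hvi]; exact hφc v hv, by rw [← hvi]; exact hφl v hv⟩
  have hall : ∀ (s : Finset {x // x ∈ J}), s.card ≤ (s.biUnion (fun i => N ↑i)).card := by
    intro s
    by_cases hex : ∃ i ∈ s, (S (↑i : Fin t)).center = u
    · obtain ⟨i, his, hic⟩ := hex
      have h1 : (S (↑i : Fin t)).leaves ⊆ s.biUnion (fun i => N ↑i) := by
        intro x hx
        exact Finset.mem_biUnion.mpr ⟨i, his, by rw [hN]; simp only [hic, if_pos rfl]; simpa [hic] using hx⟩
      calc s.card ≤ (univ : Finset {x // x ∈ J}).card := Finset.card_le_card (Finset.subset_univ s)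
        _ = J.card := by simp
        _ = Δ := hJcard
        _ = (S (↑i : Fin t)).leaves.card := (S (↑i : Fin t)).card_leaves.symm
        _ ≤ _ := Finset.card_le_card h1
    · push_neg at hex
      have hinj : Set.InjOn (fun i : {x // x ∈ J} => (S (↑i : Fin t)).center) ↑s := by
        intro i₁ h₁ i₂ h₂ heq
        rw [Finset.mem_coe] at h₁ h₂
        obtain ⟨v₁, hv₁, hφ₁, hc₁, _⟩ := hmemI₂ ↑i₁ i₁.2 (hex i₁ h₁)
        obtain ⟨v₂, hv₂, hφ₂, hc₂, _⟩ := hmemI₂ ↑i₂ i₂.2 (hex i₂ h₂)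
        have hveq : v₁ = v₂ := by rw [← hc₁, ← hc₂]; exact heq
        apply Subtype.ext
        rw [← hφ₁, ← hφ₂, hveq]
      have himg : s.image (fun i : {x // x ∈ J} => (S (↑i : Fin t)).center) ⊆ s.biUnion (fun i => N ↑i) := by
        intro x hx
        obtain ⟨i, his, hx⟩ := Finset.mem_image.mp hx
        refine Finset.mem_biUnion.mpr ⟨i, his, ?_⟩
        rw [hN]
        simp only [if_neg (hex i his)]
        exact Finset.mem_singleton.mpr hx.symm
      calc s.card = (s.image (fun i : {x // x ∈ J} => (S (↑i : Fin t)).center)).card :=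
            (Finset.card_image_of_injOn hinj).symm
        _ ≤ _ := Finset.card_le_card himg
  obtain ⟨f, hfinj, hfmem⟩ :=
    (Finset.all_card_le_biUnion_card_iff_exists_injective (fun i : {x // x ∈ J} => N ↑i)).mp hall
  apply hfree
  refine ⟨u, J.attach.image f, ?_, ?_, ?_⟩
  · rw [Finset.card_image_of_injective _ hfinj, Finset.card_attach, hJcard]
  · -- u ∉ L
    intro hu
    rw [Finset.mem_image] at hu
    obtain ⟨i, _, hfi⟩ := hu
    have := hfmem i
    rw [hN] at this
    by_cases hic : (S (↑i : Fin t)).center = u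
    · simp only [if_pos hic] at this
      rw [hfi] at this
      exact (S (↑i : Fin t)).center_not_mem (hic ▸ this)
    · simp only [if_neg hic] at this
      rw [Finset.mem_singleton] at this
      rw [hfi] at this
      exact hic this.symm
  · refine ⟨fun l => if h : ∃ i : {x // x ∈ J}, f i = l then (h.choose : Fin t) else i₀, ?_, ?_⟩
    · -- InjOn
      intro l₁ hl₁ l₂ hl₂ heq
      rw [Finset.coe_image, Set.mem_image] at hl₁ hl₂
      obtain ⟨i₁, _, hfi₁⟩ := hl₁
      obtain ⟨i₂, _, hfi₂⟩ := hl₂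
      have h₁ : ∃ i : {x // x ∈ J}, f i = l₁ := ⟨i₁, hfi₁⟩
      have h₂ : ∃ i : {x // x ∈ J}, f i = l₂ := ⟨i₂, hfi₂⟩
      simp only [dif_pos h₁, dif_pos h₂] at heq
      have : h₁.choose = h₂.choose := Subtype.ext heq
      rw [← h₁.choose_spec, ← h₂.choose_spec, this]
    · -- Adjacency
      intro l hl
      rw [Finset.mem_image] at hl
      obtain ⟨i, _, hfi⟩ := hl
      have h : ∃ i : {x // x ∈ J}, f i = l := ⟨i, hfi⟩
      simp only [dif_pos h]
      set j := h.choose with hj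
      have hfj : f j = l := h.choose_spec
      have hmem := hfmem j
      rw [hN] at hmem
      by_cases hic : (S (↑j : Fin t)).center = u
      · left
        refine ⟨hic.symm, ?_⟩
        simp only [if_pos hic] at hmem
        rw [hfj] at hmem; exact hmem
      · right
        simp only [if_neg hic] at hmem
        rw [Finset.mem_singleton] at hmem
        obtain ⟨v, hv, hφv, hcv, hlv⟩ := hmemI₂ ↑j j.2 hic
        exact ⟨by rw [← hfj, hmem], hlv⟩

theorem starGraph_bound_small_k2 {V : Type} [Fintype V]
    (Δ n a b k₁ k₂ t : ℕ) (hΔ : 2 ≤ Δ)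
    (hcard : Fintype.card V = n)
    (hn : n = a * (2 * Δ - 1) + b) (ha : 1 ≤ a) (hb : b ≤ 2 * Δ - 2)
    (hbk : b * (Δ - 1) = k₁ * (2 * Δ - 1) + k₂) (hk₂ : k₂ ≤ Δ)
    (S : Fin t → StarGraph V Δ) (hfree : ¬ HasRainbowStar S) :
    t ≤ a * (Δ - 1) ^ 2 + k₁ * (Δ - 1) := by
  classical
  set c : V → ℕ := fun v => (univ.filter (fun i : Fin t => (S i).center = v)).card with hc
  set D : V → Finset V :=
    fun u => univ.filter (fun v : V => ∃ i, (S i).center = v ∧ u ∈ (S i).leaves) with hD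
  have hkey : ∀ u : V, c u + (D u).card + 1 ≤ Δ := fun u => keyB hΔ S hfree u
  have hcle : ∀ v, c v + 1 ≤ Δ := fun v => by have := hkey v; omega
  have ht : t = ∑ v : V, c v := by
    have h := Finset.card_eq_sum_card_fiberwise
      (f := fun i : Fin t => (S i).center) (s := univ) (t := univ)
      (fun x _ => Finset.mem_univ _)
    simpa using h
  set E : ℕ := ∑ v : V, (Δ - 1 - c v) with hE
  have htE : t + E = n * (Δ - 1) := by
    rw [ht, hE, ← Finset.sum_add_distrib]
    have hpt : ∀ v ∈ (univ : Finset V), c v + (Δ - 1 - c v) = Δ - 1 := by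
      intro v _; have := hcle v; omega
    rw [Finset.sum_congr rfl hpt, Finset.sum_const, Finset.card_univ, hcard, smul_eq_mul]
  set p : ℕ := (univ.filter (fun v : V => 1 ≤ c v)).card with hp
  have hEp1 : n * (Δ - 1) ≤ E + p * (Δ - 1) := by
    have h1 : p * (Δ - 1) = ∑ v : V, (if 1 ≤ c v then Δ - 1 else 0) := by
      rw [← Finset.sum_filter, Finset.sum_const, smul_eq_mul, hp]
    have h2 : n * (Δ - 1) = ∑ _v : V, (Δ - 1) := by
      rw [Finset.sum_const, Finset.card_univ, hcard, smul_eq_mul]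
    rw [h1, h2, hE, ← Finset.sum_add_distrib]
    apply Finset.sum_le_sum
    intro v _
    by_cases h : 1 ≤ c v
    · simp only [if_pos h]; omega
    · simp only [if_neg h]; omega
  have hDE : ∑ u : V, (D u).card ≤ E := by
    rw [hE]
    apply Finset.sum_le_sum
    intro u _
    have := hkey u
    omega
  have hswap : ∑ u : V, (D u).card =
      ∑ v : V, (univ.filter (fun u : V => ∃ i, (S i).center = v ∧ u ∈ (S i).leaves)).card := by
    simp only [hD, Finset.card_filter]
    exact Finset.sum_comm
  have hlam : ∀ v : V, 1 ≤ c v →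
      Δ ≤ (univ.filter (fun u : V => ∃ i, (S i).center = v ∧ u ∈ (S i).leaves)).card := by
    intro v hv
    simp only [hc] at hv
    obtain ⟨i, hi⟩ := Finset.card_pos.mp hv
    rw [Finset.mem_filter] at hi
    have hsub : (S i).leaves ⊆
        univ.filter (fun u : V => ∃ j, (S j).center = v ∧ u ∈ (S j).leaves) := by
      intro x hx
      exact Finset.mem_filter.mpr ⟨Finset.mem_univ x, ⟨i, hi.2, hx⟩⟩
    calc Δ = (S i).leaves.card := (S i).card_leaves.symm
      _ ≤ _ := Finset.card_le_card hsub
  have hEp2 : Δ * p ≤ E := by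
    have h3 : Δ * p = ∑ _v ∈ univ.filter (fun v : V => 1 ≤ c v), Δ := by
      rw [Finset.sum_const, smul_eq_mul, hp, mul_comm]
    calc Δ * p = ∑ _v ∈ univ.filter (fun v : V => 1 ≤ c v), Δ := h3
      _ ≤ ∑ v ∈ univ.filter (fun v : V => 1 ≤ c v),
            (univ.filter (fun u : V => ∃ i, (S i).center = v ∧ u ∈ (S i).leaves)).card := by
          apply Finset.sum_le_sum
          intro v hv
          exact hlam v (Finset.mem_filter.mp hv).2
      _ ≤ ∑ v : V, (univ.filter (fun u : V => ∃ i, (S i).center = v ∧ u ∈ (S i).leaves)).card :=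
          Finset.sum_le_sum_of_subset (Finset.filter_subset _ _)
      _ = ∑ u : V, (D u).card := hswap.symm
      _ ≤ E := hDE
  -- final arithmetic
  set d := Δ - 1 with hd
  have hΔd : Δ = d + 1 := by omega
  have h2Δ : 2 * Δ - 1 = 2 * d + 1 := by omega
  have hnd : n * d = a * (2 * d + 1) * d + (k₁ * (2 * d + 1) + k₂) := by
    rw [hn, ← h2Δ, ← hbk]
    ring
  by_cases hcase : p ≤ a * d + k₁
  · have h5 : t ≤ p * d := by linarith [htE, hEp1]
    calc t ≤ p * d := h5
      _ ≤ (a * d + k₁) * d := Nat.mul_le_mul_right d hcase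
      _ = a * d ^ 2 + k₁ * d := by ring
  · push_neg at hcase
    have hcase' : a * d + k₁ + 1 ≤ p := hcase
    have h6 : (d + 1) * (a * d + k₁ + 1) ≤ (d + 1) * p := Nat.mul_le_mul_left _ hcase'
    rw [hΔd] at hEp2
    have h8 : t + (d + 1) * (a * d + k₁ + 1) ≤ n * d := by
      rw [← htE]
      exact Nat.add_le_add_left (le_trans h6 hEp2) t
    have h9 : n * d + (d + 1) =
        (a * d ^ 2 + k₁ * d) + (d + 1) * (a * d + k₁ + 1) + k₂ := by
      rw [hnd]; ring
    have hk₂' : k₂ ≤ d + 1 := by omega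
    linarith
end

section
/- Let Δ ≥ 2 and let 𝒮 be a collection (with repetition allowed) of copies of the star K_{1,Δ} on a common vertex set V with |V| = n. Write n = a(2Δ-1) + b with a, b nonnegative integers, a ≥ 1, 0 ≤ b ≤ 2Δ-2, and write b(Δ-1) = k₁(2Δ-1) + k₂ with k₁, k₂ nonnegative integers, Δ ≤ k₂ ≤ 2Δ-2. If 𝒮 is rainbow K_{1,Δ}-free, then |𝒮| ≤ a(Δ-1)² + k₁(Δ-1) + k₂ - Δ. -/
open Classical in
lemma star_key {V : Type} [Fintype V] {Δ t : ℕ} (hΔ : 2 ≤ Δ)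
    (S : Fin t → StarGraph V Δ) (hfree : ¬ HasRainbowStar S) (u : V) :
    (Finset.univ.filter (fun v => ∃ i, (S i).center = v ∧ u ∈ (S i).leaves)).card
      + (Finset.univ.filter (fun i : Fin t => (S i).center = u)).card ≤ Δ - 1 := by
  set N := Finset.univ.filter (fun v => ∃ i, (S i).center = v ∧ u ∈ (S i).leaves) with hNdef
  set C := Finset.univ.filter (fun i : Fin t => (S i).center = u) with hCdef
  by_contra hcon
  push_neg at hcon
  have hrc : Δ ≤ N.card + C.card := by omega
  apply hfree
  have hmemN : ∀ v ∈ N, ∃ i, (S i).center = v ∧ u ∈ (S i).leaves := by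
    intro v hv
    exact (Finset.mem_filter.mp hv).2
  have huN : u ∉ N := by
    intro hu
    obtain ⟨i, hic, hil⟩ := hmemN u hu
    exact (S i).center_not_mem (hic ▸ hil)
  have hne : Nonempty (Fin t) := by
    rcases Finset.eq_empty_or_nonempty N with h | ⟨v, hv⟩
    · have hCne : C.Nonempty := by
        apply Finset.card_pos.mp
        have : N.card = 0 := by simp [h]
        omega
      exact ⟨hCne.choose⟩
    · exact ⟨(hmemN v hv).choose⟩
  have Hsel : ∀ v : V, ∃ i : Fin t, v ∈ N → ((S i).center = v ∧ u ∈ (S i).leaves) := by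
    intro v
    by_cases hv : v ∈ N
    · obtain ⟨i, hi⟩ := hmemN v hv
      exact ⟨i, fun _ => hi⟩
    · exact ⟨Classical.arbitrary _, fun h => absurd h hv⟩
  choose gN hgN using Hsel
  rcases le_or_gt Δ N.card with hbig | hsmall
  · obtain ⟨L, hLN, hLcard⟩ := Finset.exists_subset_card_eq hbig
    refine ⟨u, L, hLcard, fun hu => huN (hLN hu), gN, ?_, ?_⟩
    · intro v1 h1 v2 h2 heq
      have e1 := (hgN v1 (hLN h1)).1
      have e2 := (hgN v2 (hLN h2)).1
      rw [← e1, ← e2, heq]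
    · intro l hl
      exact Or.inr ⟨((hgN l (hLN hl)).1).symm, (hgN l (hLN hl)).2⟩
  · have hCcard : Δ - N.card ≤ C.card := by omega
    obtain ⟨C', hC'sub, hC'card⟩ := Finset.exists_subset_card_eq hCcard
    have hTcard : ∀ x : {x // x ∈ C'}, Δ - N.card ≤ ((S x.1).leaves \ N).card := by
      intro x
      have h1 := Finset.le_card_sdiff N (S x.1).leaves
      rw [(S x.1).card_leaves] at h1
      omega
    have hHall : ∀ s : Finset {x // x ∈ C'},
        s.card ≤ (s.biUnion (fun x => (S x.1).leaves \ N)).card := by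
      intro s
      rcases Finset.eq_empty_or_nonempty s with rfl | ⟨x, hx⟩
      · simp
      · calc s.card ≤ (Finset.univ : Finset {x // x ∈ C'}).card := Finset.card_le_univ s
          _ = C'.card := by rw [Finset.card_univ, Fintype.card_coe]
          _ ≤ ((S x.1).leaves \ N).card := by rw [hC'card]; exact hTcard x
          _ ≤ (s.biUnion (fun x => (S x.1).leaves \ N)).card :=
              Finset.card_le_card (Finset.subset_biUnion_of_mem (fun x : {x // x ∈ C'} => (S x.1).leaves \ N) hx)
    obtain ⟨f, hfinj, hfT⟩ :=
      (Finset.all_card_le_biUnion_card_iff_existsInjective'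
        (fun x : {x // x ∈ C'} => (S x.1).leaves \ N)).mp hHall
    set I : Finset V := Finset.univ.image f with hIdef
    have hIcard : I.card = Δ - N.card := by
      rw [hIdef, Finset.card_image_of_injective _ hfinj, Finset.card_univ,
        Fintype.card_coe, hC'card]
    have hIN : ∀ v ∈ I, v ∉ N := by
      intro v hv
      obtain ⟨x, _, rfl⟩ := Finset.mem_image.mp hv
      exact (Finset.mem_sdiff.mp (hfT x)).2
    have hcenter' : ∀ x : {x // x ∈ C'}, (S x.1).center = u := fun x =>
      (Finset.mem_filter.mp (hC'sub x.2)).2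
    have huI : u ∉ I := by
      intro hu
      obtain ⟨x, _, hfx⟩ := Finset.mem_image.mp hu
      have h2 : f x ∈ (S x.1).leaves := (Finset.mem_sdiff.mp (hfT x)).1
      rw [hfx] at h2
      exact (S x.1).center_not_mem (hcenter' x ▸ h2)
    have hdisj : Disjoint N I := Finset.disjoint_right.mpr hIN
    have hLcard : (N ∪ I).card = Δ := by
      rw [Finset.card_union_of_disjoint hdisj, hIcard]; omega
    set g : V → Fin t := fun v =>
      if v ∈ N then gN v
      else if h : ∃ x : {x // x ∈ C'}, f x = v then h.choose.1 else gN v with hgdef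
    have hg1 : ∀ v ∈ N, (S (g v)).center = v ∧ u ∈ (S (g v)).leaves := by
      intro v hv
      have : g v = gN v := by rw [hgdef]; simp only [if_pos hv]
      rw [this]
      exact hgN v hv
    have hg2 : ∀ v ∈ I, ∃ x : {x // x ∈ C'}, f x = v ∧ g v = x.1 := by
      intro v hv
      obtain ⟨x, _, hfx⟩ := Finset.mem_image.mp hv
      have hex : ∃ x : {x // x ∈ C'}, f x = v := ⟨x, hfx⟩
      refine ⟨hex.choose, hex.choose_spec, ?_⟩
      rw [hgdef]
      simp only [if_neg (hIN v hv), dif_pos hex]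
    have hg2' : ∀ v ∈ I, (S (g v)).center = u ∧ v ∈ (S (g v)).leaves := by
      intro v hv
      obtain ⟨x, hfx, hgv⟩ := hg2 v hv
      refine ⟨by rw [hgv]; exact hcenter' x, ?_⟩
      rw [hgv]
      have h2 : f x ∈ (S x.1).leaves := (Finset.mem_sdiff.mp (hfT x)).1
      rwa [hfx] at h2
    refine ⟨u, N ∪ I, hLcard, ?_, g, ?_, ?_⟩
    · intro hu
      rcases Finset.mem_union.mp hu with h | h
      · exact huN h
      · exact huI h
    · intro v1 h1 v2 h2 heq
      simp only [Finset.coe_union, Set.mem_union, Finset.mem_coe] at h1 h2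
      rcases h1 with h1 | h1 <;> rcases h2 with h2 | h2
      · rw [← (hg1 v1 h1).1, ← (hg1 v2 h2).1, heq]
      · exfalso
        have e1 := (hg1 v1 h1).1
        have e2 := (hg2' v2 h2).1
        rw [heq, e2] at e1
        exact huN (e1 ▸ h1)
      · exfalso
        have e1 := (hg2' v1 h1).1
        have e2 := (hg1 v2 h2).1
        rw [heq, e2] at e1
        exact huN (e1.symm ▸ h2)
      · obtain ⟨x1, hf1, hgv1⟩ := hg2 v1 h1
        obtain ⟨x2, hf2, hgv2⟩ := hg2 v2 h2
        rw [hgv1, hgv2] at heq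
        rw [← hf1, ← hf2, Subtype.ext heq]
    · intro l hl
      rcases Finset.mem_union.mp hl with h | h
      · exact Or.inr ⟨((hg1 l h).1).symm, (hg1 l h).2⟩
      · exact Or.inl ⟨((hg2' l h).1).symm, (hg2' l h).2⟩

open Classical in
theorem starGraph_bound_large_k2 {V : Type} [Fintype V]
    (Δ n a b k₁ k₂ t : ℕ) (hΔ : 2 ≤ Δ)
    (hcard : Fintype.card V = n)
    (hn : n = a * (2 * Δ - 1) + b) (ha : 1 ≤ a) (hb : b ≤ 2 * Δ - 2)
    (hbk : b * (Δ - 1) = k₁ * (2 * Δ - 1) + k₂)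
    (hk₂ : Δ ≤ k₂) (hk₂' : k₂ ≤ 2 * Δ - 2)
    (S : Fin t → StarGraph V Δ) (hfree : ¬ HasRainbowStar S) :
    t ≤ a * (Δ - 1) ^ 2 + k₁ * (Δ - 1) + k₂ - Δ := by
  have key := star_key hΔ S hfree
  have hΔeq : Δ = (Δ - 1) + 1 := by omega
  have h2Δ : 2 * Δ - 1 = 2 * (Δ - 1) + 1 := by omega
  -- t as a sum over centers
  have ht : t = ∑ u : V, (Finset.univ.filter (fun i : Fin t => (S i).center = u)).card := by
    have h := Finset.card_eq_sum_card_fiberwise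
      (f := fun i : Fin t => (S i).center) (s := Finset.univ) (t := Finset.univ)
      (fun i _ => Finset.mem_univ _)
    simpa using h
  -- double counting swap
  have hswap : ∑ u : V,
        (Finset.univ.filter (fun v => ∃ i, (S i).center = v ∧ u ∈ (S i).leaves)).card
      = ∑ v : V,
        (Finset.univ.filter (fun u => ∃ i, (S i).center = v ∧ u ∈ (S i).leaves)).card := by
    simp only [Finset.card_filter]
    exact Finset.sum_comm
  -- the set of centers
  set W : Finset V := Finset.univ.image (fun i : Fin t => (S i).center) with hW
  have hOut : ∀ v ∈ W, Δ ≤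
      (Finset.univ.filter (fun u => ∃ i, (S i).center = v ∧ u ∈ (S i).leaves)).card := by
    intro v hv
    obtain ⟨i, _, hic⟩ := Finset.mem_image.mp hv
    have hsub : (S i).leaves ⊆
        Finset.univ.filter (fun u => ∃ i, (S i).center = v ∧ u ∈ (S i).leaves) :=
      fun l hl => Finset.mem_filter.mpr ⟨Finset.mem_univ _, ⟨i, hic, hl⟩⟩
    calc Δ = (S i).leaves.card := (S i).card_leaves.symm
      _ ≤ _ := Finset.card_le_card hsub
  have hrsum : W.card * Δ ≤ ∑ v : V,
      (Finset.univ.filter (fun u => ∃ i, (S i).center = v ∧ u ∈ (S i).leaves)).card := by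
    calc W.card * Δ = ∑ _v ∈ W, Δ := by rw [Finset.sum_const, smul_eq_mul]
      _ ≤ ∑ v ∈ W,
          (Finset.univ.filter (fun u => ∃ i, (S i).center = v ∧ u ∈ (S i).leaves)).card :=
        Finset.sum_le_sum hOut
      _ ≤ _ := Finset.sum_le_sum_of_subset (Finset.subset_univ W)
  have hA : t + W.card * Δ ≤ n * (Δ - 1) := by
    have h1 : ∑ u : V,
        ((Finset.univ.filter (fun v => ∃ i, (S i).center = v ∧ u ∈ (S i).leaves)).card
          + (Finset.univ.filter (fun i : Fin t => (S i).center = u)).card)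
        ≤ ∑ _u : V, (Δ - 1) := Finset.sum_le_sum (fun u _ => key u)
    rw [Finset.sum_add_distrib, Finset.sum_const, Finset.card_univ, hcard, smul_eq_mul] at h1
    have h2 : W.card * Δ ≤ ∑ u : V,
        (Finset.univ.filter (fun v => ∃ i, (S i).center = v ∧ u ∈ (S i).leaves)).card := by
      rw [hswap]; exact hrsum
    rw [ht]
    linarith [h1, h2]
  have hCzero : ∀ u ∈ Finset.univ, u ∉ W →
      (Finset.univ.filter (fun i : Fin t => (S i).center = u)).card = 0 := by
    intro u _ hu
    rw [Finset.card_eq_zero, Finset.filter_eq_empty_iff]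
    intro i _ hci
    exact hu (Finset.mem_image.mpr ⟨i, Finset.mem_univ _, hci⟩)
  have hB : t ≤ W.card * (Δ - 1) := by
    rw [ht, ← Finset.sum_subset (Finset.subset_univ W) hCzero]
    calc ∑ u ∈ W, (Finset.univ.filter (fun i : Fin t => (S i).center = u)).card
        ≤ ∑ _u ∈ W, (Δ - 1) :=
          Finset.sum_le_sum (fun u _ => le_trans (Nat.le_add_left _ _) (key u))
      _ = W.card * (Δ - 1) := by rw [Finset.sum_const, smul_eq_mul]
  -- arithmetic endgame
  have hbk' : b * (Δ - 1) = k₁ * (2 * (Δ - 1) + 1) + k₂ := by rw [← h2Δ]; exact hbk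
  have E1 : n * (Δ - 1) = (a * (Δ - 1) + k₁) * (2 * (Δ - 1) + 1) + k₂ := by
    have e : n * (Δ - 1) = a * (2 * (Δ - 1) + 1) * (Δ - 1) + b * (Δ - 1) := by
      rw [hn, h2Δ]; ring
    rw [e, hbk']; ring
  have hgoal : a * (Δ - 1) ^ 2 + k₁ * (Δ - 1) + k₂ = (a * (Δ - 1) + k₁) * (Δ - 1) + k₂ := by
    ring
  rw [hgoal]
  apply Nat.le_sub_of_add_le
  rcases le_or_gt W.card (a * (Δ - 1) + k₁) with hw | hw
  · have h6 : W.card * (Δ - 1) ≤ (a * (Δ - 1) + k₁) * (Δ - 1) :=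
      Nat.mul_le_mul_right _ hw
    linarith [hB, h6, hk₂]
  · have h5 : (a * (Δ - 1) + k₁ + 1) * ((Δ - 1) + 1) ≤ W.card * Δ := by
      calc (a * (Δ - 1) + k₁ + 1) * ((Δ - 1) + 1)
          ≤ W.card * ((Δ - 1) + 1) := Nat.mul_le_mul_right _ hw
        _ = W.card * Δ := by rw [← hΔeq]
    rw [E1] at hA
    linarith [hA, h5, hΔeq]
end

section
/- Let Δ ≥ 2 and let 𝒮 be a collection (with repetition allowed) of copies of the star K_{1,Δ} on a common vertex set V with |V| = n, where Δ + 1 ≤ n ≤ 2Δ - 2. If 𝒮 is rainbow K_{1,Δ}-free, then |𝒮| ≤ ⌊(n-1)²/4⌋. -/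
open Finset in
lemma keyA {V : Type} [Fintype V] [DecidableEq V] {Δ t : ℕ} (hΔ : 1 ≤ Δ)
    (S : Fin t → StarGraph V Δ) (hfree : ¬ HasRainbowStar S) (u : V) :
    (univ.filter fun i => (S i).center = u).card
      + (univ.filter fun v : V => ∃ i, (S i).center = v ∧ u ∈ (S i).leaves).card + 1 ≤ Δ := by
  classical
  by_contra hcon
  push_neg at hcon
  set Cu : Finset (Fin t) := univ.filter fun i => (S i).center = u with hCu
  set D : Finset V := univ.filter fun v : V => ∃ i, (S i).center = v ∧ u ∈ (S i).leaves with hD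
  have hCu_mem : ∀ i ∈ Cu, (S i).center = u := fun i hi => (mem_filter.mp hi).2
  have hD_mem : ∀ v ∈ D, ∃ i, (S i).center = v ∧ u ∈ (S i).leaves :=
    fun v hv => (mem_filter.mp hv).2
  have hsum : Δ ≤ Cu.card + D.card := by omega
  -- choose C' ⊆ Cu of size min Cu.card Δ
  obtain ⟨C', hC'sub, hC'card⟩ := Finset.exists_subset_card_eq (s := Cu)
    (n := min Cu.card Δ) (min_le_left _ _)
  have hc'le : C'.card ≤ Δ := hC'card ▸ min_le_right _ _
  -- choose D' ⊆ D of size Δ - C'.card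
  have hd'le : Δ - C'.card ≤ D.card := by omega
  obtain ⟨D', hD'sub, hD'card⟩ := Finset.exists_subset_card_eq hd'le
  -- Hall's theorem to pick distinct leaves for the stars in C'
  have hall : ∀ s : Finset {i : Fin t // i ∈ C'},
      s.card ≤ (s.biUnion fun i => (S i.1).leaves \ D').card := by
    intro s
    rcases s.eq_empty_or_nonempty with rfl | ⟨i, hi⟩
    · simp
    · have h1 : s.card ≤ C'.card := by
        calc s.card ≤ Fintype.card {i : Fin t // i ∈ C'} := Finset.card_le_univ s
        _ = C'.card := Fintype.card_coe _
      have h2 : ((S i.1).leaves \ D').card ≥ Δ - D'.card := by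
        have := Finset.le_card_sdiff D' (S i.1).leaves
        have h3 : (S i.1).leaves.card - D'.card ≤ ((S i.1).leaves \ D').card :=
          Finset.le_card_sdiff _ _
        rw [(S i.1).card_leaves] at h3
        exact h3
      have h4 : (S i.1).leaves \ D' ⊆ s.biUnion fun j => (S j.1).leaves \ D' :=
        Finset.subset_biUnion_of_mem (fun j => (S j.1).leaves \ D') hi
      have := Finset.card_le_card h4
      omega
  obtain ⟨f, hfinj, hfmem⟩ :=
    (Finset.all_card_le_biUnion_card_iff_exists_injective
      (fun i : {i : Fin t // i ∈ C'} => (S i.1).leaves \ D')).mp hall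
  -- properties of f
  have hf_leaves : ∀ i, f i ∈ (S i.1).leaves := fun i => (Finset.mem_sdiff.mp (hfmem i)).1
  have hf_notD' : ∀ i, f i ∉ D' := fun i => (Finset.mem_sdiff.mp (hfmem i)).2
  -- the leaf set
  set FL : Finset V := C'.attach.image f with hFL
  set L : Finset V := D' ∪ FL with hLdef
  have hdisj : Disjoint D' FL := by
    rw [Finset.disjoint_right]
    intro v hv hvD'
    obtain ⟨i, _, rfl⟩ := Finset.mem_image.mp hv
    exact hf_notD' i hvD'
  have hFLcard : FL.card = C'.card := by
    rw [hFL, Finset.card_image_of_injective _ hfinj, Finset.card_attach]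
  have hLcard : L.card = Δ := by
    rw [hLdef, Finset.card_union_of_disjoint hdisj, hFLcard, hD'card]
    omega
  -- u not in L
  have hune : ∀ v ∈ D, v ≠ u := by
    intro v hv h
    subst h
    obtain ⟨i, hic, hil⟩ := hD_mem v hv
    rw [← hic] at hil
    exact (S i).center_not_mem hil
  have huL : u ∉ L := by
    rw [hLdef, Finset.mem_union]
    rintro (h | h)
    · exact hune u (hD'sub h) rfl
    · obtain ⟨i, _, hfi⟩ := Finset.mem_image.mp h
      have := hf_leaves i
      rw [hfi] at this
      exact (S i.1).center_not_mem (hCu_mem i.1 (hC'sub i.2) ▸ this)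
  -- the coloring g
  have ht0 : Nonempty (Fin t) := by
    rcases Nat.lt_or_ge 0 Cu.card with h | h
    · obtain ⟨i, _⟩ := Finset.card_pos.mp h
      exact ⟨i⟩
    · have hD0 : 0 < D.card := by omega
      obtain ⟨v, hv⟩ := Finset.card_pos.mp hD0
      obtain ⟨i, _, _⟩ := hD_mem v hv
      exact ⟨i⟩
  obtain ⟨i₀⟩ := ht0
  set g : V → Fin t := fun v =>
    if h : v ∈ D' then Classical.choose (hD_mem v (hD'sub h))
    else if h2 : ∃ i : {i // i ∈ C'}, f i = v then (Classical.choose h2).1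
    else i₀ with hg
  -- g values on D'
  have hgD' : ∀ v (h : v ∈ D'), (S (g v)).center = v ∧ u ∈ (S (g v)).leaves := by
    intro v h
    have : g v = Classical.choose (hD_mem v (hD'sub h)) := by rw [hg]; simp [h]
    rw [this]
    exact Classical.choose_spec (hD_mem v (hD'sub h))
  -- g values on FL
  have hgFL : ∀ i : {i // i ∈ C'}, g (f i) = i.1 := by
    intro i
    have hnd : f i ∉ D' := hf_notD' i
    have hex : ∃ j : {j // j ∈ C'}, f j = f i := ⟨i, rfl⟩
    have : g (f i) = (Classical.choose hex).1 := by rw [hg]; simp [hnd, hex]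
    rw [this]
    have := Classical.choose_spec hex
    rw [hfinj this]
  -- properties on FL
  have hgFL' : ∀ v ∈ FL, (S (g v)).center = u ∧ v ∈ (S (g v)).leaves ∧
      ∃ i : {i // i ∈ C'}, f i = v ∧ g v = i.1 := by
    intro v hv
    obtain ⟨i, _, rfl⟩ := Finset.mem_image.mp hv
    have h1 := hgFL i
    refine ⟨?_, ?_, ⟨i, rfl, h1⟩⟩
    · rw [h1]; exact hCu_mem i.1 (hC'sub i.2)
    · rw [h1]; exact hf_leaves i
  apply hfree
  refine ⟨u, L, hLcard, huL, g, ?_, ?_⟩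
  · -- injectivity on L
    intro x hx y hy hxy
    simp only [hLdef, Finset.coe_union, Set.mem_union, Finset.mem_coe] at hx hy
    rcases hx with hx | hx <;> rcases hy with hy | hy
    · have h1 := (hgD' x hx).1
      have h2 := (hgD' y hy).1
      rw [← h1, ← h2, hxy]
    · exfalso
      have h1 := (hgD' x hx).1
      have h2 := (hgFL' y hy).1
      rw [hxy, h2] at h1
      exact hune x (hD'sub hx) h1.symm
    · exfalso
      have h1 := (hgD' y hy).1
      have h2 := (hgFL' x hx).1
      rw [← hxy, h2] at h1
      exact hune y (hD'sub hy) h1.symm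
    · obtain ⟨-, -, i, hfi, hgi⟩ := hgFL' x hx
      obtain ⟨-, -, j, hfj, hgj⟩ := hgFL' y hy
      have : i = j := Subtype.ext (by rw [← hgi, ← hgj, hxy])
      rw [← hfi, ← hfj, this]
  · -- adjacency
    intro l hl
    rw [hLdef, Finset.mem_union] at hl
    rcases hl with hl | hl
    · exact Or.inr ⟨(hgD' l hl).1.symm, (hgD' l hl).2⟩
    · obtain ⟨h1, h2, -⟩ := hgFL' l hl
      exact Or.inl ⟨h1.symm, h2⟩

open Finset in
theorem starGraph_bound_small_n {V : Type} [Fintype V]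
    (Δ n t : ℕ) (hΔ : 2 ≤ Δ)
    (hcard : Fintype.card V = n)
    (hn₁ : Δ + 1 ≤ n) (hn₂ : n ≤ 2 * Δ - 2)
    (S : Fin t → StarGraph V Δ) (hfree : ¬ HasRainbowStar S) :
    t ≤ (n - 1) ^ 2 / 4 := by
  classical
  set C : Finset V := univ.image fun i => (S i).center with hC
  set k := C.card with hk
  set c : V → ℕ := fun v => (univ.filter fun i => (S i).center = v).card with hc
  set Dv : V → Finset V :=
    fun v => univ.filter fun w : V => ∃ i, (S i).center = w ∧ v ∈ (S i).leaves with hDv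
  have hkn : k ≤ n := by
    rw [hk, ← hcard, ← Finset.card_univ]
    exact Finset.card_le_card (Finset.subset_univ C)
  -- t as a sum over centers
  have hfib : t = ∑ v ∈ C, c v := by
    have := Finset.card_eq_sum_card_fiberwise
      (f := fun i : Fin t => (S i).center) (s := univ) (t := C)
      (fun i _ => Finset.mem_image_of_mem _ (Finset.mem_univ i))
    simpa using this
  -- the key per-vertex bound
  have hkey : ∀ v, c v + (Dv v).card + 1 ≤ Δ :=
    fun v => keyA (by omega) S hfree v
  -- choose a leaf set for each center
  set ℓ : V → Finset V := fun v =>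
    if h : ∃ i, (S i).center = v then (S (Classical.choose h)).leaves else ∅ with hℓ
  have hℓcard : ∀ v ∈ C, (ℓ v).card = Δ := by
    intro v hv
    obtain ⟨i, _, hi⟩ := Finset.mem_image.mp hv
    have h : ∃ i, (S i).center = v := ⟨i, hi⟩
    rw [hℓ]
    simp only [h, dif_pos]
    exact (S (Classical.choose h)).card_leaves
  have hℓD : ∀ v ∈ C, ∀ w ∈ ℓ v, v ∈ Dv w := by
    intro v hv w hw
    obtain ⟨i, _, hi⟩ := Finset.mem_image.mp hv
    have h : ∃ i, (S i).center = v := ⟨i, hi⟩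
    rw [hℓ] at hw
    simp only [h, dif_pos] at hw
    exact Finset.mem_filter.mpr ⟨Finset.mem_univ _,
      ⟨Classical.choose h, Classical.choose_spec h, hw⟩⟩
  -- cardinalities of intersections as sums
  have e1 : ∀ A : Finset V, (A ∩ C).card = ∑ w ∈ C, if w ∈ A then 1 else 0 := by
    intro A
    rw [Finset.inter_comm, ← Finset.filter_mem_eq_inter, Finset.card_filter]
  -- double counting
  have H2 : ∑ v ∈ C, (ℓ v ∩ C).card ≤ ∑ v ∈ C, (Dv v ∩ C).card := by
    calc ∑ v ∈ C, (ℓ v ∩ C).card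
        = ∑ v ∈ C, ∑ w ∈ C, if w ∈ ℓ v then 1 else 0 :=
          Finset.sum_congr rfl fun v _ => e1 (ℓ v)
      _ ≤ ∑ v ∈ C, ∑ w ∈ C, if v ∈ Dv w then 1 else 0 := by
          refine Finset.sum_le_sum fun v hv => Finset.sum_le_sum fun w hw => ?_
          split_ifs with h1 h2
          · rfl
          · exact absurd (hℓD v hv w h1) h2
          · omega
          · rfl
      _ = ∑ w ∈ C, ∑ v ∈ C, if v ∈ Dv w then 1 else 0 := Finset.sum_comm
      _ = ∑ v ∈ C, (Dv v ∩ C).card := Finset.sum_congr rfl fun w _ => (e1 (Dv w)).symm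
  -- per-center lower bound on |ℓ v ∩ C|
  have H3 : ∀ v ∈ C, Δ ≤ (ℓ v ∩ C).card + (n - k) := by
    intro v hv
    have h1 : (ℓ v ∩ C).card + (ℓ v \ C).card = Δ := by
      rw [Finset.card_inter_add_card_sdiff, hℓcard v hv]
    have h2 : (ℓ v \ C).card ≤ n - k := by
      have : ℓ v \ C ⊆ univ \ C := Finset.sdiff_subset_sdiff (Finset.subset_univ _) le_rfl
      have h3 := Finset.card_le_card this
      rwa [Finset.card_sdiff_of_subset (Finset.subset_univ _), Finset.card_univ, hcard] at h3
    omega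
  -- assemble in ℤ
  have Hsum : (t : ℤ) + ∑ v ∈ C, ((Dv v ∩ C).card : ℤ) + k ≤ (k : ℤ) * Δ := by
    have h1 : ∀ v ∈ C, (c v : ℤ) + ((Dv v ∩ C).card : ℤ) + 1 ≤ (Δ : ℤ) := by
      intro v hv
      have h2 := hkey v
      have h3 : (Dv v ∩ C).card ≤ (Dv v).card :=
        Finset.card_le_card (Finset.inter_subset_left)
      push_cast
      omega
    have h4 := Finset.sum_le_sum h1
    simp only [Finset.sum_add_distrib, Finset.sum_const, nsmul_eq_mul, mul_one] at h4
    rw [hfib]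
    push_cast
    linarith
  have H3' : (k : ℤ) * Δ ≤ ∑ v ∈ C, ((ℓ v ∩ C).card : ℤ) + k * (n - k) := by
    have h1 : ∀ v ∈ C, (Δ : ℤ) ≤ ((ℓ v ∩ C).card : ℤ) + ((n : ℤ) - k) := by
      intro v hv
      have := H3 v hv
      have : (Δ:ℤ) ≤ ((ℓ v ∩ C).card : ℤ) + ((n - k : ℕ) : ℤ) := by exact_mod_cast this
      have h5 : ((n - k : ℕ) : ℤ) = (n : ℤ) - k := by
        rw [Nat.cast_sub hkn]
      omega
    have h4 := Finset.sum_le_sum h1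
    simp only [Finset.sum_add_distrib, Finset.sum_const, nsmul_eq_mul, mul_one] at h4
    rw [mul_comm]
    linarith
  have H2' : ∑ v ∈ C, ((ℓ v ∩ C).card : ℤ) ≤ ∑ v ∈ C, ((Dv v ∩ C).card : ℤ) := by
    exact_mod_cast H2
  -- final arithmetic
  have hfin : (t : ℤ) * 4 ≤ ((n : ℤ) - 1) ^ 2 := by
    nlinarith [sq_nonneg ((n : ℤ) - 1 - 2 * k), Int.natCast_nonneg k, Int.natCast_nonneg t]
  have hn3 : 3 ≤ n := by omega
  rw [Nat.le_div_iff_mul_le (by norm_num)]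
  have : ((t * 4 : ℕ) : ℤ) ≤ (((n - 1) ^ 2 : ℕ) : ℤ) := by
    push_cast [Nat.cast_sub (by omega : 1 ≤ n)]
    exact_mod_cast hfin
  exact_mod_cast this
end

section
/- Let Δ ≥ 2 and let V be a vertex set with |V| = n = a(2Δ-1) + b, where a, b are nonnegative integers, a ≥ 1, 0 ≤ b ≤ 2Δ-2, and b(Δ-1) = k₁(2Δ-1) + k₂ with k₁, k₂ nonnegative integers and 0 ≤ k₂ ≤ Δ. Then there exists a collection 𝒮 (with repetition allowed) of copies of the star K_{1,Δ} on V with |𝒮| = a(Δ-1)² + k₁(Δ-1) such that 𝒮 is rainbow K_{1,Δ}-free. -/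
/-- Auxiliary construction: the star with center the `j`-th vertex (a "center"
vertex, `j < M`) and leaves the vertices `M + (j*Δ + r) % m` for `r < Δ`. -/
def mkStar {V : Type} [DecidableEq V] (Δ n M m : ℕ) (e : V ≃ Fin n) (hΔ : 0 < Δ) (hΔm : Δ ≤ m)
    (hMm : M + m = n) (j : ℕ) (hj : j < M) : StarGraph V Δ where
  center := e.symm ⟨j, by omega⟩
  leaves := (Finset.range Δ).image fun r => e.symm
    ⟨M + (j * Δ + r) % m, by
      have := Nat.mod_lt (j * Δ + r) (show 0 < m by omega); omega⟩
  card_leaves := by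
    rw [Finset.card_image_of_injOn, Finset.card_range]
    intro r₁ h₁ r₂ h₂ hrr
    simp only [Finset.coe_range, Set.mem_Iio] at h₁ h₂
    have h := e.symm.injective hrr
    have hval : M + (j * Δ + r₁) % m = M + (j * Δ + r₂) % m := congrArg Fin.val h
    have hmod : (j * Δ + r₁) % m = (j * Δ + r₂) % m := by omega
    have hmod2 : r₁ % m = r₂ % m := Nat.ModEq.add_left_cancel' (j * Δ) hmod
    rwa [Nat.mod_eq_of_lt (by omega), Nat.mod_eq_of_lt (by omega)] at hmod2
  center_not_mem := by
    intro hmem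
    obtain ⟨r, hr, heq⟩ := Finset.mem_image.mp hmem
    have h := e.symm.injective heq
    have hval : M + (j * Δ + r) % m = j := congrArg Fin.val h
    omega

theorem mkStar_center_val {V : Type} [DecidableEq V] (Δ n M m : ℕ) (e : V ≃ Fin n) (hΔ : 0 < Δ)
    (hΔm : Δ ≤ m) (hMm : M + m = n) (j : ℕ) (hj : j < M) :
    (e (mkStar Δ n M m e hΔ hΔm hMm j hj).center).val = j := by
  simp [mkStar]

theorem mem_mkStar_leaves {V : Type} [DecidableEq V] (Δ n M m : ℕ) (e : V ≃ Fin n) (hΔ : 0 < Δ)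
    (hΔm : Δ ≤ m) (hMm : M + m = n) (j : ℕ) (hj : j < M) {v : V}
    (hv : v ∈ (mkStar Δ n M m e hΔ hΔm hMm j hj).leaves) :
    ∃ r < Δ, (e v).val = M + (j * Δ + r) % m := by
  simp only [mkStar, Finset.mem_image, Finset.mem_range] at hv
  obtain ⟨r, hr, hre⟩ := hv
  refine ⟨r, hr, ?_⟩
  rw [← hre]
  simp

theorem starGraph_extremal_exists_small_k2 {V : Type} [Fintype V]
    (Δ n a b k₁ k₂ : ℕ) (hΔ : 2 ≤ Δ)
    (hcard : Fintype.card V = n)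
    (hn : n = a * (2 * Δ - 1) + b) (ha : 1 ≤ a) (hb : b ≤ 2 * Δ - 2)
    (hbk : b * (Δ - 1) = k₁ * (2 * Δ - 1) + k₂) (hk₂ : k₂ ≤ Δ) :
    ∃ S : Fin (a * (Δ - 1) ^ 2 + k₁ * (Δ - 1)) → StarGraph V Δ,
      ¬ HasRainbowStar S := by
  -- arithmetic setup
  have hk₁b : k₁ ≤ b := by
    have h1 : k₁ * (2 * Δ - 1) ≤ b * (2 * Δ - 1) := by
      calc k₁ * (2 * Δ - 1) ≤ k₁ * (2 * Δ - 1) + k₂ := Nat.le_add_right _ _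
        _ = b * (Δ - 1) := hbk.symm
        _ ≤ b * (2 * Δ - 1) := Nat.mul_le_mul_left b (by omega)
    exact Nat.le_of_mul_le_mul_right h1 (by omega)
  obtain ⟨d, M, m, hd0, hdΔ, hΔm, hMm, ht, hcap⟩ :
      ∃ d M m : ℕ, 0 < d ∧ d < Δ ∧ Δ ≤ m ∧ M + m = n ∧
        a * (Δ - 1) ^ 2 + k₁ * (Δ - 1) = M * d ∧ M * Δ ≤ m * d := by
    obtain ⟨b', rfl⟩ : ∃ b', b = k₁ + b' := ⟨b - k₁, by omega⟩
    obtain ⟨c, rfl⟩ : ∃ c, Δ = c + 2 := ⟨Δ - 2, by omega⟩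
    have h1 : c + 2 - 1 = c + 1 := rfl
    have h2 : 2 * (c + 2) - 1 = 2 * c + 3 := by omega
    rw [h1, h2] at hbk
    refine ⟨c + 1, a * (c + 1) + k₁, a * (c + 2) + b', by omega, by omega, ?_, ?_, ?_, ?_⟩
    · calc c + 2 ≤ a * (c + 2) := Nat.le_mul_of_pos_left _ (by omega)
        _ ≤ a * (c + 2) + b' := Nat.le_add_right _ _
    · rw [hn, h2]; ring
    · rw [h1]; ring
    · have key : (a * (c + 2) + b') * (c + 1) = (a * (c + 1) + k₁) * (c + 2) + k₂ := by
        zify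
        zify at hbk
        linear_combination hbk
      rw [key]
      exact Nat.le_add_right _ _
  have hΔ0 : 0 < Δ := by omega
  have hm0 : 0 < m := by omega
  classical
  have e : V ≃ Fin n := Fintype.equivFinOfCardEq hcard
  refine ⟨fun i => mkStar Δ n M m e hΔ0 hΔm hMm (i.val / d)
    ((Nat.div_lt_iff_lt_mul hd0).mpr (by rw [← ht]; exact i.isLt)), ?_⟩
  rintro ⟨u, L, hLcard, huL, g, hginj, hadj⟩
  by_cases hc : (e u).val < M
  · -- u is a center vertex: all edges at u come from u's own ≤ d stars
    have hdiv : ∀ l ∈ L, ((g l) : ℕ) / d = (e u).val := by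
      intro l hl
      have h := hadj l hl
      unfold StarGraph.Adj at h
      rcases h with ⟨hueq, _⟩ | ⟨_, humem⟩
      · have := congrArg (fun x => (e x).val) hueq
        simp only at this
        rw [this, mkStar_center_val]
      · obtain ⟨r, hr, heq⟩ := mem_mkStar_leaves _ _ _ _ _ _ _ _ _ _ humem
        omega
    have hgim : (L.image g).card = Δ := by
      rw [Finset.card_image_of_injOn hginj, hLcard]
    have hmodim : ((L.image g).image (fun i : Fin _ => (i : ℕ) % d)).card = Δ := by
      rw [Finset.card_image_of_injOn, hgim]
      intro i₁ h₁ i₂ h₂ hmm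
      dsimp only at hmm
      simp only [Finset.coe_image, Set.mem_image, Finset.mem_coe] at h₁ h₂
      obtain ⟨l₁, hl₁, rfl⟩ := h₁
      obtain ⟨l₂, hl₂, rfl⟩ := h₂
      have d₁ := hdiv l₁ hl₁
      have d₂ := hdiv l₂ hl₂
      have e₁ := Nat.div_add_mod ((g l₁) : ℕ) d
      have e₂ := Nat.div_add_mod ((g l₂) : ℕ) d
      rw [d₁] at e₁
      rw [d₂] at e₂
      have : ((g l₁) : ℕ) = ((g l₂) : ℕ) := by omega
      exact congrArg g (hginj hl₁ hl₂ (Fin.val_injective this)) ▸ rfl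
    have hsub : ((L.image g).image (fun i : Fin _ => (i : ℕ) % d)) ⊆ Finset.range d := by
      intro x hx
      obtain ⟨i, _, rfl⟩ := Finset.mem_image.mp hx
      exact Finset.mem_range.mpr (Nat.mod_lt _ hd0)
    have := Finset.card_le_card hsub
    rw [hmodim, Finset.card_range] at this
    omega
  · -- u is a non-center: every l ∈ L is a center with u among its leaves
    push_neg at hc
    set w := (e u).val - M with hw
    have hkey : ∀ l ∈ L, (e l).val = ((g l) : ℕ) / d ∧
        ∃ r < Δ, (e u).val = M + ((((g l) : ℕ) / d) * Δ + r) % m := by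
      intro l hl
      have h := hadj l hl
      unfold StarGraph.Adj at h
      rcases h with ⟨hueq, _⟩ | ⟨hleq, humem⟩
      · exfalso
        have := congrArg (fun x => (e x).val) hueq
        simp only at this
        rw [mkStar_center_val] at this
        have hlt : ((g l) : ℕ) / d < M :=
          (Nat.div_lt_iff_lt_mul hd0).mpr (by rw [← ht]; exact (g l).isLt)
        omega
      · constructor
        · have := congrArg (fun x => (e x).val) hleq
          simp only at this
          rw [this, mkStar_center_val]
        · exact mem_mkStar_leaves _ _ _ _ _ _ _ _ _ _ humem
    have hsub : L.image (fun l => (e l).val) ⊆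
        (Finset.range d).image (fun q => (q * m + w) / Δ) := by
      intro x hx
      obtain ⟨l, hl, rfl⟩ := Finset.mem_image.mp hx
      obtain ⟨hcv, r, hr, heq⟩ := hkey l hl
      set j := ((g l) : ℕ) / d with hj
      have hjM : j < M :=
        (Nat.div_lt_iff_lt_mul hd0).mpr (by rw [← ht]; exact (g l).isLt)
      set p := j * Δ + r with hp
      have hpm : p % m = w := by
        have := Nat.mod_lt p hm0
        omega
      have hq : p / m < d := by
        refine (Nat.div_lt_iff_lt_mul hm0).mpr ?_
        calc p < (j + 1) * Δ := by rw [hp]; ring_nf; omega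
          _ ≤ M * Δ := Nat.mul_le_mul_right _ (by omega)
          _ ≤ m * d := hcap
          _ = d * m := Nat.mul_comm _ _
      refine Finset.mem_image.mpr ⟨p / m, Finset.mem_range.mpr hq, ?_⟩
      have hpd : p / m * m + w = p := by
        have h := Nat.div_add_mod p m
        rw [Nat.mul_comm] at h
        omega
      rw [hpd, hcv, hp]
      rw [Nat.mul_comm j Δ, Nat.mul_add_div hΔ0, Nat.div_eq_of_lt hr]
      omega
    have himc : (L.image (fun l => (e l).val)).card = Δ := by
      rw [Finset.card_image_of_injOn, hLcard]
      intro l₁ hl₁ l₂ hl₂ hll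
      exact e.injective (Fin.val_injective hll)
    have hTc : ((Finset.range d).image (fun q => (q * m + w) / Δ)).card ≤ d := by
      calc ((Finset.range d).image fun q => (q * m + w) / Δ).card
          ≤ (Finset.range d).card := Finset.card_image_le
        _ = d := Finset.card_range _
    have := Finset.card_le_card hsub
    omega
end

section
/- Let Δ ≥ 2 and let V be a vertex set with |V| = n = a(2Δ-1) + b, where a, b are nonnegative integers, a ≥ 1, 0 ≤ b ≤ 2Δ-2, and b(Δ-1) = k₁(2Δ-1) + k₂ with k₁, k₂ nonnegative integers and Δ ≤ k₂ ≤ 2Δ-2. Then there exists a collection 𝒮 (with repetition allowed) of copies of the star K_{1,Δ} on V with |𝒮| = a(Δ-1)² + k₁(Δ-1) + k₂ - Δ such that 𝒮 is rainbow K_{1,Δ}-free. -/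
/-! ### Auxiliary machinery for the extremal construction -/

/-- Round lengths for the balanced leaf assignment. -/
def RSFell (P Δ d s j : ℕ) : ℕ :=
  if j = d - 1 then P - Δ - (s - (s-1)) else if j < d - s then P else P - 1

/-- Cumulative round lengths. -/
def RSFcum (P Δ d s j : ℕ) : ℕ := ∑ i ∈ Finset.range j, RSFell P Δ d s i

/-- The round containing slot `x`. -/
def RSFJ (P Δ d s x : ℕ) : ℕ := Nat.findGreatest (fun j => RSFcum P Δ d s j ≤ x) (d - 1)

/-- The pool vertex assigned to slot `x`. -/
def RSFsig (P Δ d s x : ℕ) : ℕ := x - RSFcum P Δ d s (RSFJ P Δ d s x)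

lemma RSFcum_succ (P Δ d s j : ℕ) :
    RSFcum P Δ d s (j+1) = RSFcum P Δ d s j + RSFell P Δ d s j :=
  Finset.sum_range_succ _ _

lemma RSFcum_mono (P Δ d s : ℕ) {i j : ℕ} (h : i ≤ j) :
    RSFcum P Δ d s i ≤ RSFcum P Δ d s j :=
  Finset.sum_le_sum_of_subset (Finset.range_subset_range.mpr h)

lemma RSF_sum_ite (m c : ℕ) : (∑ j ∈ Finset.range m, if j < c then (0:ℕ) else 1) = m - c := by
  induction m with
  | zero => simp
  | succ m ih => rw [Finset.sum_range_succ, ih]; split <;> omega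

lemma RSFcum_total {P Δ d s M k₂ : ℕ} (hd1 : 1 ≤ d) (hΔd : Δ = d + 1) (hP : d + 2 ≤ P)
    (hsd : s + 1 ≤ d) (hPd : P * d = M * Δ + k₂) (hk2 : k₂ = Δ + s) :
    RSFcum P Δ d s d = M * Δ := by
  obtain ⟨d', rfl⟩ : ∃ d', d = d' + 1 := ⟨d - 1, by omega⟩
  have hpen : ∀ j ∈ Finset.range (d'+1),
      RSFell P Δ (d'+1) s j +
        (if j = d' then Δ + (s - (s-1)) else if j < d' + 1 - s then 0 else 1) = P := by
    intro j hj
    simp only [RSFell, Nat.add_sub_cancel]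
    split_ifs <;> omega
  have hsum : RSFcum P Δ (d'+1) s (d'+1) +
      (∑ j ∈ Finset.range (d'+1),
        (if j = d' then Δ + (s - (s-1)) else if j < d' + 1 - s then 0 else 1)) = P * (d'+1) := by
    rw [RSFcum, ← Finset.sum_add_distrib, Finset.sum_congr rfl hpen]
    simp [Finset.sum_const, Finset.card_range, Nat.mul_comm]
  have hpensum : (∑ j ∈ Finset.range (d'+1),
      (if j = d' then Δ + (s - (s-1)) else if j < d' + 1 - s then 0 else 1)) = Δ + s := by
    rw [Finset.sum_range_succ, if_pos rfl]
    have hcg : ∀ j ∈ Finset.range d',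
        (if j = d' then Δ + (s - (s-1)) else if j < d' + 1 - s then (0:ℕ) else 1)
          = (if j < d' + 1 - s then 0 else 1) := by
      intro j hj
      have := Finset.mem_range.mp hj
      rw [if_neg (by omega)]
    rw [Finset.sum_congr rfl hcg, RSF_sum_ite]
    omega
  rw [hpensum] at hsum
  omega

lemma RSFell_ge {P Δ d s : ℕ} (hΔd : Δ = d + 1) (hP : d + 2 ≤ P) {j : ℕ} (hj : j + 1 < d) :
    Δ ≤ RSFell P Δ d s j := by
  simp only [RSFell]; split_ifs <;> omega

lemma RSFell_le (P Δ d s j : ℕ) : RSFell P Δ d s j ≤ P := by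
  simp only [RSFell]; split_ifs <;> omega

lemma RSF_round {P Δ d s M : ℕ} (hd1 : 1 ≤ d) (hcumd : RSFcum P Δ d s d = M * Δ)
    {x : ℕ} (hx : x < M * Δ) :
    ∃ j, j < d ∧ RSFcum P Δ d s j ≤ x ∧ x < RSFcum P Δ d s j + RSFell P Δ d s j ∧
      RSFsig P Δ d s x = x - RSFcum P Δ d s j := by
  have hJle : RSFJ P Δ d s x ≤ d - 1 := Nat.findGreatest_le _
  refine ⟨RSFJ P Δ d s x, by omega, ?_, ?_, rfl⟩
  · exact Nat.findGreatest_spec (P := fun j => RSFcum P Δ d s j ≤ x) (Nat.zero_le _)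
      (show RSFcum P Δ d s 0 ≤ x by simp [RSFcum])
  · rw [← RSFcum_succ]
    by_cases hJ : RSFJ P Δ d s x = d - 1
    · rw [hJ, show d - 1 + 1 = d by omega, hcumd]; exact hx
    · have hle : RSFJ P Δ d s x + 1 ≤ d - 1 := by omega
      have := Nat.findGreatest_is_greatest (P := fun j => RSFcum P Δ d s j ≤ x)
        (lt_add_one (RSFJ P Δ d s x)) hle
      omega

lemma RSF_blockinj {P Δ d s M : ℕ} (hd1 : 1 ≤ d) (hΔd : Δ = d + 1) (hP : d + 2 ≤ P)
    (hcumd : RSFcum P Δ d s d = M * Δ) {i x y : ℕ}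
    (hxl : i * Δ ≤ x) (hxr : x < i * Δ + Δ) (hyl : i * Δ ≤ y) (hyr : y < i * Δ + Δ)
    (hx : x < M * Δ) (hy : y < M * Δ)
    (hsig : RSFsig P Δ d s x = RSFsig P Δ d s y) : x = y := by
  obtain ⟨jx, hjx, hx1, hx2, hx3⟩ := RSF_round hd1 hcumd hx
  obtain ⟨jy, hjy, hy1, hy2, hy3⟩ := RSF_round hd1 hcumd hy
  rcases Nat.lt_trichotomy jx jy with h | h | h
  · exfalso
    have hmono : RSFcum P Δ d s (jx+1) ≤ RSFcum P Δ d s jy := RSFcum_mono _ _ _ _ h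
    have hell : Δ ≤ RSFell P Δ d s jx := RSFell_ge hΔd hP (by omega)
    have hcs := RSFcum_succ P Δ d s jx
    omega
  · rw [h] at hx1 hx2 hx3; omega
  · exfalso
    have hmono : RSFcum P Δ d s (jy+1) ≤ RSFcum P Δ d s jx := RSFcum_mono _ _ _ _ h
    have hell : Δ ≤ RSFell P Δ d s jy := RSFell_ge hΔd hP (by omega)
    have hcs := RSFcum_succ P Δ d s jy
    omega

lemma RSFsig_lt {P Δ d s M : ℕ} (hd1 : 1 ≤ d) (hcumd : RSFcum P Δ d s d = M * Δ)
    {x : ℕ} (hx : x < M * Δ) : RSFsig P Δ d s x < P := by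
  obtain ⟨j, hj, h1, h2, h3⟩ := RSF_round hd1 hcumd hx
  have := RSFell_le P Δ d s j
  omega

lemma RSFell_last {P Δ d s : ℕ} (hΔd : Δ = d + 1) (hP : d + 2 ≤ P) (hs : 1 ≤ s)
    {j r : ℕ} (hj : j < d) (hr : P - Δ - 1 ≤ r) (h : r < RSFell P Δ d s j) : j + 1 < d := by
  simp only [RSFell] at h; split_ifs at h <;> omega

lemma RSFell_top {P Δ d s : ℕ} (hΔd : Δ = d + 1) (hd1 : 1 ≤ d) (hP : d + 2 ≤ P)
    {j : ℕ} (hj : j < d) (h : P - 1 < RSFell P Δ d s j) : j < d - s := by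
  simp only [RSFell] at h; split_ifs at h <;> omega

lemma no_rainbow_of_cover {V : Type} {Δ t : ℕ} (S : Fin t → StarGraph V Δ)
    (hcov : ∀ u : V, ∃ (A : Finset V) (I : Finset (Fin t)),
      A.card + I.card < Δ ∧ ∀ (i : Fin t) (l : V), (S i).Adj u l → l ∈ A ∨ i ∈ I) :
    ¬ HasRainbowStar S := by
  classical
  rintro ⟨u, L, hL, huL, g, hg, hadj⟩
  obtain ⟨A, I, hsize, hcover⟩ := hcov u
  have h1 : (L.filter (· ∈ A)).card ≤ A.card :=
    Finset.card_le_card (fun x hx => (Finset.mem_filter.mp hx).2)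
  have h2 : (L.filter (· ∉ A)).card ≤ I.card := by
    apply Finset.card_le_card_of_injOn g
    · intro x hx
      obtain ⟨hxL, hxA⟩ := Finset.mem_filter.mp hx
      rcases hcover (g x) x (hadj x hxL) with h | h
      · exact absurd h hxA
      · exact h
    · intro x hx y hy hxy
      exact hg (Finset.mem_coe.mpr (Finset.mem_filter.mp hx).1)
        (Finset.mem_coe.mpr (Finset.mem_filter.mp hy).1) hxy
  have h3 := Finset.card_filter_add_card_filter_not (s := L) (p := (· ∈ A))
  omega

theorem starGraph_extremal_exists_large_k2 {V : Type} [Fintype V]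
    (Δ n a b k₁ k₂ : ℕ) (hΔ : 2 ≤ Δ)
    (hcard : Fintype.card V = n)
    (hn : n = a * (2 * Δ - 1) + b) (ha : 1 ≤ a) (hb : b ≤ 2 * Δ - 2)
    (hbk : b * (Δ - 1) = k₁ * (2 * Δ - 1) + k₂)
    (hk₂ : Δ ≤ k₂) (hk₂' : k₂ ≤ 2 * Δ - 2) :
    ∃ S : Fin (a * (Δ - 1) ^ 2 + k₁ * (Δ - 1) + k₂ - Δ) → StarGraph V Δ,
      ¬ HasRainbowStar S := by
  classical
  set d := Δ - 1 with hd
  set s := k₂ - Δ with hsdef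
  set M := a * d + k₁ with hM
  have hd1 : 1 ≤ d := by omega
  have hΔd : Δ = d + 1 := by omega
  have hsd : s + 1 ≤ d := by omega
  have hk2 : k₂ = Δ + s := by omega
  have ht : a * d ^ 2 + k₁ * d + k₂ - Δ = M * d + s := by
    have h1 : a * d ^ 2 + k₁ * d = M * d := by rw [hM]; ring
    rw [Nat.add_sub_assoc hk₂, h1, hsdef]
  rw [ht]
  have h2Δ : 2 * Δ - 1 = 2 * d + 1 := by omega
  rw [h2Δ] at hn hbk
  have hnd : n * d = M * (2 * d + 1) + k₂ := by
    calc n * d = a * d * (2 * d + 1) + b * d := by rw [hn]; ring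
    _ = a * d * (2 * d + 1) + (k₁ * (2 * d + 1) + k₂) := by rw [hbk]
    _ = M * (2 * d + 1) + k₂ := by rw [hM]; ring
  have hMn : M ≤ n := by
    have h1 : M * d ≤ n * d := by
      calc M * d ≤ M * (2 * d + 1) := Nat.mul_le_mul (le_refl M) (by omega)
      _ ≤ M * (2 * d + 1) + k₂ := Nat.le_add_right _ _
      _ = n * d := hnd.symm
    exact Nat.le_of_mul_le_mul_right h1 (by omega)
  set P := n - M with hPdef
  have hMP : M + P = n := by omega
  have hPd : P * d = M * Δ + k₂ := by
    have h1 : P * d + M * d = (M * Δ + k₂) + M * d := by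
      calc P * d + M * d = (P + M) * d := by ring
      _ = n * d := by rw [show P + M = n by omega]
      _ = M * (2 * d + 1) + k₂ := hnd
      _ = (M * Δ + k₂) + M * d := by rw [hΔd]; ring
    exact Nat.add_right_cancel h1
  have hMd : d ≤ M := by
    have h1 : 1 * d ≤ a * d := Nat.mul_le_mul ha (le_refl d)
    omega
  have hP : d + 2 ≤ P := by
    by_contra hcon
    push_neg at hcon
    have h1 : P * d ≤ (d + 1) * d := Nat.mul_le_mul (by omega) (le_refl d)
    have h2 : d * Δ ≤ M * Δ := Nat.mul_le_mul hMd (le_refl Δ)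
    have h3 : (d + 1) * d = d * Δ := by rw [hΔd]; ring
    omega
  have hcumd : RSFcum P Δ d s d = M * Δ := RSFcum_total hd1 hΔd hP hsd hPd hk2
  have hn0 : 0 < n := by omega
  let e : V ≃ Fin n := Fintype.equivFinOfCardEq hcard
  set emb : ℕ → V := fun m => e.symm ⟨m % n, Nat.mod_lt m hn0⟩ with hemb
  have hembinj : ∀ x y, x < n → y < n → emb x = emb y → x = y := by
    intro x y hx hy hxy
    have h1 := e.symm.injective hxy
    have h2 := congrArg Fin.val h1
    simp only [Fin.val_mk] at h2
    rwa [Nat.mod_eq_of_lt hx, Nat.mod_eq_of_lt hy] at h2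
  set Lmain : ℕ → Finset V :=
    fun i => (Finset.range Δ).image (fun u => emb (M + RSFsig P Δ d s (i * Δ + u))) with hLmain
  have hblock : ∀ i u', i < M → u' < Δ → i * Δ + u' < M * Δ := by
    intro i u' hi hu'
    calc i * Δ + u' < i * Δ + Δ := by omega
    _ = (i + 1) * Δ := by ring
    _ ≤ M * Δ := Nat.mul_le_mul (by omega) (le_refl Δ)
  have hsigP : ∀ x, x < M * Δ → RSFsig P Δ d s x < P := fun x hx => RSFsig_lt hd1 hcumd hx
  have hLcard : ∀ i, i < M → (Lmain i).card = Δ := by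
    intro i hi
    rw [hLmain]
    rw [Finset.card_image_of_injOn, Finset.card_range]
    intro u hu v hv huv
    simp only [Finset.coe_range, Set.mem_Iio] at hu hv
    have h1 : i * Δ + u < M * Δ := hblock _ _ hi hu
    have h2 : i * Δ + v < M * Δ := hblock _ _ hi hv
    have hsu := hsigP _ h1
    have hsv := hsigP _ h2
    have heq : M + RSFsig P Δ d s (i * Δ + u) = M + RSFsig P Δ d s (i * Δ + v) :=
      hembinj _ _ (by omega) (by omega) huv
    have hsig : RSFsig P Δ d s (i * Δ + u) = RSFsig P Δ d s (i * Δ + v) := by omega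
    have := RSF_blockinj hd1 hΔd hP hcumd (i := i) (by omega) (by omega) (by omega) (by omega)
      h1 h2 hsig
    omega
  have hLpool : ∀ i v, v ∈ Lmain i → ∃ w, v = emb (M + RSFsig P Δ d s (i * Δ + w)) ∧ w < Δ := by
    intro i v hv
    rw [hLmain] at hv
    obtain ⟨w, hw, hwe⟩ := Finset.mem_image.mp hv
    exact ⟨w, hwe.symm, Finset.mem_range.mp hw⟩
  have hnotinLmain : ∀ i, i < M → emb i ∉ Lmain i := by
    intro i hi hmem
    obtain ⟨w, hwe, hw⟩ := hLpool i _ hmem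
    have h1 : i * Δ + w < M * Δ := hblock _ _ hi hw
    have h2 := hsigP _ h1
    have := hembinj _ _ (by omega) (by omega) hwe
    omega
  set cstar : V := emb (M + (P - 1)) with hcstar
  set Lstar : Finset V := (Finset.range Δ).image (fun u => emb (M + (P - Δ - 1 + u))) with hLstar
  have hLstarcard : Lstar.card = Δ := by
    rw [hLstar]
    rw [Finset.card_image_of_injOn, Finset.card_range]
    intro u hu v hv huv
    simp only [Finset.coe_range, Set.mem_Iio] at hu hv
    have := hembinj _ _ (by omega) (by omega) huv
    omega
  have hcstar_notin : cstar ∉ Lstar := by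
    intro hmem
    rw [hLstar] at hmem
    obtain ⟨w, hw, hwe⟩ := Finset.mem_image.mp hmem
    have hw' := Finset.mem_range.mp hw
    have := hembinj _ _ (by omega) (by omega) hwe
    omega
  have hdivM : ∀ β : ℕ, β < M * d → β / d < M := by
    intro β h
    rw [Nat.mul_comm] at h
    exact Nat.div_lt_of_lt_mul h
  obtain ⟨S, hSspec⟩ : ∃ S : Fin (M * d + s) → StarGraph V Δ, ∀ β : Fin (M * d + s),
      ((β : ℕ) < M * d → (S β).center = emb ((β : ℕ) / d) ∧ (S β).leaves = Lmain ((β : ℕ) / d)) ∧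
      (¬ (β : ℕ) < M * d → (S β).center = cstar ∧ (S β).leaves = Lstar) := by
    refine ⟨fun β => if h : (β : ℕ) < M * d then
        ⟨emb ((β : ℕ) / d), Lmain ((β : ℕ) / d), hLcard _ (hdivM _ h), hnotinLmain _ (hdivM _ h)⟩
      else ⟨cstar, Lstar, hLstarcard, hcstar_notin⟩, fun β => ⟨fun h => ?_, fun h => ?_⟩⟩
    · simp only [dif_pos h]
      exact ⟨trivial, trivial⟩
    · simp only [dif_neg h]
      exact ⟨trivial, trivial⟩
  refine ⟨S, ?_⟩
  apply no_rainbow_of_cover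
  intro u
  set x : ℕ := ((e u : Fin n) : ℕ) with hxdef
  have hxn : x < n := (e u).isLt
  have hux : emb x = u := by
    rw [hemb]
    show e.symm ⟨x % n, Nat.mod_lt x hn0⟩ = u
    have h1 : (⟨x % n, Nat.mod_lt x hn0⟩ : Fin n) = e u := Fin.ext (Nat.mod_eq_of_lt hxn)
    rw [h1, Equiv.symm_apply_apply]
  by_cases hxM : x < M
  · -- u is a center vertex
    refine ⟨∅, Finset.univ.filter (fun β : Fin (M * d + s) => (β : ℕ) < M * d ∧ (β : ℕ) / d = x),
      ?_, ?_⟩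
    · have hc : (Finset.univ.filter
          (fun β : Fin (M * d + s) => (β : ℕ) < M * d ∧ (β : ℕ) / d = x)).card ≤ d := by
        have hle := Finset.card_le_card_of_injOn (f := fun β : Fin (M * d + s) => (β : ℕ) % d)
          (s := Finset.univ.filter (fun β : Fin (M * d + s) => (β : ℕ) < M * d ∧ (β : ℕ) / d = x))
          (t := Finset.range d) ?_ ?_
        · simpa using hle
        · intro β hβ
          simp only [Finset.mem_coe, Finset.mem_range]
          exact Nat.mod_lt _ (by omega)
        · intro β hβ γ hγ hbg
          simp only [Finset.coe_filter, Finset.mem_univ, true_and, Set.mem_setOf_eq] at hβ hγ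
          have hβ2 := Nat.div_add_mod (β : ℕ) d
          have hγ2 := Nat.div_add_mod (γ : ℕ) d
          have hbg' : (β : ℕ) % d = (γ : ℕ) % d := hbg
          have hv : (β : ℕ) = (γ : ℕ) := by
            rw [← hβ2, ← hγ2, hβ.2, hγ.2, hbg']
          exact Fin.ext hv
      simp only [Finset.card_empty]
      omega
    · intro i l hadj
      simp only [StarGraph.Adj] at hadj
      by_cases hi : (i : ℕ) < M * d
      · obtain ⟨hc, hl⟩ := (hSspec i).1 hi
        rw [hc, hl] at hadj
        rcases hadj with ⟨h1, h2⟩ | ⟨h1, h2⟩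
        · have hv := hembinj _ _ hxn (by have := hdivM _ hi; omega) (hux.trans h1)
          right
          simp only [Finset.mem_filter, Finset.mem_univ, true_and]
          exact ⟨hi, hv.symm⟩
        · exfalso
          obtain ⟨w, hwe, hw⟩ := hLpool _ _ h2
          have hb1 : (i : ℕ) / d * Δ + w < M * Δ := hblock _ _ (hdivM _ hi) hw
          have hb2 := hsigP _ hb1
          have := hembinj _ _ hxn (by omega) (hux.trans hwe)
          omega
      · exfalso
        obtain ⟨hc, hl⟩ := (hSspec i).2 hi
        rw [hc, hl] at hadj
        rcases hadj with ⟨h1, h2⟩ | ⟨h1, h2⟩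
        · have := hembinj _ _ hxn (by omega) (hux.trans (h1.trans hcstar))
          omega
        · rw [hLstar] at h2
          obtain ⟨w, hw, hwe⟩ := Finset.mem_image.mp h2
          have hw' := Finset.mem_range.mp hw
          have := hembinj _ _ (by omega) hxn (hwe.trans hux.symm)
          omega
  · -- u is a pool vertex
    set r : ℕ := x - M with hrdef
    have hxr : x = M + r := by omega
    have hrP : r < P := by omega
    have hxu : emb (M + r) = u := by rw [← hxr]; exact hux
    set Amain : Finset V := ((Finset.range d).filter (fun j => r < RSFell P Δ d s j)).image
      (fun j => emb ((RSFcum P Δ d s j + r) / Δ)) with hAmainDef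
    have hAmain_cov : ∀ i : ℕ, i < M → u ∈ Lmain i → emb i ∈ Amain := by
      intro i hi hu
      obtain ⟨w, hwe, hw⟩ := hLpool _ _ hu
      have hb1 : i * Δ + w < M * Δ := hblock _ _ hi hw
      have hb2 := hsigP _ hb1
      have hsr : RSFsig P Δ d s (i * Δ + w) = r := by
        have := hembinj _ _ (by omega) (by omega) (hwe.symm.trans hxu.symm)
        omega
      obtain ⟨j, hj, h1, h2, h3⟩ := RSF_round hd1 hcumd hb1
      have hsum : RSFcum P Δ d s j + r = i * Δ + w := by omega
      rw [hAmainDef]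
      apply Finset.mem_image.mpr
      refine ⟨j, Finset.mem_filter.mpr ⟨Finset.mem_range.mpr hj, by omega⟩, ?_⟩
      rw [hsum]
      congr 1
      rw [add_comm, Nat.add_mul_div_right _ _ (show 0 < Δ by omega), Nat.div_eq_of_lt hw, zero_add]
    have hAmain_card : Amain.card ≤ ((Finset.range d).filter
        (fun j => r < RSFell P Δ d s j)).card := Finset.card_image_le
    have hcov_main : ∀ (β : Fin (M * d + s)) (l : V), (β : ℕ) < M * d →
        (S β).Adj u l → l ∈ Amain := by
      intro β l hb hadj
      simp only [StarGraph.Adj] at hadj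
      obtain ⟨hc, hl⟩ := (hSspec β).1 hb
      rw [hc, hl] at hadj
      rcases hadj with ⟨h1, h2⟩ | ⟨h1, h2⟩
      · exfalso
        have hdd := hdivM _ hb
        have := hembinj _ _ hxn (by omega) (hux.trans h1)
        omega
      · rw [h1]
        exact hAmain_cov _ (hdivM _ hb) h2
    by_cases hs0 : s = 0
    · refine ⟨Amain, ∅, ?_, ?_⟩
      · have h1 : ((Finset.range d).filter (fun j => r < RSFell P Δ d s j)).card ≤ d := by
          calc ((Finset.range d).filter (fun j => r < RSFell P Δ d s j)).card
              ≤ (Finset.range d).card := Finset.card_filter_le _ _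
          _ = d := Finset.card_range d
        simp only [Finset.card_empty]
        omega
      · intro β l hadj
        by_cases hb : (β : ℕ) < M * d
        · exact Or.inl (hcov_main β l hb hadj)
        · exfalso
          have := β.isLt
          omega
    · by_cases hrc : r = P - 1
      · -- u is the extra center
        refine ⟨Amain, Finset.univ.filter (fun β : Fin (M * d + s) => ¬ (β : ℕ) < M * d), ?_, ?_⟩
        · have hsub : (Finset.range d).filter (fun j => r < RSFell P Δ d s j) ⊆
              Finset.range (d - s) := by
            intro j hj
            obtain ⟨hj1, hj2⟩ := Finset.mem_filter.mp hj
            have hj1' := Finset.mem_range.mp hj1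
            apply Finset.mem_range.mpr
            exact RSFell_top hΔd hd1 hP hj1' (by omega)
          have h1 : Amain.card ≤ d - s := by
            calc Amain.card ≤ ((Finset.range d).filter (fun j => r < RSFell P Δ d s j)).card :=
                Finset.card_image_le
            _ ≤ (Finset.range (d - s)).card := Finset.card_le_card hsub
            _ = d - s := Finset.card_range _
          have h2 : (Finset.univ.filter
              (fun β : Fin (M * d + s) => ¬ (β : ℕ) < M * d)).card ≤ s := by
            have hle := Finset.card_le_card_of_injOn
              (f := fun β : Fin (M * d + s) => (β : ℕ) - M * d)
              (s := Finset.univ.filter (fun β : Fin (M * d + s) => ¬ (β : ℕ) < M * d))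
              (t := Finset.range s) ?_ ?_
            · simpa using hle
            · intro β hβ
              simp only [Finset.mem_coe, Finset.mem_filter, Finset.mem_univ, true_and] at hβ
              simp only [Finset.mem_coe, Finset.mem_range]
              have := β.isLt
              omega
            · intro β hβ γ hγ hbg
              simp only [Finset.coe_filter, Finset.mem_univ, true_and, Set.mem_setOf_eq] at hβ hγ
              have hbg' : (β : ℕ) - M * d = (γ : ℕ) - M * d := hbg
              exact Fin.ext (by omega)
          omega
        · intro β l hadj
          by_cases hb : (β : ℕ) < M * d
          · exact Or.inl (hcov_main β l hb hadj)
          · right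
            simp only [Finset.mem_filter, Finset.mem_univ, true_and]
            exact hb
      · by_cases hrL : P - Δ - 1 ≤ r
        · -- u is a leaf of the extra star
          refine ⟨Amain ∪ {cstar}, ∅, ?_, ?_⟩
          · have hsub : (Finset.range d).filter (fun j => r < RSFell P Δ d s j) ⊆
                Finset.range (d - 1) := by
              intro j hj
              obtain ⟨hj1, hj2⟩ := Finset.mem_filter.mp hj
              have hj1' := Finset.mem_range.mp hj1
              apply Finset.mem_range.mpr
              have := RSFell_last hΔd hP (by omega) hj1' hrL hj2
              omega
            have h1 : Amain.card ≤ d - 1 := by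
              calc Amain.card ≤ ((Finset.range d).filter (fun j => r < RSFell P Δ d s j)).card :=
                  Finset.card_image_le
              _ ≤ (Finset.range (d - 1)).card := Finset.card_le_card hsub
              _ = d - 1 := Finset.card_range _
            have h2 : (Amain ∪ {cstar}).card ≤ Amain.card + 1 := by
              calc (Amain ∪ {cstar}).card ≤ Amain.card + ({cstar} : Finset V).card :=
                  Finset.card_union_le _ _
              _ = Amain.card + 1 := by rw [Finset.card_singleton]
            simp only [Finset.card_empty]
            omega
          · intro β l hadj
            by_cases hb : (β : ℕ) < M * d
            · exact Or.inl (Finset.mem_union_left _ (hcov_main β l hb hadj))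
            · obtain ⟨hc, hl⟩ := (hSspec β).2 hb
              simp only [StarGraph.Adj] at hadj
              rw [hc, hl] at hadj
              rcases hadj with ⟨h1, h2⟩ | ⟨h1, h2⟩
              · exfalso
                have := hembinj _ _ (by omega) (by omega) (hxu.trans (h1.trans hcstar))
                omega
              · left
                rw [h1]
                exact Finset.mem_union_right _ (Finset.mem_singleton_self _)
        · -- generic pool vertex
          refine ⟨Amain, ∅, ?_, ?_⟩
          · have h1 : ((Finset.range d).filter (fun j => r < RSFell P Δ d s j)).card ≤ d := by
              calc ((Finset.range d).filter (fun j => r < RSFell P Δ d s j)).card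
                  ≤ (Finset.range d).card := Finset.card_filter_le _ _
              _ = d := Finset.card_range d
            simp only [Finset.card_empty]
            omega
          · intro β l hadj
            by_cases hb : (β : ℕ) < M * d
            · exact Or.inl (hcov_main β l hb hadj)
            · exfalso
              obtain ⟨hc, hl⟩ := (hSspec β).2 hb
              simp only [StarGraph.Adj] at hadj
              rw [hc, hl] at hadj
              rcases hadj with ⟨h1, h2⟩ | ⟨h1, h2⟩
              · have := hembinj _ _ (by omega) (by omega) (hxu.trans (h1.trans hcstar))
                omega
              · rw [hLstar] at h2
                obtain ⟨w, hw, hwe⟩ := Finset.mem_image.mp h2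
                have hw' := Finset.mem_range.mp hw
                have := hembinj _ _ (by omega) (by omega) (hwe.trans hxu.symm)
                omega
end

section
/- Let Δ ≥ 2 and let V be a vertex set with |V| = n, where Δ + 1 ≤ n ≤ 2Δ - 2. Then there exists a collection 𝒮 (with repetition allowed) of copies of the star K_{1,Δ} on V with |𝒮| = ⌊(n-1)²/4⌋ such that 𝒮 is rainbow K_{1,Δ}-free. -/
/-- Recover `j` from `(c+1+j) % k`. -/
lemma starAux_mod_recover (k c j : ℕ) (hc : c < k) (hj : j < k) :
    ((c + 1 + j) % k + 2 * k - 1 - c) % k = j := by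
  have hk : 0 < k := by omega
  have hd := Nat.div_add_mod (c + 1 + j) k
  have hq : (c + 1 + j) / k = 0 ∨ (c + 1 + j) / k = 1 := by
    rcases Nat.lt_or_ge (c + 1 + j) k with h | h
    · left; exact Nat.div_eq_of_lt h
    · right
      have h2 : (c + 1 + j) / k < 2 := by
        rw [Nat.div_lt_iff_lt_mul hk]; omega
      have h1 : 1 ≤ (c + 1 + j) / k := (Nat.one_le_div_iff hk).mpr h
      omega
  rcases hq with h | h <;> rw [h] at hd
  · have h1 : (c + 1 + j) % k + 2 * k - 1 - c = j + 2 * k := by omega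
    rw [h1, Nat.add_mul_mod_self_right, Nat.mod_eq_of_lt hj]
  · have h1 : (c + 1 + j) % k + 2 * k - 1 - c = j + k := by omega
    rw [h1, Nat.add_mod_right, Nat.mod_eq_of_lt hj]

/-- The index function for the leaves of the star with center index `c`. -/
def starAux_f (k d c j : ℕ) : ℕ := if j < d then (c + 1 + j) % k else k + (j - d)

/-- The leaf indices of the star with center index `c`. -/
def starAux_leafIdx (Δ k d c : ℕ) : Finset ℕ := (Finset.range Δ).image (starAux_f k d c)

lemma starAux_mem_leafIdx {Δ k d c x : ℕ} :
    x ∈ starAux_leafIdx Δ k d c ↔ ∃ j, j < Δ ∧ starAux_f k d c j = x := by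
  simp [starAux_leafIdx, Finset.mem_image, Finset.mem_range]

/-- The leaf set as a `Finset V`. -/
def starAux_leafSet {V : Type} {n : ℕ} (e : V ≃ Fin n) (Δ k d c : ℕ)
    (h : ∀ x ∈ starAux_leafIdx Δ k d c, x < n) : Finset V :=
  ((starAux_leafIdx Δ k d c).attachFin h).map e.symm.toEmbedding

lemma starAux_mem_leafSet {V : Type} {n : ℕ} (e : V ≃ Fin n) (Δ k d c : ℕ)
    (h : ∀ x ∈ starAux_leafIdx Δ k d c, x < n) (v : V) :
    v ∈ starAux_leafSet e Δ k d c h ↔ (e v).val ∈ starAux_leafIdx Δ k d c := by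
  simp only [starAux_leafSet, Finset.mem_map, Equiv.coe_toEmbedding,
    Finset.mem_attachFin]
  constructor
  · rintro ⟨x, hx, rfl⟩; simpa using hx
  · intro hv; exact ⟨e v, hv, by simp⟩

lemma starAux_card_leafSet {V : Type} {n : ℕ} (e : V ≃ Fin n) (Δ k d c : ℕ)
    (h : ∀ x ∈ starAux_leafIdx Δ k d c, x < n) :
    (starAux_leafSet e Δ k d c h).card = (starAux_leafIdx Δ k d c).card := by
  simp [starAux_leafSet, Finset.card_map, Finset.card_attachFin]

theorem starGraph_extremal_exists_small_n {V : Type} [Fintype V]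
    (Δ n : ℕ) (hΔ : 2 ≤ Δ)
    (hcard : Fintype.card V = n)
    (hn₁ : Δ + 1 ≤ n) (hn₂ : n ≤ 2 * Δ - 2) :
    ∃ S : Fin ((n - 1) ^ 2 / 4) → StarGraph V Δ,
      ¬ HasRainbowStar S := by
  classical
  have e : V ≃ Fin n := Fintype.equivFinOfCardEq hcard
  set k := n / 2 with hkdef
  set m := (n - 1) / 2 with hmdef
  set d := Δ - 1 - m with hddef
  have hΔ3 : 3 ≤ Δ := by omega
  have hk0 : 0 < k := by omega
  have hm0 : 0 < m := by omega
  have hkn : k ≤ n := by omega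
  have hkm : k + m = n - 1 := by omega
  have hkΔ : k ≤ Δ - 1 := by omega
  have hdk : d < k := by omega
  have hmd : m + d = Δ - 1 := by omega
  have ht : (n - 1) ^ 2 / 4 = k * m := by
    rcases Nat.even_or_odd' (n - 1) with ⟨b, hb | hb⟩
    · have h1 : k = b := by omega
      have h2 : m = b := by omega
      have h3 : (n - 1) ^ 2 = 4 * (b * b) := by rw [hb]; ring
      rw [h1, h2, h3]
      generalize b * b = p
      omega
    · have h1 : k = b + 1 := by omega
      have h2 : m = b := by omega
      have h3 : (n - 1) ^ 2 = 4 * ((b + 1) * b) + 1 := by rw [hb]; ring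
      rw [h1, h2, h3]
      generalize (b + 1) * b = p
      omega
  rw [ht]
  -- leaf indices are < n
  have hflt : ∀ c, ∀ x ∈ starAux_leafIdx Δ k d c, x < n := by
    intro c x hx
    rw [starAux_mem_leafIdx] at hx
    obtain ⟨j, hj, rfl⟩ := hx
    unfold starAux_f
    by_cases h : j < d
    · rw [if_pos h]
      exact lt_of_lt_of_le (Nat.mod_lt _ hk0) hkn
    · rw [if_neg h]
      omega
  -- injectivity of the index function
  have hfinj : ∀ c, c < k → ∀ j1 < Δ, ∀ j2 < Δ,
      starAux_f k d c j1 = starAux_f k d c j2 → j1 = j2 := by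
    intro c hc j1 hj1 j2 hj2 hEq
    unfold starAux_f at hEq
    by_cases h1 : j1 < d <;> by_cases h2 : j2 < d
    · rw [if_pos h1, if_pos h2] at hEq
      have a1 := starAux_mod_recover k c j1 hc (by omega)
      have a2 := starAux_mod_recover k c j2 hc (by omega)
      rw [hEq] at a1
      exact a1.symm.trans a2
    · rw [if_pos h1, if_neg h2] at hEq
      have := Nat.mod_lt (c + 1 + j1) hk0
      omega
    · rw [if_neg h1, if_pos h2] at hEq
      have := Nat.mod_lt (c + 1 + j2) hk0
      omega
    · rw [if_neg h1, if_neg h2] at hEq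
      omega
  have hcardIdx : ∀ c, c < k → (starAux_leafIdx Δ k d c).card = Δ := by
    intro c hc
    unfold starAux_leafIdx
    rw [Finset.card_image_of_injOn, Finset.card_range]
    intro j1 hj1 j2 hj2 hEq
    simp only [Finset.coe_range, Set.mem_Iio] at hj1 hj2
    exact hfinj c hc j1 hj1 j2 hj2 hEq
  have hcardLeaf : ∀ c, c < k → (starAux_leafSet e Δ k d c (hflt c)).card = Δ := by
    intro c hc
    rw [starAux_card_leafSet, hcardIdx c hc]
  -- the center is not a leaf
  have hnotmemIdx : ∀ c, c < k → c ∉ starAux_leafIdx Δ k d c := by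
    intro c hc hmem
    rw [starAux_mem_leafIdx] at hmem
    obtain ⟨j, hj, hfj⟩ := hmem
    unfold starAux_f at hfj
    by_cases h : j < d
    · rw [if_pos h] at hfj
      have a1 := starAux_mod_recover k c j hc (by omega)
      rw [hfj] at a1
      have h2 : c + 2 * k - 1 - c = k + (k - 1) := by omega
      rw [h2, Nat.add_mod_left, Nat.mod_eq_of_lt (by omega)] at a1
      omega
    · rw [if_neg h] at hfj
      omega
  have hcenlt : ∀ i : Fin (k * m), (i : ℕ) / m < k := by
    intro i
    rw [Nat.div_lt_iff_lt_mul hm0]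
    have := i.2
    omega
  have hcenltn : ∀ i : Fin (k * m), (i : ℕ) / m < n := fun i =>
    lt_of_lt_of_le (hcenlt i) (by omega)
  have hnotmem : ∀ i : Fin (k * m),
      e.symm ⟨(i : ℕ) / m, hcenltn i⟩ ∉ starAux_leafSet e Δ k d ((i : ℕ) / m) (hflt _) := by
    intro i hmem
    rw [starAux_mem_leafSet] at hmem
    simp only [Equiv.apply_symm_apply] at hmem
    exact hnotmemIdx _ (hcenlt i) hmem
  refine ⟨fun i => { center := e.symm ⟨(i : ℕ) / m, hcenltn i⟩,
                     leaves := starAux_leafSet e Δ k d ((i : ℕ) / m) (hflt _),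
                     card_leaves := hcardLeaf _ (hcenlt i),
                     center_not_mem := hnotmem i }, ?_⟩
  rintro ⟨u, L, hLcard, huL, g, hginj, hadj⟩
  -- key: if u = center of star i then (e u).val = i/m ; if l = center then (e l).val = i/m
  have hcen_eq : ∀ (w : V) (i : Fin (k * m)),
      w = e.symm ⟨(i : ℕ) / m, hcenltn i⟩ → (e w).val = (i : ℕ) / m := by
    intro w i hw
    rw [hw]
    simp
  rcases Nat.lt_or_ge ((e u).val) k with hu | hu
  · -- Case B : u is a "center" vertex
    set L₁ := L.filter (fun l => u = e.symm ⟨((g l : ℕ)) / m, hcenltn (g l)⟩) with hL1def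
    have hL1sub : L₁ ⊆ L := Finset.filter_subset _ _
    have hL1 : L₁.card ≤ m := by
      rw [← Finset.card_range m]
      apply Finset.card_le_card_of_injOn (fun l => ((g l : ℕ)) % m)
      · intro l hl
        simp only [Finset.mem_coe, Finset.mem_range]
        exact Nat.mod_lt _ hm0
      · intro l1 hl1 l2 hl2 hEq
        simp only [Finset.mem_coe, hL1def, Finset.mem_filter] at hl1 hl2
        have e1 := hcen_eq u (g l1) hl1.2
        have e2 := hcen_eq u (g l2) hl2.2
        have hEq' : ((g l1 : ℕ)) % m = ((g l2 : ℕ)) % m := hEq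
        have hv : ((g l1 : ℕ)) = ((g l2 : ℕ)) := by
          conv_lhs => rw [← Nat.div_add_mod ((g l1 : ℕ)) m]
          conv_rhs => rw [← Nat.div_add_mod ((g l2 : ℕ)) m]
          rw [← e1, ← e2, hEq']
        exact hginj (Finset.mem_coe.mpr hl1.1) (Finset.mem_coe.mpr hl2.1) (Fin.ext hv)
    -- every l outside L₁ gives a self-serving star
    have hL2prop : ∀ l ∈ L \ L₁, (e l).val < k ∧
        ∃ j, j < d ∧ ((e l).val + 1 + j) % k = (e u).val := by
      intro l hl
      rw [Finset.mem_sdiff] at hl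
      obtain ⟨hlL, hlnot⟩ := hl
      have hnotc : ¬ (u = e.symm ⟨((g l : ℕ)) / m, hcenltn (g l)⟩) := by
        intro h
        exact hlnot (Finset.mem_filter.mpr ⟨hlL, h⟩)
      rcases hadj l hlL with ⟨h1, _⟩ | ⟨h1, h2⟩
      · exact absurd h1 hnotc
      · -- l is the center, u is a leaf
        have hel := hcen_eq l (g l) h1
        rw [starAux_mem_leafSet] at h2
        rw [starAux_mem_leafIdx] at h2
        obtain ⟨j, hj, hfj⟩ := h2
        unfold starAux_f at hfj
        by_cases h : j < d
        · rw [if_pos h] at hfj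
          rw [hel]
          exact ⟨hcenlt (g l), j, h, hfj⟩
        · rw [if_neg h] at hfj
          omega
    have hL2 : (L \ L₁).card ≤ d := by
      rw [← Finset.card_range d]
      apply Finset.card_le_card_of_injOn
        (fun l => ((e u).val + 2 * k - 1 - (e l).val) % k)
      · intro l hl
        obtain ⟨hck, j, hjd, hfj⟩ := hL2prop l hl
        have := starAux_mod_recover k ((e l).val) j hck (by omega)
        rw [hfj] at this
        simp only [Finset.mem_coe, Finset.mem_range]
        omega
      · intro l1 hl1 l2 hl2 hEq
        simp only [Finset.mem_coe] at hl1 hl2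
        obtain ⟨hck1, j1, hjd1, hfj1⟩ := hL2prop l1 hl1
        obtain ⟨hck2, j2, hjd2, hfj2⟩ := hL2prop l2 hl2
        have a1 := starAux_mod_recover k ((e l1).val) j1 hck1 (by omega)
        have a2 := starAux_mod_recover k ((e l2).val) j2 hck2 (by omega)
        rw [hfj1] at a1
        rw [hfj2] at a2
        have hj12 : j1 = j2 := by rw [← a1, ← a2]; exact hEq
        -- recover the center from j
        have b1 := starAux_mod_recover k j1 ((e l1).val) (by omega) (by omega)
        have b2 := starAux_mod_recover k j2 ((e l2).val) (by omega) (by omega)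
        have c1 : (j1 + 1 + (e l1).val) = ((e l1).val + 1 + j1) := by ring
        have c2 : (j2 + 1 + (e l2).val) = ((e l2).val + 1 + j2) := by ring
        rw [c1, hfj1] at b1
        rw [c2, hfj2] at b2
        have : (e l1).val = (e l2).val := by rw [← b1, ← b2, hj12]
        have : e l1 = e l2 := Fin.ext this
        exact e.injective this
    have hsum := Finset.card_sdiff_add_card_eq_card hL1sub
    omega
  · -- Case A : u is not a "center" vertex; every leaf must be a center
    have hlk : ∀ l ∈ L, (e l).val < k := by
      intro l hl
      rcases hadj l hl with ⟨h1, _⟩ | ⟨h1, _⟩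
      · have := hcen_eq u (g l) h1
        have := hcenlt (g l)
        omega
      · have := hcen_eq l (g l) h1
        have := hcenlt (g l)
        omega
    have : L.card ≤ k := by
      calc L.card ≤ (Finset.range k).card := by
            apply Finset.card_le_card_of_injOn (fun l => (e l).val)
            · intro l hl
              simp only [Finset.mem_coe, Finset.mem_range]
              exact hlk l hl
            · intro l1 hl1 l2 hl2 hEq
              exact e.injective (Fin.ext hEq)
        _ = k := Finset.card_range k
    omega
end

section
/- Let Δ ≥ 2 and let 𝒮 be a collection (with repetition allowed) of copies of the star K_{1,Δ} on a common vertex set V that is rainbow K_{1,Δ}-free. For u ∈ V, let 𝒮_u be the sub-collection of stars of 𝒮 with center u, and let d⁻(u) be the number of vertices x ∈ V with x ≠ u such that u is a leaf of some star in 𝒮_x. Then for every vertex u that is the center of at least one star of 𝒮, we have |𝒮_u| ≤ Δ - 1 - d⁻(u). -/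
/-- The number of stars of the collection `S` with center `u` (this is `|𝒮_u|`). -/
noncomputable def centerCount {V : Type} {Δ t : ℕ} (S : Fin t → StarGraph V Δ) (u : V) : ℕ :=
  {i : Fin t | (S i).center = u}.ncard

/-- The in-degree `d⁻(u)`: the number of vertices `x ≠ u` such that `u` is a leaf of
some star of the collection with center `x`. -/
noncomputable def inDeg {V : Type} {Δ t : ℕ} (S : Fin t → StarGraph V Δ) (u : V) : ℕ :=
  {x : V | x ≠ u ∧ ∃ i, (S i).center = x ∧ u ∈ (S i).leaves}.ncard

/-- The set of vertices that are centers of at least one star of the collection. -/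
def centers {V : Type} {Δ t : ℕ} (S : Fin t → StarGraph V Δ) : Set V :=
  {u : V | ∃ i, (S i).center = u}

open Classical in
lemma pick_lemma {ι V : Type} [DecidableEq ι] [DecidableEq V] [Nonempty V] :
    ∀ (n : ℕ) (A : Finset ι) (T : ι → Finset V), A.card = n →
      (∀ i ∈ A, n ≤ (T i).card) →
      ∃ f : ι → V, Set.InjOn f ↑A ∧ ∀ i ∈ A, f i ∈ T i := by
  intro n
  induction n with
  | zero =>
    intro A T hA _
    refine ⟨fun _ => Classical.arbitrary V, ?_, ?_⟩ <;>
      simp [Finset.card_eq_zero.mp hA]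
  | succ n ih =>
    intro A T hA hT
    obtain ⟨a, ha⟩ := Finset.card_pos.mp (by omega : 0 < A.card)
    have hTa : 0 < (T a).card := lt_of_lt_of_le (Nat.succ_pos n) (hT a ha)
    obtain ⟨v, hv⟩ := Finset.card_pos.mp hTa
    obtain ⟨f, hinj, hmem⟩ := ih (A.erase a) (fun i => (T i).erase v)
      (by rw [Finset.card_erase_of_mem ha, hA]; omega)
      (by
        intro i hi
        have h1 := hT i (Finset.mem_of_mem_erase hi)
        by_cases h : v ∈ T i
        · rw [Finset.card_erase_of_mem h]; omega
        · rw [Finset.erase_eq_of_notMem h]; omega)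
    refine ⟨Function.update f a v, ?_, ?_⟩
    · intro x hx y hy hxy
      simp only [Finset.coe_insert, Set.mem_insert_iff, Finset.mem_coe] at hx hy
      by_cases hxa : x = a <;> by_cases hya : y = a
      · rw [hxa, hya]
      · exfalso
        have hy' : y ∈ A.erase a := Finset.mem_erase.mpr ⟨hya, hy⟩
        have := hmem y hy'
        rw [hxa] at hxy
        rw [Function.update_self, Function.update_of_ne hya] at hxy
        exact (Finset.mem_erase.mp this).1 hxy.symm
      · exfalso
        have hx' : x ∈ A.erase a := Finset.mem_erase.mpr ⟨hxa, hx⟩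
        have := hmem x hx'
        rw [hya] at hxy
        rw [Function.update_self, Function.update_of_ne hxa] at hxy
        exact (Finset.mem_erase.mp this).1 hxy
      · rw [Function.update_of_ne hxa, Function.update_of_ne hya] at hxy
        exact hinj (Finset.mem_coe.mpr (Finset.mem_erase.mpr ⟨hxa, hx⟩))
          (Finset.mem_coe.mpr (Finset.mem_erase.mpr ⟨hya, hy⟩)) hxy
    · intro i hi
      by_cases hia : i = a
      · rw [hia, Function.update_self]; exact hv
      · rw [Function.update_of_ne hia]
        exact Finset.mem_of_mem_erase (hmem i (Finset.mem_erase.mpr ⟨hia, hi⟩))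

theorem centerCount_le_of_rainbow_free {V : Type} [Fintype V]
    (Δ t : ℕ) (hΔ : 2 ≤ Δ) (S : Fin t → StarGraph V Δ)
    (hfree : ¬ HasRainbowStar S) :
    ∀ u : V, (∃ i, (S i).center = u) →
      (centerCount S u : ℤ) ≤ (Δ : ℤ) - 1 - (inDeg S u : ℤ) := by
  classical
  intro u _hu
  haveI : Nonempty V := ⟨u⟩
  set A : Finset (Fin t) := Finset.univ.filter (fun i => (S i).center = u) with hA
  set D : Finset V :=
    Finset.univ.filter (fun x => x ≠ u ∧ ∃ i, (S i).center = x ∧ u ∈ (S i).leaves) with hD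
  have hAcent : ∀ i ∈ A, (S i).center = u := by
    intro i hi
    rw [hA, Finset.mem_filter] at hi
    exact hi.2
  have hcc : centerCount S u = A.card := by
    rw [centerCount, ← Set.ncard_coe_finset]
    congr 1
    ext i
    simp [hA]
  have hdd : inDeg S u = D.card := by
    rw [inDeg, ← Set.ncard_coe_finset]
    congr 1
    ext x
    simp [hD]
  rw [hcc, hdd]
  by_contra hcon
  push_neg at hcon
  have hkd : Δ ≤ A.card + D.card := by omega
  haveI hFt : Nonempty (Fin t) := by
    by_cases h : 0 < A.card
    · exact ⟨(Finset.card_pos.mp h).choose⟩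
    · have hDpos : 0 < D.card := by omega
      obtain ⟨x, hx⟩ := Finset.card_pos.mp hDpos
      rw [hD, Finset.mem_filter] at hx
      exact ⟨hx.2.2.choose⟩
  set d' : ℕ := min D.card Δ with hd'
  obtain ⟨S₁, hS₁D, hS₁card⟩ := Finset.exists_subset_card_eq (s := D) (n := d') (min_le_left _ _)
  set m : ℕ := Δ - d' with hm
  have hmk : m ≤ A.card := by omega
  obtain ⟨A', hA'A, hA'card⟩ := Finset.exists_subset_card_eq (s := A) hmk
  have hpick : ∃ f : Fin t → V, Set.InjOn f ↑A' ∧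
      ∀ i ∈ A', f i ∈ (S i).leaves \ S₁ := by
    apply pick_lemma m A' _ hA'card
    intro i hi
    have h1 : (S i).leaves.card = Δ := (S i).card_leaves
    have h2 : (S i).leaves.card - S₁.card ≤ ((S i).leaves \ S₁).card :=
      Finset.le_card_sdiff S₁ (S i).leaves
    omega
  obtain ⟨f, hfinj, hfmem⟩ := hpick
  set L : Finset V := S₁ ∪ A'.image f with hL
  have himdisj : Disjoint S₁ (A'.image f) := by
    rw [Finset.disjoint_right]
    intro x hx
    obtain ⟨i, hi, rfl⟩ := Finset.mem_image.mp hx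
    exact fun hmem => (Finset.mem_sdiff.mp (hfmem i hi)).2 hmem
  have hLcard : L.card = Δ := by
    rw [hL, Finset.card_union_of_disjoint himdisj,
      Finset.card_image_of_injOn hfinj, hS₁card, hA'card]
    omega
  have hS₁prop : ∀ x ∈ S₁, x ≠ u ∧ ∃ i, (S i).center = x ∧ u ∈ (S i).leaves := by
    intro x hx
    have := hS₁D hx
    rw [hD, Finset.mem_filter] at this
    exact this.2
  set c : V → Fin t := fun x =>
    if h : ∃ i, (S i).center = x ∧ u ∈ (S i).leaves then h.choose
    else Classical.arbitrary (Fin t) with hc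
  have hc_spec : ∀ x ∈ S₁, (S (c x)).center = x ∧ u ∈ (S (c x)).leaves := by
    intro x hx
    obtain ⟨-, hex⟩ := hS₁prop x hx
    simp only [hc]
    rw [dif_pos hex]
    exact hex.choose_spec
  set g : V → Fin t := fun x =>
    if h : ∃ j, j ∈ A' ∧ f j = x then h.choose else c x with hg
  have hgf : ∀ i ∈ A', g (f i) = i := by
    intro i hi
    have hex : ∃ j, j ∈ A' ∧ f j = f i := ⟨i, hi, rfl⟩
    simp only [hg]
    rw [dif_pos hex]
    exact hfinj (Finset.mem_coe.mpr hex.choose_spec.1) (Finset.mem_coe.mpr hi)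
      hex.choose_spec.2
  have hgS₁ : ∀ x ∈ S₁, g x = c x := by
    intro x hx
    have hnex : ¬ ∃ j, j ∈ A' ∧ f j = x := by
      rintro ⟨j, hj, rfl⟩
      exact (Finset.mem_sdiff.mp (hfmem j hj)).2 hx
    simp only [hg]
    rw [dif_neg hnex]
  apply hfree
  refine ⟨u, L, hLcard, ?_, g, ?_, ?_⟩
  · -- u ∉ L
    intro hu
    rcases Finset.mem_union.mp hu with h | h
    · exact (hS₁prop u h).1 rfl
    · obtain ⟨i, hi, hfi⟩ := Finset.mem_image.mp h
      have hcu : (S i).center = u := hAcent i (hA'A hi)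
      have : f i ∈ (S i).leaves := (Finset.mem_sdiff.mp (hfmem i hi)).1
      rw [hfi, ← hcu] at this
      exact (S i).center_not_mem this
  · -- injectivity
    intro x hx y hy hxy
    rw [Finset.mem_coe, hL, Finset.mem_union] at hx hy
    rcases hx with hx | hx <;> rcases hy with hy | hy
    · have h1 := (hc_spec x hx).1
      have h2 := (hc_spec y hy).1
      rw [← hgS₁ x hx] at h1
      rw [← hgS₁ y hy] at h2
      rw [← h1, ← h2, hxy]
    · exfalso
      obtain ⟨i, hi, rfl⟩ := Finset.mem_image.mp hy
      have h1 := (hc_spec x hx).1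
      rw [← hgS₁ x hx] at h1
      rw [hxy, hgf i hi, hAcent i (hA'A hi)] at h1
      exact (hS₁prop x hx).1 h1.symm
    · exfalso
      obtain ⟨i, hi, rfl⟩ := Finset.mem_image.mp hx
      have h1 := (hc_spec y hy).1
      rw [← hgS₁ y hy] at h1
      rw [← hxy, hgf i hi, hAcent i (hA'A hi)] at h1
      exact (hS₁prop y hy).1 h1.symm
    · obtain ⟨i, hi, rfl⟩ := Finset.mem_image.mp hx
      obtain ⟨j, hj, rfl⟩ := Finset.mem_image.mp hy
      rw [hgf i hi, hgf j hj] at hxy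
      rw [hxy]
  · -- adjacency
    intro l hl
    rw [hL, Finset.mem_union] at hl
    rcases hl with h | h
    · right
      rw [hgS₁ l h]
      exact ⟨(hc_spec l h).1.symm, (hc_spec l h).2⟩
    · left
      obtain ⟨i, hi, rfl⟩ := Finset.mem_image.mp h
      rw [hgf i hi]
      exact ⟨(hAcent i (hA'A hi)).symm, (Finset.mem_sdiff.mp (hfmem i hi)).1⟩
end

section
/- Let Δ ≥ 2 and let 𝒮 be a collection (with repetition allowed) of copies of the star K_{1,Δ} on a common vertex set V with |V| = n, and let C ⊆ V be the set of vertices that are centers of at least one star of 𝒮. If 𝒮 is rainbow K_{1,Δ}-free, then |𝒮| ≤ n(Δ-1) - |C|·Δ. -/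
open Classical in
/-- Greedy selection of distinct leaves, one from each star in `I`, avoiding `F`. -/
lemma exists_distinct_leaves {V : Type} [Nonempty V] {Δ t : ℕ} (S : Fin t → StarGraph V Δ) :
    ∀ (I : Finset (Fin t)) (F : Finset V), F.card + I.card ≤ Δ →
    ∃ f : Fin t → V, Set.InjOn f ↑I ∧ ∀ i ∈ I, f i ∈ (S i).leaves ∧ f i ∉ F := by
  intro I
  induction I using Finset.induction_on with
  | empty =>
    intro F _
    exact ⟨fun _ => Classical.arbitrary V, by simp [Set.InjOn], by simp⟩
  | @insert a s ha ih =>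
    intro F hF
    rw [Finset.card_insert_of_notMem ha] at hF
    -- pick a leaf of S a avoiding F
    have hlt : F.card < (S a).leaves.card := by
      rw [(S a).card_leaves]; omega
    have hex : ((S a).leaves \ F).Nonempty := by
      rw [Finset.sdiff_nonempty]
      intro hsub
      exact absurd (Finset.card_le_card hsub) (by omega)
    obtain ⟨v, hv⟩ := hex
    rw [Finset.mem_sdiff] at hv
    obtain ⟨f, hinj, hf⟩ := ih (insert v F) (by
      rw [Finset.card_insert_of_notMem hv.2]; omega)
    refine ⟨Function.update f a v, ?_, ?_⟩
    · intro x hx y hy hxy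
      simp only [Finset.coe_insert, Set.mem_insert_iff, Finset.mem_coe] at hx hy
      rcases hx with rfl | hx <;> rcases hy with rfl | hy
      · rfl
      · rw [Function.update_self, Function.update_of_ne (by rintro rfl; exact ha hy)] at hxy
        exact ((hf y hy).2 (by rw [← hxy]; exact Finset.mem_insert_self v F)).elim
      · rw [Function.update_of_ne (by rintro rfl; exact ha hx), Function.update_self] at hxy
        exact ((hf x hx).2 (by rw [hxy]; exact Finset.mem_insert_self v F)).elim
      · rw [Function.update_of_ne (by rintro rfl; exact ha hx),
          Function.update_of_ne (by rintro rfl; exact ha hy)] at hxy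
        exact hinj hx hy hxy
    · intro i hi
      rcases Finset.mem_insert.1 hi with rfl | hi'
      · rw [Function.update_self]; exact ⟨hv.1, hv.2⟩
      · rw [Function.update_of_ne (by rintro rfl; exact ha hi')]
        refine ⟨(hf i hi').1, fun h => (hf i hi').2 (Finset.mem_insert_of_mem h)⟩

open Classical in
lemma key_degree_bound {V : Type} [Fintype V] {Δ t : ℕ} (hΔ : 1 ≤ Δ)
    (S : Fin t → StarGraph V Δ) (hfree : ¬ HasRainbowStar S) (u : V) :
    centerCount S u + inDeg S u + 1 ≤ Δ := by
  haveI : Nonempty V := ⟨u⟩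
  by_contra hcon
  push_neg at hcon
  apply hfree
  set Xs : Finset V := Finset.univ.filter
    (fun x => x ≠ u ∧ ∃ i, (S i).center = x ∧ u ∈ (S i).leaves) with hXs
  set Bs : Finset (Fin t) := Finset.univ.filter (fun i => (S i).center = u) with hBs
  have hXcard : inDeg S u = Xs.card := by
    rw [inDeg, show {x : V | x ≠ u ∧ ∃ i, (S i).center = x ∧ u ∈ (S i).leaves} = ↑Xs by
      ext x; simp [hXs]]
    exact Set.ncard_coe_finset _
  have hBcard : centerCount S u = Bs.card := by
    rw [centerCount, show {i : Fin t | (S i).center = u} = ↑Bs by ext i; simp [hBs]]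
    exact Set.ncard_coe_finset _
  rw [hXcard, hBcard] at hcon
  -- Δ ≤ Bs.card + Xs.card
  have hsum : Δ ≤ Bs.card + Xs.card := by omega
  haveI hnet : Nonempty (Fin t) := by
    rcases Nat.lt_or_ge 0 Bs.card with h | h
    · obtain ⟨i, _⟩ := Finset.card_pos.1 h; exact ⟨i⟩
    · have hx : 0 < Xs.card := by omega
      obtain ⟨x, hx⟩ := Finset.card_pos.1 hx
      rw [hXs, Finset.mem_filter] at hx
      obtain ⟨i, _⟩ := hx.2.2; exact ⟨i⟩
  obtain ⟨X', hX'sub, hX'card⟩ := Finset.exists_subset_card_eq (s := Xs) (n := min Δ Xs.card)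
    (min_le_right _ _)
  obtain ⟨B', hB'sub, hB'card⟩ := Finset.exists_subset_card_eq (s := Bs) (n := Δ - min Δ Xs.card)
    (by omega)
  obtain ⟨f, hfinj, hf⟩ := exists_distinct_leaves S B' X' (by rw [hX'card, hB'card]; omega)
  have hX'prop : ∀ x ∈ X', x ≠ u ∧ ∃ i, (S i).center = x ∧ u ∈ (S i).leaves := by
    intro x hx
    have := hX'sub hx
    rw [hXs, Finset.mem_filter] at this
    exact this.2
  have hB'center : ∀ j ∈ B', (S j).center = u := by
    intro j hj
    have := hB'sub hj
    rw [hBs, Finset.mem_filter] at this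
    exact this.2
  set g : V → Fin t := fun v =>
    if h1 : ∃ i, (S i).center = v ∧ u ∈ (S i).leaves ∧ v ≠ u then h1.choose
    else if h2 : ∃ j, j ∈ B' ∧ f j = v then h2.choose
    else Classical.arbitrary (Fin t) with hg
  set L : Finset V := X' ∪ B'.image f with hL
  have hdich : ∀ l ∈ L, ((S (g l)).center = l ∧ u ∈ (S (g l)).leaves ∧ l ≠ u) ∨
      (g l ∈ B' ∧ f (g l) = l) := by
    intro l hl
    by_cases h1 : ∃ i, (S i).center = l ∧ u ∈ (S i).leaves ∧ l ≠ u
    · left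
      have : g l = h1.choose := by rw [hg]; exact dif_pos h1
      rw [this]
      exact ⟨h1.choose_spec.1, h1.choose_spec.2.1, h1.choose_spec.2.2⟩
    · right
      rcases Finset.mem_union.1 hl with hX | hIm
      · obtain ⟨hne, i, hi1, hi2⟩ := hX'prop l hX
        exact absurd ⟨i, hi1, hi2, hne⟩ h1
      · obtain ⟨j, hj, hfj⟩ := Finset.mem_image.1 hIm
        have h2 : ∃ j, j ∈ B' ∧ f j = l := ⟨j, hj, hfj⟩
        have : g l = h2.choose := by rw [hg]; simp only; rw [dif_neg h1, dif_pos h2]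
        rw [this]
        exact ⟨h2.choose_spec.1, h2.choose_spec.2⟩
  have himcard : (B'.image f).card = B'.card := Finset.card_image_of_injOn hfinj
  have hdisjFS : Disjoint X' (B'.image f) := by
    rw [Finset.disjoint_left]
    intro x hx hx'
    obtain ⟨j, hj, hfj⟩ := Finset.mem_image.1 hx'
    exact (hf j hj).2 (hfj ▸ hx)
  have hLcard : L.card = Δ := by
    rw [hL, Finset.card_union_of_disjoint hdisjFS, himcard, hX'card, hB'card]; omega
  refine ⟨u, L, hLcard, ?_, g, ?_, ?_⟩
  · intro hu
    rcases Finset.mem_union.1 hu with hX | hIm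
    · exact (hX'prop u hX).1 rfl
    · obtain ⟨j, hj, hfj⟩ := Finset.mem_image.1 hIm
      exact (S j).center_not_mem (hB'center j hj ▸ hfj ▸ (hf j hj).1)
  · intro x hx y hy hgxy
    rcases hdich x hx with ⟨hcx, _, hxu⟩ | ⟨hbx, hfx⟩ <;>
      rcases hdich y hy with ⟨hcy, _, hyu⟩ | ⟨hby, hfy⟩
    · rw [← hcx, hgxy, hcy]
    · exact (hxu (by rw [← hcx, hgxy]; exact hB'center _ hby)).elim
    · exact (hyu (by rw [← hcy, ← hgxy]; exact hB'center _ hbx)).elim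
    · rw [← hfx, hgxy, hfy]
  · intro l hl
    rcases hdich l hl with ⟨hcl, hul, _⟩ | ⟨hbl, hfl⟩
    · exact Or.inr ⟨hcl.symm, hul⟩
    · exact Or.inl ⟨(hB'center _ hbl).symm, by have := (hf _ hbl).1; rwa [hfl] at this⟩


theorem starGraph_count_le_of_rainbow_free {V : Type} [Fintype V]
    (Δ n t : ℕ) (hΔ : 2 ≤ Δ) (hcard : Fintype.card V = n)
    (S : Fin t → StarGraph V Δ) (hfree : ¬ HasRainbowStar S) :
    (t : ℤ) ≤ (n : ℤ) * ((Δ : ℤ) - 1) - ((centers S).ncard : ℤ) * (Δ : ℤ) := by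
  classical
  have hCount : ∀ u : V, centerCount S u
      = (Finset.univ.filter fun i : Fin t => (S i).center = u).card := by
    intro u
    rw [centerCount, show {i : Fin t | (S i).center = u}
      = ↑(Finset.univ.filter fun i : Fin t => (S i).center = u) by ext i; simp]
    exact Set.ncard_coe_finset _
  have hIn : ∀ u : V, inDeg S u = (Finset.univ.filter fun x : V =>
      x ≠ u ∧ ∃ i, (S i).center = x ∧ u ∈ (S i).leaves).card := by
    intro u
    rw [inDeg, show {x : V | x ≠ u ∧ ∃ i, (S i).center = x ∧ u ∈ (S i).leaves}
      = ↑(Finset.univ.filter fun x : V => x ≠ u ∧ ∃ i, (S i).center = x ∧ u ∈ (S i).leaves) by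
        ext x; simp]
    exact Set.ncard_coe_finset _
  have hC : (centers S).ncard
      = (Finset.univ.filter fun x : V => ∃ i, (S i).center = x).card := by
    rw [centers, show {u : V | ∃ i, (S i).center = u}
      = ↑(Finset.univ.filter fun x : V => ∃ i, (S i).center = x) by ext x; simp]
    exact Set.ncard_coe_finset _
  have ht : ∑ u : V, centerCount S u = t := by
    simp_rw [hCount]
    rw [← Finset.card_eq_sum_card_fiberwise
      (f := fun i : Fin t => (S i).center) (fun i _ => Finset.mem_univ _)]
    simp
  have hin : (Finset.univ.filter fun x : V => ∃ i, (S i).center = x).card * Δ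
      ≤ ∑ u : V, inDeg S u := by
    have h1 : ∑ u : V, inDeg S u = ∑ x : V, (Finset.univ.filter fun u : V =>
        x ≠ u ∧ ∃ i, (S i).center = x ∧ u ∈ (S i).leaves).card := by
      simp_rw [hIn, Finset.card_filter]
      exact Finset.sum_comm
    rw [h1]
    calc (Finset.univ.filter fun x : V => ∃ i, (S i).center = x).card * Δ
        = ∑ _x ∈ (Finset.univ.filter fun x : V => ∃ i, (S i).center = x), Δ := by
          rw [Finset.sum_const, smul_eq_mul]
      _ ≤ ∑ x ∈ (Finset.univ.filter fun x : V => ∃ i, (S i).center = x),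
            (Finset.univ.filter fun u : V =>
              x ≠ u ∧ ∃ i, (S i).center = x ∧ u ∈ (S i).leaves).card := by
          apply Finset.sum_le_sum
          intro x hx
          obtain ⟨i, hi⟩ := (Finset.mem_filter.1 hx).2
          calc Δ = (S i).leaves.card := ((S i).card_leaves).symm
            _ ≤ _ := by
              apply Finset.card_le_card
              intro u hu
              refine Finset.mem_filter.2 ⟨Finset.mem_univ _, ?_, i, hi, hu⟩
              rintro rfl
              exact (S i).center_not_mem (hi ▸ hu)
      _ ≤ ∑ x : V, _ := Finset.sum_le_sum_of_subset (Finset.subset_univ _)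
  have hkey : ∀ u : V, centerCount S u + inDeg S u + 1 ≤ Δ :=
    fun u => key_degree_bound (le_trans one_le_two hΔ) S hfree u
  have hsum : ∑ u : V, (centerCount S u + inDeg S u + 1) ≤ ∑ _u : V, Δ :=
    Finset.sum_le_sum (fun u _ => hkey u)
  rw [Finset.sum_add_distrib, Finset.sum_add_distrib, ht, Finset.sum_const,
    Finset.sum_const, Finset.card_univ, hcard, smul_eq_mul, smul_eq_mul,
    mul_one] at hsum
  have hfinal : t + (Finset.univ.filter fun x : V => ∃ i, (S i).center = x).card * Δ + n
      ≤ n * Δ := by omega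
  rw [hC]
  have hz : (t : ℤ) + ((Finset.univ.filter fun x : V => ∃ i, (S i).center = x).card : ℤ) * Δ
      + n ≤ (n : ℤ) * Δ := by exact_mod_cast hfinal
  linarith
end

section
/- Let Δ ≥ 2 and let 𝒮 be a collection (with repetition allowed) of copies of the star K_{1,Δ} on a common vertex set V with |V| = n = a(2Δ-1) + b, where a, b are nonnegative integers, a ≥ 1, 0 ≤ b ≤ 2Δ-2, and b(Δ-1) = k₁(2Δ-1) + k₂ with k₁, k₂ nonnegative integers and Δ < k₂ ≤ 2Δ-2. Let C ⊆ V be the set of vertices that are centers of at least one star of 𝒮. If 𝒮 is rainbow K_{1,Δ}-free and |𝒮| = a(Δ-1)² + k₁(Δ-1) + k₂ - Δ, then |C| = a(Δ-1) + k₁ + 1. -/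
open scoped Classical


/-- Greedy choice of distinct leaves from a family of stars all centered at `u`,
avoiding a forbidden set `F`. -/
private lemma greedy_lemma {V : Type} {Δ t : ℕ} (S : Fin t → StarGraph V Δ) (u : V)
    (i₀ : Fin t) :
    ∀ (I : Finset (Fin t)) (F : Finset V), (∀ i ∈ I, (S i).center = u) →
      I.card + F.card ≤ Δ →
      ∃ (L : Finset V) (g : V → Fin t), L.card = I.card ∧ u ∉ L ∧ (∀ x ∈ L, x ∉ F) ∧
        Set.InjOn g ↑L ∧ ∀ l ∈ L, g l ∈ I ∧ l ∈ (S (g l)).leaves := by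
  intro I
  induction I using Finset.cons_induction with
  | empty =>
    intro F _ _
    exact ⟨∅, fun _ => i₀, by simp, by simp, by simp, by simp, by simp⟩
  | cons i I' hi ih =>
    intro F hcen hcard
    obtain ⟨L, g, hLcard, huL, hLF, hginj, hg⟩ :=
      ih F (fun j hj => hcen j (Finset.mem_cons_of_mem hj))
        (by rw [Finset.card_cons] at hcard; omega)
    have hcui : (S i).center = u := hcen i (Finset.mem_cons_self _ _)
    have hsub : ¬ (S i).leaves ⊆ F ∪ L := by
      intro hsub
      have h1 := Finset.card_le_card hsub
      have h2 := Finset.card_union_le F L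
      rw [(S i).card_leaves] at h1
      rw [Finset.card_cons] at hcard
      omega
    obtain ⟨v, hvl, hvFL⟩ := Finset.not_subset.mp hsub
    have hvF : v ∉ F := fun h => hvFL (Finset.mem_union_left _ h)
    have hvL : v ∉ L := fun h => hvFL (Finset.mem_union_right _ h)
    have hvu : v ≠ u := by
      intro h
      apply (S i).center_not_mem
      rw [hcui, ← h]
      exact hvl
    refine ⟨insert v L, Function.update g v i, ?_, ?_, ?_, ?_, ?_⟩
    · rw [Finset.card_insert_of_notMem hvL, hLcard, Finset.card_cons]
    · intro h
      rcases Finset.mem_insert.mp h with h | h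
      · exact hvu h.symm
      · exact huL h
    · intro x hx
      rcases Finset.mem_insert.mp hx with rfl | hx
      · exact hvF
      · exact hLF x hx
    · intro x hx y hy hxy
      simp only [Finset.coe_insert, Set.mem_insert_iff, Finset.mem_coe] at hx hy
      rcases hx with rfl | hx <;> rcases hy with rfl | hy
      · rfl
      · exfalso
        rw [Function.update_self] at hxy
        rw [Function.update_of_ne (by rintro rfl; exact hvL hy)] at hxy
        exact hi (hxy ▸ (hg y hy).1)
      · exfalso
        rw [Function.update_self] at hxy
        rw [Function.update_of_ne (by rintro rfl; exact hvL hx)] at hxy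
        exact hi (hxy ▸ (hg x hx).1)
      · rw [Function.update_of_ne (by rintro rfl; exact hvL hx),
          Function.update_of_ne (by rintro rfl; exact hvL hy)] at hxy
        exact hginj hx hy hxy
    · intro l hl
      rcases Finset.mem_insert.mp hl with h | hlL
      · subst h
        rw [Function.update_self]
        exact ⟨Finset.mem_cons_self _ _, hvl⟩
      · have hlv : l ≠ v := fun h => hvL (h ▸ hlL)
        rw [Function.update_of_ne hlv]
        exact ⟨Finset.mem_cons_of_mem (hg l hlL).1, (hg l hlL).2⟩

/-- From a set `Dset` of in-neighbours of `u` plus a set `I` of stars centered at `u`,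
with `|I| + |Dset| = Δ`, build a rainbow star centered at `u`. -/
private lemma build_rainbow {V : Type} {Δ t : ℕ} (S : Fin t → StarGraph V Δ) (u : V)
    (Dset : Finset V) (I : Finset (Fin t))
    (hD : ∀ x ∈ Dset, x ≠ u ∧ ∃ i, (S i).center = x ∧ u ∈ (S i).leaves)
    (hI : ∀ i ∈ I, (S i).center = u)
    (hcardsum : I.card + Dset.card = Δ) (hΔ : 1 ≤ Δ) :
    HasRainbowStar S := by
  -- get a default index
  have hne : Nonempty (Fin t) := by
    rcases I.eq_empty_or_nonempty with hI0 | ⟨i, hi⟩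
    · have hDne : Dset.Nonempty := by
        rw [← Finset.card_pos]
        rw [hI0] at hcardsum
        simp at hcardsum
        omega
      obtain ⟨x, hx⟩ := hDne
      exact ⟨(hD x hx).2.choose⟩
    · exact ⟨i⟩
  obtain ⟨i₀⟩ := hne
  obtain ⟨L, g, hLcard, huL, hLD, hginj, hg⟩ :=
    greedy_lemma S u i₀ I Dset hI (by omega)
  choose ι hι1 hι2 using fun x (hx : x ∈ Dset) => (hD x hx).2
  set G : V → Fin t := fun x => if hx : x ∈ Dset then ι x hx else g x with hG
  have hdisj : Disjoint L Dset := Finset.disjoint_left.mpr hLD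
  refine ⟨u, L ∪ Dset, ?_, ?_, G, ?_, ?_⟩
  · rw [Finset.card_union_of_disjoint hdisj, hLcard, hcardsum]
  · intro h
    rcases Finset.mem_union.mp h with h | h
    · exact huL h
    · exact (hD u h).1 rfl
  · intro x hx y hy hxy
    simp only [Finset.coe_union, Set.mem_union, Finset.mem_coe] at hx hy
    by_cases hxD : x ∈ Dset <;> by_cases hyD : y ∈ Dset
    · have e1 : (S (G x)).center = x := by simp only [hG, dif_pos hxD]; exact hι1 x hxD
      have e2 : (S (G y)).center = y := by simp only [hG, dif_pos hyD]; exact hι1 y hyD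
      rw [← e1, ← e2, hxy]
    · have hyL : y ∈ L := hy.resolve_right hyD
      have e1 : (S (G x)).center = x := by simp only [hG, dif_pos hxD]; exact hι1 x hxD
      have e2 : (S (G y)).center = u := by
        simp only [hG, dif_neg hyD]; exact hI (g y) (hg y hyL).1
      exfalso
      exact (hD x hxD).1 (by rw [← e1, hxy, e2])
    · have hxL : x ∈ L := hx.resolve_right hxD
      have e1 : (S (G y)).center = y := by simp only [hG, dif_pos hyD]; exact hι1 y hyD
      have e2 : (S (G x)).center = u := by
        simp only [hG, dif_neg hxD]; exact hI (g x) (hg x hxL).1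
      exfalso
      exact (hD y hyD).1 (by rw [← e1, ← hxy, e2])
    · have hxL : x ∈ L := hx.resolve_right hxD
      have hyL : y ∈ L := hy.resolve_right hyD
      apply hginj hxL hyL
      simpa only [hG, dif_neg hxD, dif_neg hyD] using hxy
  · intro l hl
    rcases Finset.mem_union.mp hl with hlL | hlD
    · have hlD : l ∉ Dset := hLD l hlL
      have : G l = g l := by simp only [hG, dif_neg hlD]
      rw [this]
      exact Or.inl ⟨(hI (g l) (hg l hlL).1).symm, (hg l hlL).2⟩
    · have : G l = ι l hlD := by simp only [hG, dif_pos hlD]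
      rw [this]
      exact Or.inr ⟨(hι1 l hlD).symm, hι2 l hlD⟩

theorem centers_card_extremal_large_k2 {V : Type} [Fintype V]
    (Δ n a b k₁ k₂ t : ℕ) (hΔ : 2 ≤ Δ)
    (hcard : Fintype.card V = n)
    (hn : n = a * (2 * Δ - 1) + b) (ha : 1 ≤ a) (hb : b ≤ 2 * Δ - 2)
    (hbk : b * (Δ - 1) = k₁ * (2 * Δ - 1) + k₂)
    (hk₂ : Δ < k₂) (hk₂' : k₂ ≤ 2 * Δ - 2)
    (S : Fin t → StarGraph V Δ) (hfree : ¬ HasRainbowStar S)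
    (hsize : t = a * (Δ - 1) ^ 2 + k₁ * (Δ - 1) + k₂ - Δ) :
    (centers S).ncard = a * (Δ - 1) + k₁ + 1 := by
  classical
  have hΔ1 : 1 ≤ Δ := by omega
  -- the finsets
  set cfil : V → ℕ := fun u => (Finset.univ.filter fun i => (S i).center = u).card with hcfil
  set dfil : V → ℕ :=
    fun u => (Finset.univ.filter
      fun x : V => x ≠ u ∧ ∃ i, (S i).center = x ∧ u ∈ (S i).leaves).card with hdfil
  set Cfin : Finset V := Finset.univ.filter (fun u => ∃ i, (S i).center = u) with hCfin
  set m : ℕ := Cfin.card with hmdef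
  have hm : (centers S).ncard = m := by
    rw [centers, Set.ncard_eq_toFinset_card']
    congr 1
    ext u
    simp [hCfin]
  -- key degree bound from rainbow-freeness
  have hd_lt : ∀ u : V, dfil u < Δ := by
    intro u
    by_contra h
    push_neg at h
    obtain ⟨Dset, hDsub, hDcard⟩ := Finset.exists_subset_card_eq (s := _) (n := Δ) h
    apply hfree
    apply build_rainbow S u Dset ∅
    · intro x hx
      have := hDsub hx
      simp only [hdfil, Finset.mem_filter, Finset.mem_univ, true_and] at this
      exact this
    · intro i hi; simp at hi
    · simp [hDcard]
    · exact hΔ1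
  have hkey : ∀ u : V, 1 ≤ cfil u → cfil u + dfil u < Δ := by
    intro u hc
    by_contra h
    push_neg at h
    have hd := hd_lt u
    obtain ⟨I, hIsub, hIcard⟩ := Finset.exists_subset_card_eq
      (s := Finset.univ.filter fun i => (S i).center = u) (n := Δ - dfil u) (by simp only [hcfil] at h hc; omega)
    apply hfree
    apply build_rainbow S u
      (Finset.univ.filter fun x : V => x ≠ u ∧ ∃ i, (S i).center = x ∧ u ∈ (S i).leaves) I
    · intro x hx
      simp only [Finset.mem_filter, Finset.mem_univ, true_and] at hx
      exact hx
    · intro i hi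
      have := hIsub hi
      simp only [Finset.mem_filter, Finset.mem_univ, true_and] at this
      exact this
    · rw [hIcard]
      simp only [hdfil] at hd ⊢
      omega
    · exact hΔ1
  have hkey' : ∀ u : V, cfil u + dfil u ≤ Δ - 1 := by
    intro u
    by_cases hc : cfil u = 0
    · have := hd_lt u; omega
    · have := hkey u (by omega); omega
  -- t as the sum of cfil
  have hsum_c : ∑ u : V, cfil u = t := by
    have h := Finset.card_eq_sum_card_fiberwise
      (s := (Finset.univ : Finset (Fin t))) (t := (Finset.univ : Finset V))
      (f := fun i => (S i).center) (fun x _ => Finset.mem_univ _)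
    simp only [Finset.card_univ, Fintype.card_fin] at h
    simp only [hcfil]
    exact h.symm
  -- sum of dfil is at least Δ * m
  have hswap : ∑ u : V, dfil u = ∑ x : V, (Finset.univ.filter
      fun u : V => x ≠ u ∧ ∃ i, (S i).center = x ∧ u ∈ (S i).leaves).card := by
    simp only [hdfil, Finset.card_filter]
    rw [Finset.sum_comm]
  have hsum_d : Δ * m ≤ ∑ u : V, dfil u := by
    rw [hswap]
    have hgeΔ : ∀ x ∈ Cfin, Δ ≤ (Finset.univ.filter
        fun u : V => x ≠ u ∧ ∃ i, (S i).center = x ∧ u ∈ (S i).leaves).card := by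
      intro x hx
      simp only [hCfin, Finset.mem_filter, Finset.mem_univ, true_and] at hx
      obtain ⟨i, hi⟩ := hx
      have hsub : (S i).leaves ⊆ Finset.univ.filter
          fun u : V => x ≠ u ∧ ∃ j, (S j).center = x ∧ u ∈ (S j).leaves := by
        intro u hu
        simp only [Finset.mem_filter, Finset.mem_univ, true_and]
        refine ⟨?_, i, hi, hu⟩
        intro hxu
        exact (S i).center_not_mem (by rw [hi, hxu]; exact hu)
      calc Δ = (S i).leaves.card := (S i).card_leaves.symm
        _ ≤ _ := Finset.card_le_card hsub
    calc Δ * m = ∑ _x ∈ Cfin, Δ := by rw [Finset.sum_const, smul_eq_mul, mul_comm]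
      _ ≤ ∑ x ∈ Cfin, (Finset.univ.filter
          fun u : V => x ≠ u ∧ ∃ i, (S i).center = x ∧ u ∈ (S i).leaves).card :=
        Finset.sum_le_sum hgeΔ
      _ ≤ ∑ x : V, (Finset.univ.filter
          fun u : V => x ≠ u ∧ ∃ i, (S i).center = x ∧ u ∈ (S i).leaves).card :=
        Finset.sum_le_sum_of_subset (Finset.subset_univ _)
  -- upper bound sum
  have hub_sum : (∑ u : V, cfil u) + (∑ u : V, dfil u) ≤ n * (Δ - 1) := by
    rw [← Finset.sum_add_distrib]
    calc ∑ u : V, (cfil u + dfil u) ≤ Finset.univ.card • (Δ - 1) :=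
          Finset.sum_le_card_nsmul _ _ _ (fun u _ => hkey' u)
      _ = n * (Δ - 1) := by rw [smul_eq_mul, Finset.card_univ, hcard]
  -- inequality 1 : t + Δ * m ≤ n * (Δ - 1)
  have i1 : t + Δ * m ≤ n * (Δ - 1) := by
    calc t + Δ * m ≤ (∑ u : V, cfil u) + (∑ u : V, dfil u) := by
          rw [hsum_c]; exact Nat.add_le_add_left hsum_d _
      _ ≤ n * (Δ - 1) := hub_sum
  -- inequality 2 : t ≤ (Δ - 1) * m
  have hcz : ∀ u ∈ Finset.univ, u ∉ Cfin → cfil u = 0 := by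
    intro u _ hu
    simp only [hCfin, Finset.mem_filter, Finset.mem_univ, true_and] at hu
    simp only [hcfil, Finset.card_eq_zero]
    rw [Finset.filter_eq_empty_iff]
    intro i _
    exact fun h => hu ⟨i, h⟩
  have i2 : t ≤ (Δ - 1) * m := by
    have h1 : ∑ u ∈ Cfin, cfil u = ∑ u : V, cfil u :=
      Finset.sum_subset (Finset.subset_univ Cfin) hcz
    calc t = ∑ u ∈ Cfin, cfil u := by rw [h1, hsum_c]
      _ ≤ Cfin.card • (Δ - 1) :=
        Finset.sum_le_card_nsmul _ _ _ (fun u _ => le_trans (Nat.le_add_right _ _) (hkey' u))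
      _ = (Δ - 1) * m := by rw [smul_eq_mul, mul_comm, hmdef]
  -- now pure arithmetic
  rw [hm]
  clear hm hswap hsum_d hub_sum hsum_c hcz hkey hkey' hd_lt hfree hcfil hdfil hCfin
  obtain ⟨e, rfl⟩ : ∃ e, Δ = e + 1 := ⟨Δ - 1, by omega⟩
  have he : 1 ≤ e := by omega
  have h21 : 2 * (e + 1) - 1 = 2 * e + 1 := by omega
  have h11 : (e + 1) - 1 = e := by omega
  rw [h21] at hn hbk
  rw [h11] at hbk hsize i1 i2 ⊢
  have hk2e : e + 2 ≤ k₂ := by omega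
  -- t + (e+1) = a*e^2 + k₁*e + k₂
  have ht : t + (e + 1) = a * e ^ 2 + k₁ * e + k₂ := by
    rw [hsize]
    refine Nat.sub_add_cancel ?_
    calc e + 1 ≤ k₂ := by omega
      _ ≤ a * e ^ 2 + k₁ * e + k₂ := Nat.le_add_left _ _
  -- upper bound : m ≤ a*e + k₁ + 1
  have hfact : n * e + (e + 1) = (t + (e + 1)) + (e + 1) * (a * e + k₁ + 1) := by
    rw [ht, hn]
    have expand : (a * (2 * e + 1) + b) * e = a * (2 * e + 1) * e + b * e := by ring
    rw [expand, hbk]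
    ring
  have hub : m ≤ a * e + k₁ + 1 := by
    have h := Nat.add_le_add_right i1 (e + 1)
    rw [hfact] at h
    have h' : (t + (e + 1)) + (e + 1) * m ≤ (t + (e + 1)) + (e + 1) * (a * e + k₁ + 1) := by
      calc (t + (e + 1)) + (e + 1) * m = t + (e + 1) * m + (e + 1) := by ring
        _ ≤ _ := h
    exact Nat.le_of_mul_le_mul_left (Nat.le_of_add_le_add_left h') (by omega)
  -- lower bound : a*e + k₁ < m
  have ht2 : e * (a * e + k₁) + 1 ≤ t := by
    have h1 : (e * (a * e + k₁) + 1) + (e + 1) ≤ t + (e + 1) := by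
      rw [ht]
      calc (e * (a * e + k₁) + 1) + (e + 1) = a * e ^ 2 + k₁ * e + (e + 2) := by ring
        _ ≤ a * e ^ 2 + k₁ * e + k₂ := Nat.add_le_add_left hk2e _
    exact Nat.le_of_add_le_add_right h1
  have hlb : a * e + k₁ < m := by
    have h2 : e * (a * e + k₁) < e * m := by
      calc e * (a * e + k₁) < t := ht2
        _ ≤ e * m := i2
    exact Nat.lt_of_mul_lt_mul_left h2
  omega
end

section
/- Let Δ ≥ 2 and let 𝒮 be a collection (with repetition allowed) of copies of the star K_{1,Δ} on a common vertex set V with |V| = n = a(2Δ-1) + b, where a, b are nonnegative integers, a ≥ 1, 0 ≤ b ≤ 2Δ-2, and b(Δ-1) = k₁(2Δ-1) + k₂ with k₁, k₂ nonnegative integers and 0 ≤ k₂ < Δ. Let C ⊆ V be the set of vertices that are centers of at least one star of 𝒮. If 𝒮 is rainbow K_{1,Δ}-free and |𝒮| = a(Δ-1)² + k₁(Δ-1), then |C| = a(Δ-1) + k₁. -/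
open Finset in
open scoped Classical in
lemma key_bound {V : Type} [Fintype V] {Δ t : ℕ} (hΔ : 1 ≤ Δ)
    (S : Fin t → StarGraph V Δ) (hfree : ¬ HasRainbowStar S) (u : V) :
    centerCount S u + inDeg S u < Δ := by
  by_contra hcon
  push_neg at hcon
  apply hfree
  set A : Finset (Fin t) := univ.filter (fun i => (S i).center = u) with hA
  set Xs : Finset V :=
    univ.filter (fun x => x ≠ u ∧ ∃ i, (S i).center = x ∧ u ∈ (S i).leaves) with hXs
  have hcc : centerCount S u = A.card := by
    rw [centerCount, show {i : Fin t | (S i).center = u} = ↑A by ext i; simp [hA],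
      Set.ncard_coe_finset]
  have hin : inDeg S u = Xs.card := by
    rw [inDeg, show {x : V | x ≠ u ∧ ∃ i, (S i).center = x ∧ u ∈ (S i).leaves} = ↑Xs by
      ext x; simp [hXs], Set.ncard_coe_finset]
  rw [hcc, hin] at hcon
  -- pick X' ⊆ Xs of size min |Xs| Δ
  obtain ⟨X', hX'sub, hX'card⟩ := Finset.exists_subset_card_eq (s := Xs) (n := min Xs.card Δ) (min_le_left _ _)
  set m : ℕ := Δ - X'.card with hm
  have hmA : m ≤ A.card := by omega
  obtain ⟨A', hA'sub, hA'card⟩ := Finset.exists_subset_card_eq (s := A) hmA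
  -- Hall's theorem
  have hall : ∀ s : Finset {i // i ∈ A'}, s.card ≤ (s.biUnion fun i => (S i.1).leaves \ X').card := by
    intro s
    rcases s.eq_empty_or_nonempty with rfl | ⟨i, hi⟩
    · simp
    · have h1 : s.card ≤ m := by
        calc s.card ≤ Fintype.card {i // i ∈ A'} := Finset.card_le_univ s
        _ = A'.card := Fintype.card_coe _
        _ = m := hA'card
      have h2 : ((S i.1).leaves \ X').card ≥ m := by
        have := Finset.le_card_sdiff X' (S i.1).leaves
        have hl := (S i.1).card_leaves
        omega
      have h3 : ((S i.1).leaves \ X') ⊆ s.biUnion fun i => (S i.1).leaves \ X' :=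
        Finset.subset_biUnion_of_mem (fun i => (S i.1).leaves \ X') hi
      have := Finset.card_le_card h3
      omega
  obtain ⟨f, hfinj, hf⟩ :=
    (Finset.all_card_le_biUnion_card_iff_exists_injective
      (fun i : {i // i ∈ A'} => (S i.1).leaves \ X')).mp hall
  have hfleaf : ∀ i : {i // i ∈ A'}, f i ∈ (S i.1).leaves ∧ f i ∉ X' := by
    intro i; have := hf i; exact Finset.mem_sdiff.mp this
  have hAcenter : ∀ i ∈ A', (S i).center = u := by
    intro i hi; have := hA'sub hi; rw [hA] at this; exact (Finset.mem_filter.mp this).2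
  have hXprop : ∀ x ∈ X', x ≠ u ∧ ∃ i, (S i).center = x ∧ u ∈ (S i).leaves := by
    intro x hx; have := hX'sub hx; rw [hXs] at this; exact (Finset.mem_filter.mp this).2
  -- the leaf set
  set Limg : Finset V := A'.attach.image (fun i => f i) with hLimg
  have hLimgcard : Limg.card = m := by
    rw [hLimg, Finset.card_image_of_injective _ hfinj, Finset.card_attach, hA'card]
  have hdisj : Disjoint X' Limg := by
    rw [Finset.disjoint_right]
    intro x hx
    rw [hLimg, Finset.mem_image] at hx
    obtain ⟨i, _, rfl⟩ := hx
    exact (hfleaf i).2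
  set L : Finset V := X' ∪ Limg with hL
  have hLcard : L.card = Δ := by
    rw [hL, Finset.card_union_of_disjoint hdisj, hLimgcard]
    omega
  have hmemL : ∀ l ∈ L, l ∈ X' ∨ ∃ i : {i // i ∈ A'}, f i = l := by
    intro l hl
    rw [hL, Finset.mem_union] at hl
    rcases hl with h | h
    · exact Or.inl h
    · right; rw [hLimg, Finset.mem_image] at h
      obtain ⟨i, _, rfl⟩ := h
      exact ⟨i, rfl⟩
  have huL : u ∉ L := by
    intro hu
    rcases hmemL u hu with h | ⟨i, hi⟩
    · exact (hXprop u h).1 rfl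
    · have := (hfleaf i).1
      rw [hi] at this
      have hc := hAcenter i.1 i.2
      exact (S i.1).center_not_mem (hc ▸ this)
  -- nonempty Fin t
  have hne : Nonempty (Fin t) := by
    rcases Nat.lt_or_ge 0 A.card with h | h
    · obtain ⟨i, _⟩ := Finset.card_pos.mp h; exact ⟨i⟩
    · have : 0 < Xs.card := by omega
      obtain ⟨x, hx⟩ := Finset.card_pos.mp this
      rw [hXs] at hx
      obtain ⟨i, _⟩ := (Finset.mem_filter.mp hx).2.2
      exact ⟨i⟩
  -- the assignment
  set g : V → Fin t := fun l =>
    if hl : l ∈ X' then Classical.choose (hXprop l hl).2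
    else if hl2 : ∃ i : {i // i ∈ A'}, f i = l then (Classical.choose hl2).1
    else Classical.arbitrary (Fin t) with hg
  have hgX : ∀ l (hl : l ∈ X'), (S (g l)).center = l ∧ u ∈ (S (g l)).leaves := by
    intro l hl
    rw [hg]; simp only [dif_pos hl]
    exact Classical.choose_spec (hXprop l hl).2
  have hgI : ∀ i : {i // i ∈ A'}, g (f i) = i.1 := by
    intro i
    have hnX : f i ∉ X' := (hfleaf i).2
    have hex : ∃ i' : {i // i ∈ A'}, f i' = f i := ⟨i, rfl⟩
    rw [hg]; simp only [dif_neg hnX, dif_pos hex]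
    congr 1
    exact hfinj (Classical.choose_spec hex)
  refine ⟨u, L, hLcard, huL, g, ?_, ?_⟩
  · intro l₁ hl₁ l₂ hl₂ hgl
    simp only [Finset.coe_mem, Finset.mem_coe] at hl₁ hl₂
    rcases hmemL l₁ hl₁ with h1 | ⟨i₁, hi₁⟩ <;> rcases hmemL l₂ hl₂ with h2 | ⟨i₂, hi₂⟩
    · have := (hgX l₁ h1).1
      rw [hgl] at this
      rw [← this, (hgX l₂ h2).1]
    · exfalso
      have hc1 : (S (g l₁)).center = l₁ := (hgX l₁ h1).1
      have hc2 : (S (g l₂)).center = u := by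
        rw [← hi₂, hgI i₂]; exact hAcenter i₂.1 i₂.2
      rw [hgl, hc2] at hc1
      exact (hXprop l₁ h1).1 hc1.symm
    · exfalso
      have hc2 : (S (g l₂)).center = l₂ := (hgX l₂ h2).1
      have hc1 : (S (g l₁)).center = u := by
        rw [← hi₁, hgI i₁]; exact hAcenter i₁.1 i₁.2
      rw [← hgl, hc1] at hc2
      exact (hXprop l₂ h2).1 hc2.symm
    · rw [← hi₁, ← hi₂, hgI i₁, hgI i₂] at hgl
      rw [← hi₁, ← hi₂, Subtype.ext hgl]
  · intro l hl
    rcases hmemL l hl with h | ⟨i, hi⟩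
    · exact Or.inr ⟨(hgX l h).1.symm, (hgX l h).2⟩
    · left
      constructor
      · rw [← hi, hgI i]; exact (hAcenter i.1 i.2).symm
      · rw [← hi, hgI i]; exact (hfleaf i).1

open Finset in
open scoped Classical in
theorem centers_card_extremal_small_k2 {V : Type} [Fintype V]
    (Δ n a b k₁ k₂ t : ℕ) (hΔ : 2 ≤ Δ)
    (hcard : Fintype.card V = n)
    (hn : n = a * (2 * Δ - 1) + b) (ha : 1 ≤ a) (hb : b ≤ 2 * Δ - 2)
    (hbk : b * (Δ - 1) = k₁ * (2 * Δ - 1) + k₂) (hk₂ : k₂ < Δ)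
    (S : Fin t → StarGraph V Δ) (hfree : ¬ HasRainbowStar S)
    (hsize : t = a * (Δ - 1) ^ 2 + k₁ * (Δ - 1)) :
    (centers S).ncard = a * (Δ - 1) + k₁ := by
  obtain ⟨d, rfl⟩ : ∃ d, Δ = d + 1 := ⟨Δ - 1, by omega⟩
  have hd1 : 1 ≤ d := by omega
  simp only [Nat.add_sub_cancel] at hbk hsize ⊢
  have h21 : 2 * (d + 1) - 1 = 2 * d + 1 := by omega
  rw [h21] at hn hbk
  set Cfin : Finset V := univ.filter (fun u => ∃ i, (S i).center = u) with hCfin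
  have hC : (centers S).ncard = Cfin.card := by
    rw [centers, show {u : V | ∃ i, (S i).center = u} = ↑Cfin by ext x; simp [hCfin],
      Set.ncard_coe_finset]
  set cfun : V → ℕ := fun u => (univ.filter fun i => (S i).center = u).card with hcfun
  set dfun : V → ℕ :=
    (fun u => (univ.filter fun x => x ≠ u ∧ ∃ i, (S i).center = x ∧ u ∈ (S i).leaves).card)
    with hdfun
  have hkey : ∀ u, cfun u + dfun u ≤ d := by
    intro u
    have h := key_bound (by omega) S hfree u
    have hcc : centerCount S u = cfun u := by
      rw [centerCount, show {i : Fin t | (S i).center = u}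
        = ↑(univ.filter fun i => (S i).center = u) by ext i; simp, Set.ncard_coe_finset]
    have hin : inDeg S u = dfun u := by
      rw [inDeg, show {x : V | x ≠ u ∧ ∃ i, (S i).center = x ∧ u ∈ (S i).leaves}
        = ↑(univ.filter fun x => x ≠ u ∧ ∃ i, (S i).center = x ∧ u ∈ (S i).leaves) by
          ext x; simp, Set.ncard_coe_finset]
    omega
  -- sum of centerCounts is t
  have hsum_c : ∑ u, cfun u = t := by
    have := Finset.card_eq_sum_card_fiberwise
      (f := fun i : Fin t => (S i).center) (s := univ) (t := univ) (fun i _ => mem_univ _)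
    rw [card_univ, Fintype.card_fin] at this
    exact this.symm
  -- sum of inDegs is at least (d+1) * |C|
  have hswap : ∑ u, dfun u
      = ∑ x, (univ.filter fun u => x ≠ u ∧ ∃ i, (S i).center = x ∧ u ∈ (S i).leaves).card := by
    simp only [hdfun, Finset.card_filter]
    exact Finset.sum_comm
  have hsum_d : Cfin.card * (d + 1) ≤ ∑ u, dfun u := by
    rw [hswap]
    have hstep : ∀ x ∈ Cfin,
        d + 1 ≤ (univ.filter fun u => x ≠ u ∧ ∃ i, (S i).center = x ∧ u ∈ (S i).leaves).card := by
      intro x hx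
      obtain ⟨i, hi⟩ := (Finset.mem_filter.mp hx).2
      have hsub : (S i).leaves
          ⊆ univ.filter fun u => x ≠ u ∧ ∃ i, (S i).center = x ∧ u ∈ (S i).leaves := by
        intro v hv
        refine Finset.mem_filter.mpr ⟨mem_univ _, ?_, i, hi, hv⟩
        intro hxv
        exact (S i).center_not_mem (hi ▸ hxv ▸ hv)
      calc d + 1 = (S i).leaves.card := (S i).card_leaves.symm
        _ ≤ _ := Finset.card_le_card hsub
    calc Cfin.card * (d + 1) = Cfin.card • (d + 1) := (smul_eq_mul _ _).symm
      _ ≤ ∑ x ∈ Cfin, (univ.filter fun u => x ≠ u ∧ ∃ i, (S i).center = x ∧ u ∈ (S i).leaves).card :=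
          Finset.card_nsmul_le_sum _ _ _ hstep
      _ ≤ _ := Finset.sum_le_sum_of_subset (Finset.subset_univ _)
  have htop : ∑ u, (cfun u + dfun u) ≤ n * d := by
    calc ∑ u, (cfun u + dfun u) ≤ (univ : Finset V).card • d :=
        Finset.sum_le_card_nsmul _ _ _ (fun u _ => hkey u)
      _ = n * d := by rw [card_univ, hcard, smul_eq_mul]
  have hmain : t + Cfin.card * (d + 1) ≤ n * d := by
    rw [← hsum_c]
    calc (∑ u, cfun u) + Cfin.card * (d+1) ≤ (∑ u, cfun u) + ∑ u, dfun u := by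
          exact Nat.add_le_add_left hsum_d _
      _ = ∑ u, (cfun u + dfun u) := (Finset.sum_add_distrib).symm
      _ ≤ n * d := htop
  have ht_le : t ≤ Cfin.card * d := by
    rw [← hsum_c]
    have hzero : ∀ u ∈ (univ : Finset V), u ∉ Cfin → cfun u = 0 := by
      intro u _ hu
      rw [hcfun]
      simp only [Finset.card_eq_zero, Finset.filter_eq_empty_iff]
      intro i _
      exact fun h => hu (Finset.mem_filter.mpr ⟨mem_univ _, i, h⟩)
    rw [← Finset.sum_subset (Finset.subset_univ Cfin) hzero]
    calc ∑ u ∈ Cfin, cfun u ≤ Cfin.card • d :=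
        Finset.sum_le_card_nsmul _ _ _ (fun u _ => le_trans (Nat.le_add_right _ _) (hkey u))
      _ = Cfin.card * d := smul_eq_mul _ _
  -- arithmetic
  rw [hC]
  set c := Cfin.card
  have hlow : a * d + k₁ ≤ c := by
    have h1 : d * (a * d + k₁) ≤ d * c := by
      calc d * (a * d + k₁) = a * d ^ 2 + k₁ * d := by ring
        _ = t := hsize.symm
        _ ≤ Cfin.card * d := ht_le
        _ = d * c := by ring
    exact Nat.le_of_mul_le_mul_left h1 (by omega)
  have hnd : n * d = t + (d + 1) * (a * d + k₁) + k₂ := by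
    rw [hn, hsize, add_mul, hbk]
    ring
  have hhigh : c < a * d + k₁ + 1 := by
    have h2 : (d + 1) * c < (d + 1) * (a * d + k₁ + 1) := by
      have : c * (d + 1) ≤ (d + 1) * (a * d + k₁) + k₂ := by omega
      have hk : k₂ ≤ d := by omega
      nlinarith
    exact Nat.lt_of_mul_lt_mul_left h2
  omega
end

section
/- Let Δ ≥ 2 and let 𝒮 be a collection (with repetition allowed) of copies of the star K_{1,Δ} on a common vertex set V with |V| = n, where Δ + 1 ≤ n ≤ 2Δ - 2. Let C ⊆ V be the set of vertices that are centers of at least one star of 𝒮. If 𝒮 is rainbow K_{1,Δ}-free and |𝒮| = ⌊(n-1)²/4⌋, then: if n is odd, |C| = (n-1)/2, and if n is even, |C| = ⌊(n-1)/2⌋ or |C| = ⌈(n-1)/2⌉. -/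
open scoped Classical

section Aux

variable {V : Type} {Δ t : ℕ}

/-- Greedy construction: from `m` distinct stars all centered at `u`, avoiding a
forbidden set `F` with `F.card + m ≤ Δ`, we can pick `m` distinct fresh leaves
assigned injectively to the stars. -/
lemma greedy_leaves (S : Fin t → StarGraph V Δ) (u : V) (i₀ : Fin t) :
    ∀ (m : ℕ) (B : Finset (Fin t)) (F : Finset V), m ≤ B.card →
      (∀ i ∈ B, (S i).center = u) → F.card + m ≤ Δ →
      ∃ (L : Finset V) (g : V → Fin t), L.card = m ∧ (∀ x ∈ L, x ∉ F) ∧ u ∉ L ∧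
        (∀ l ∈ L, g l ∈ B ∧ l ∈ (S (g l)).leaves) ∧ Set.InjOn g ↑L := by
  intro m
  induction m with
  | zero =>
    intro B F _ _ _
    exact ⟨∅, fun _ => i₀, by simp, by simp, by simp, by simp, by simp [Set.InjOn]⟩
  | succ m ih =>
    intro B F hm hB hF
    obtain ⟨i, hi⟩ : B.Nonempty := Finset.card_pos.mp (lt_of_lt_of_le (Nat.succ_pos m) hm)
    have hlne : ((S i).leaves \ F).Nonempty := by
      rw [← Finset.card_pos]
      have h1 := Finset.le_card_sdiff F (S i).leaves
      have h2 := (S i).card_leaves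
      omega
    obtain ⟨l, hl⟩ := hlne
    rw [Finset.mem_sdiff] at hl
    obtain ⟨L₁, g₁, hcard₁, havoid₁, hu₁, hmem₁, hinj₁⟩ :=
      ih (B.erase i) (insert l F)
        (by have := Finset.card_erase_of_mem hi; omega)
        (fun j hj => hB j (Finset.mem_of_mem_erase hj))
        (by have := Finset.card_insert_le l F; omega)
    have hlL₁ : l ∉ L₁ := fun h => havoid₁ l h (Finset.mem_insert_self l F)
    have hneq : ∀ x ∈ L₁, x ≠ l := by
      rintro x hx rfl; exact hlL₁ hx
    refine ⟨insert l L₁, Function.update g₁ l i, ?_, ?_, ?_, ?_, ?_⟩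
    · rw [Finset.card_insert_of_notMem hlL₁, hcard₁]
    · intro x hx
      rcases Finset.mem_insert.mp hx with rfl | hx
      · exact hl.2
      · exact fun hxF => havoid₁ x hx (Finset.mem_insert_of_mem hxF)
    · intro hu
      rcases Finset.mem_insert.mp hu with h | h
      · exact (S i).center_not_mem (by rw [hB i hi, h]; exact hl.1)
      · exact hu₁ h
    · intro x hx
      rcases Finset.mem_insert.mp hx with rfl | hx
      · rw [Function.update_self]; exact ⟨hi, hl.1⟩
      · rw [Function.update_of_ne (hneq x hx)]
        exact ⟨Finset.mem_of_mem_erase (hmem₁ x hx).1, (hmem₁ x hx).2⟩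
    · intro a ha b hb hab
      simp only [Finset.coe_insert, Set.mem_insert_iff, Finset.mem_coe] at ha hb
      rcases ha with rfl | ha <;> rcases hb with rfl | hb
      · rfl
      · exfalso
        rw [Function.update_self, Function.update_of_ne (hneq b hb)] at hab
        exact Finset.notMem_erase i B (hab ▸ (hmem₁ b hb).1)
      · exfalso
        rw [Function.update_self, Function.update_of_ne (hneq a ha)] at hab
        exact Finset.notMem_erase i B (hab.symm ▸ (hmem₁ a ha).1)
      · rw [Function.update_of_ne (hneq a ha), Function.update_of_ne (hneq b hb)] at hab
        exact hinj₁ ha hb hab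

/-- If `𝒮` is rainbow `K_{1,Δ}`-free, then for every `u`, the number of stars
centered at `u` plus the in-degree of `u` is at most `Δ - 1`. -/
lemma key_bound_s11 [Fintype V] (hΔ : 1 ≤ Δ) (S : Fin t → StarGraph V Δ)
    (hfree : ¬ HasRainbowStar S) (u : V) :
    (Finset.univ.filter fun i => (S i).center = u).card
      + (Finset.univ.filter fun x : V => x ≠ u ∧ ∃ i, (S i).center = x ∧ u ∈ (S i).leaves).card
      + 1 ≤ Δ := by
  by_contra hcon
  push_neg at hcon
  obtain ⟨B, hBdef⟩ : ∃ B, B = Finset.univ.filter fun i => (S i).center = u := ⟨_, rfl⟩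
  obtain ⟨A, hAdef⟩ : ∃ A, A = Finset.univ.filter
      fun x : V => x ≠ u ∧ ∃ i, (S i).center = x ∧ u ∈ (S i).leaves := ⟨_, rfl⟩
  rw [← hBdef, ← hAdef] at hcon
  have hbig : Δ ≤ B.card + A.card := by omega
  have hAspec : ∀ x ∈ A, x ≠ u ∧ ∃ i, (S i).center = x ∧ u ∈ (S i).leaves := by
    intro x hx; rw [hAdef, Finset.mem_filter] at hx; exact hx.2
  have hBspec : ∀ i ∈ B, (S i).center = u := by
    intro i hi; rw [hBdef, Finset.mem_filter] at hi; exact hi.2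
  have hne : Nonempty (Fin t) := by
    rcases Nat.lt_or_ge 0 B.card with h | h
    · obtain ⟨i, _⟩ := Finset.card_pos.mp h; exact ⟨i⟩
    · have h' : 0 < A.card := by omega
      obtain ⟨x, hx⟩ := Finset.card_pos.mp h'
      obtain ⟨i, _⟩ := (hAspec x hx).2
      exact ⟨i⟩
  obtain ⟨i₀⟩ := hne
  obtain ⟨f, hfdef⟩ : ∃ f : V → Fin t, f = fun x =>
      if h : ∃ i, (S i).center = x ∧ u ∈ (S i).leaves then h.choose else i₀ := ⟨_, rfl⟩
  have hf : ∀ x ∈ A, (S (f x)).center = x ∧ u ∈ (S (f x)).leaves := by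
    intro x hx
    have h := (hAspec x hx).2
    simp only [hfdef, dif_pos h]
    exact h.choose_spec
  have hfinj : ∀ a ∈ A, ∀ b ∈ A, f a = f b → a = b := by
    intro a ha b hb hab
    rw [← (hf a ha).1, ← (hf b hb).1, hab]
  apply hfree
  by_cases hcase : Δ ≤ A.card
  · obtain ⟨A', hA'sub, hA'card⟩ := Finset.exists_subset_card_eq hcase
    refine ⟨u, A', hA'card, ?_, f, ?_, ?_⟩
    · exact fun h => (hAspec u (hA'sub h)).1 rfl
    · intro a ha b hb hab
      exact hfinj a (hA'sub ha) b (hA'sub hb) hab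
    · intro l hl
      exact Or.inr ⟨(hf l (hA'sub hl)).1.symm, (hf l (hA'sub hl)).2⟩
  · push_neg at hcase
    obtain ⟨L₁, g₁, hcard₁, havoid₁, hu₁, hmem₁, hinj₁⟩ :=
      greedy_leaves S u i₀ (Δ - A.card) B A (by omega) hBspec (by omega)
    have hdisj : Disjoint A L₁ := Finset.disjoint_right.mpr havoid₁
    refine ⟨u, A ∪ L₁, ?_, ?_, fun x => if x ∈ A then f x else g₁ x, ?_, ?_⟩
    · rw [Finset.card_union_of_disjoint hdisj, hcard₁]; omega
    · intro h
      rcases Finset.mem_union.mp h with h | h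
      · exact (hAspec u h).1 rfl
      · exact hu₁ h
    · intro a ha b hb hab
      simp only [Finset.coe_union, Set.mem_union, Finset.mem_coe] at ha hb
      have hab' : (if a ∈ A then f a else g₁ a) = (if b ∈ A then f b else g₁ b) := hab
      rcases ha with ha | ha <;> rcases hb with hb | hb
      · rw [if_pos ha, if_pos hb] at hab'
        exact hfinj a ha b hb hab'
      · exfalso
        rw [if_pos ha, if_neg (havoid₁ b hb)] at hab'
        have h1 : (S (f a)).center = a := (hf a ha).1
        have h2 : (S (g₁ b)).center = u := hBspec _ (hmem₁ b hb).1
        rw [hab', h2] at h1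
        exact (hAspec a ha).1 h1.symm
      · exfalso
        rw [if_neg (havoid₁ a ha), if_pos hb] at hab'
        have h1 : (S (f b)).center = b := (hf b hb).1
        have h2 : (S (g₁ a)).center = u := hBspec _ (hmem₁ a ha).1
        rw [← hab', h2] at h1
        exact (hAspec b hb).1 h1.symm
      · rw [if_neg (havoid₁ a ha), if_neg (havoid₁ b hb)] at hab'
        exact hinj₁ ha hb hab'
    · intro l hl
      show (S (if l ∈ A then f l else g₁ l)).Adj u l
      rcases Finset.mem_union.mp hl with h | h
      · rw [if_pos h]
        exact Or.inr ⟨(hf l h).1.symm, (hf l h).2⟩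
      · rw [if_neg (havoid₁ l h)]
        exact Or.inl ⟨(hBspec _ (hmem₁ l h).1).symm, (hmem₁ l h).2⟩

end Aux

set_option maxHeartbeats 2000000 in
theorem centers_card_extremal_small_n {V : Type} [Fintype V]
    (Δ n t : ℕ) (hΔ : 2 ≤ Δ)
    (hcard : Fintype.card V = n)
    (hn₁ : Δ + 1 ≤ n) (hn₂ : n ≤ 2 * Δ - 2)
    (S : Fin t → StarGraph V Δ) (hfree : ¬ HasRainbowStar S)
    (hsize : t = (n - 1) ^ 2 / 4) :
    (Odd n → (centers S).ncard = (n - 1) / 2) ∧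
    (Even n → (centers S).ncard = (n - 1) / 2 ∨ (centers S).ncard = n / 2) := by
  classical
  obtain ⟨Cf, hCfdef⟩ : ∃ Cf : Finset V,
      Cf = Finset.univ.filter (fun u : V => ∃ i, (S i).center = u) := ⟨_, rfl⟩
  have hCeq : (centers S).ncard = Cf.card := by
    have hcoe : centers S = ↑Cf := by
      ext u; simp [centers, hCfdef]
    rw [hcoe, Set.ncard_coe_finset]
  have hkn : Cf.card ≤ n := by
    rw [← hcard, ← Finset.card_univ]
    exact Finset.card_le_card (Finset.subset_univ Cf)
  -- t as a fiberwise sum over the centers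
  have hfib := Finset.card_eq_sum_card_fiberwise
      (s := (Finset.univ : Finset (Fin t))) (t := Cf) (f := fun i => (S i).center)
      (fun i _ => by
        rw [hCfdef]
        exact Finset.mem_filter.mpr ⟨Finset.mem_univ _, ⟨i, rfl⟩⟩)
  have htsum : ∑ u ∈ Cf, (Finset.univ.filter fun i => (S i).center = u).card = t := by
    rw [← hfib]
    simp
  -- column bound from rainbow-freeness
  have hcol : ∀ u ∈ Cf,
      (Finset.univ.filter fun i => (S i).center = u).card
        + ((Cf.filter fun x : V => x ≠ u ∧ ∃ i, (S i).center = x ∧ u ∈ (S i).leaves).card + 1)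
        ≤ Δ := by
    intro u _
    have h1 := key_bound_s11 (by omega) S hfree u
    have h2 : (Cf.filter fun x : V => x ≠ u ∧ ∃ i, (S i).center = x ∧ u ∈ (S i).leaves).card
        ≤ (Finset.univ.filter fun x : V =>
            x ≠ u ∧ ∃ i, (S i).center = x ∧ u ∈ (S i).leaves).card :=
      Finset.card_le_card (Finset.filter_subset_filter _ (Finset.subset_univ Cf))
    omega
  have hsum1 : t + ((∑ u ∈ Cf,
      (Cf.filter fun x : V => x ≠ u ∧ ∃ i, (S i).center = x ∧ u ∈ (S i).leaves).card)
        + Cf.card) ≤ Cf.card * Δ := by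
    have h := Finset.sum_le_sum hcol
    simp only [Finset.sum_add_distrib, Finset.sum_const, smul_eq_mul, mul_one] at h
    rw [htsum] at h
    exact h
  -- row bound
  have hrow : ∀ x ∈ Cf, Δ ≤
      (Cf.filter fun u : V => x ≠ u ∧ ∃ i, (S i).center = x ∧ u ∈ (S i).leaves).card
        + (n - Cf.card) := by
    intro x hx
    obtain ⟨i, hi⟩ : ∃ i, (S i).center = x := by
      rw [hCfdef] at hx
      exact (Finset.mem_filter.mp hx).2
    have hsub : (S i).leaves ∩ Cf ⊆
        Cf.filter fun u : V => x ≠ u ∧ ∃ j, (S j).center = x ∧ u ∈ (S j).leaves := by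
      intro u hu
      rw [Finset.mem_inter] at hu
      refine Finset.mem_filter.mpr ⟨hu.2, ?_, i, hi, hu.1⟩
      intro h
      exact (S i).center_not_mem (by rw [hi, h]; exact hu.1)
    have h1 : ((S i).leaves ∩ Cf).card + ((S i).leaves \ Cf).card = Δ := by
      rw [Finset.card_inter_add_card_sdiff, (S i).card_leaves]
    have h2 : ((S i).leaves \ Cf).card ≤ n - Cf.card := by
      have hsub2 : (S i).leaves \ Cf ⊆ Finset.univ \ Cf := by
        intro y hy
        rw [Finset.mem_sdiff] at hy ⊢
        exact ⟨Finset.mem_univ y, hy.2⟩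
      have h3 := Finset.card_le_card hsub2
      rw [Finset.card_sdiff_of_subset (Finset.subset_univ Cf), Finset.card_univ, hcard] at h3
      exact h3
    have h3 := Finset.card_le_card hsub
    omega
  have hsum2 : Cf.card * Δ ≤ (∑ x ∈ Cf,
      (Cf.filter fun u : V => x ≠ u ∧ ∃ i, (S i).center = x ∧ u ∈ (S i).leaves).card)
      + Cf.card * (n - Cf.card) := by
    have h := Finset.sum_le_sum hrow
    simp only [Finset.sum_add_distrib, Finset.sum_const, smul_eq_mul] at h
    exact h
  -- double counting: swap the order of summation
  have hEE : (∑ u ∈ Cf,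
      (Cf.filter fun x : V => x ≠ u ∧ ∃ i, (S i).center = x ∧ u ∈ (S i).leaves).card)
      = ∑ x ∈ Cf,
      (Cf.filter fun u : V => x ≠ u ∧ ∃ i, (S i).center = x ∧ u ∈ (S i).leaves).card := by
    simp only [Finset.card_filter]
    exact Finset.sum_comm
  rw [hEE] at hsum1
  obtain ⟨E, hEdef⟩ : ∃ E, E = ∑ x ∈ Cf,
      (Cf.filter fun u : V => x ≠ u ∧ ∃ i, (S i).center = x ∧ u ∈ (S i).leaves).card := ⟨_, rfl⟩
  rw [← hEdef] at hsum1 hsum2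
  -- main inequality : t + k + k² ≤ k n
  have h5 : t + Cf.card ≤ Cf.card * (n - Cf.card) := by
    have h := le_trans hsum1 hsum2
    obtain ⟨M, hM⟩ : ∃ M, M = Cf.card * (n - Cf.card) := ⟨_, rfl⟩
    rw [← hM] at h ⊢
    omega
  have h6 : Cf.card * (n - Cf.card) + Cf.card * Cf.card = Cf.card * n := by
    rw [← Nat.mul_add, Nat.sub_add_cancel hkn]
  have hmain : t + Cf.card + Cf.card * Cf.card ≤ Cf.card * n :=
    le_trans (Nat.add_le_add_right h5 _) (le_of_eq h6)
  -- arithmetic endgame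
  have hn3 : 3 ≤ n := by omega
  have hmod : 4 * t + (n - 1) ^ 2 % 4 = (n - 1) ^ 2 := by
    rw [hsize]
    exact Nat.div_add_mod ((n - 1) ^ 2) 4
  have hr4 : (n - 1) ^ 2 % 4 < 4 := Nat.mod_lt _ (by norm_num)
  have h1n : (((n - 1 : ℕ)) : ℤ) = (n : ℤ) - 1 := by
    rw [Nat.cast_sub (by omega : 1 ≤ n)]; simp
  have hZ : ((n : ℤ) - 1 - 2 * Cf.card) ^ 2 ≤ 3 := by
    have c1 : (4 : ℤ) * t + ((n - 1) ^ 2 % 4 : ℕ) = ((n : ℤ) - 1) ^ 2 := by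
      calc (4 : ℤ) * t + ((n - 1) ^ 2 % 4 : ℕ)
          = ((4 * t + (n - 1) ^ 2 % 4 : ℕ) : ℤ) := by push_cast; ring
        _ = (((n - 1) ^ 2 : ℕ) : ℤ) := by exact_mod_cast congrArg (Nat.cast : ℕ → ℤ) hmod
        _ = ((n : ℤ) - 1) ^ 2 := by rw [Nat.cast_pow, h1n]
    have c2 : (t : ℤ) + Cf.card + Cf.card * Cf.card ≤ Cf.card * n := by exact_mod_cast hmain
    have c4 : (((n - 1) ^ 2 % 4 : ℕ) : ℤ) ≤ 3 := by exact_mod_cast Nat.lt_succ_iff.mp hr4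
    nlinarith [c1, c2, c4]
  have hb1 : 2 * Cf.card ≤ n := by
    by_contra hc
    push_neg at hc
    have hcz : (n : ℤ) + 1 ≤ 2 * Cf.card := by exact_mod_cast hc
    nlinarith [hZ, hcz, sq_nonneg ((n : ℤ) - 1 - 2 * Cf.card + 2)]
  have hb2 : n ≤ 2 * Cf.card + 2 := by
    by_contra hc
    push_neg at hc
    have hcz : (2 : ℤ) * Cf.card + 3 ≤ n := by exact_mod_cast hc
    nlinarith [hZ, hcz, sq_nonneg ((n : ℤ) - 1 - 2 * Cf.card - 2)]
  rw [hCeq]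
  constructor
  · intro hodd
    have := Nat.odd_iff.mp hodd
    omega
  · intro heven
    have := Nat.even_iff.mp heven
    omega
end

section
/- Let n ≥ 2 and let 𝒯 = {T₁,…,T_t} be a collection (with repetition allowed) of trees on a common vertex set V, where |V| = m, each T_i is a tree with exactly n vertices (V(T_i) ⊆ V), and n divides m. If 𝒯 contains no rainbow tree with n vertices, then t ≤ m(n-2)/n. -/
/-- `R` is a rainbow tree in the collection `T`: `R` (a subgraph of the complete graph
on `V`, i.e. a graph on a subset of `V`) is a tree, and there is an injective assignment
of its edges to members of the collection such that each edge lies in the assigned graph. -/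
def IsRainbowSubtree {V ι : Type} (T : ι → (⊤ : SimpleGraph V).Subgraph)
    (R : (⊤ : SimpleGraph V).Subgraph) : Prop :=
  R.coe.IsTree ∧
    ∃ g : Sym2 V → ι, Set.InjOn g R.edgeSet ∧ ∀ e ∈ R.edgeSet, e ∈ (T (g e)).edgeSet

/-- The collection `T` contains a rainbow tree with `n` vertices. -/
def HasRainbowTree {V ι : Type} (T : ι → (⊤ : SimpleGraph V).Subgraph) (n : ℕ) : Prop :=
  ∃ R : (⊤ : SimpleGraph V).Subgraph, IsRainbowSubtree T R ∧ R.verts.ncard = n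

open Finset SimpleGraph

/-! ### Trees from parent functions -/

/-- The graph on `Fin n` in which each `k > 0` is joined to its "parent" `p k`. -/
@[reducible] def parentGraph (n : ℕ) (p : ℕ → ℕ) : SimpleGraph (Fin n) where
  Adj i j := i ≠ j ∧ (((0:ℕ) < (j:ℕ) ∧ (i:ℕ) = p (j:ℕ)) ∨ ((0:ℕ) < (i:ℕ) ∧ (j:ℕ) = p (i:ℕ)))
  symm := by
    constructor
    rintro i j ⟨hne, h | h⟩
    · exact ⟨hne.symm, Or.inr h⟩
    · exact ⟨hne.symm, Or.inl h⟩
  loopless := ⟨fun i h => h.1 rfl⟩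

lemma parentGraph_connected (n : ℕ) (p : ℕ → ℕ) (hn : 0 < n)
    (hp : ∀ k, 0 < k → k < n → p k < k) : (parentGraph n p).Connected := by
  have key : ∀ j : ℕ, ∀ hj : j < n, (parentGraph n p).Reachable ⟨j, hj⟩ ⟨0, hn⟩ := by
    intro j
    induction j using Nat.strong_induction_on with
    | _ j ih =>
      intro hj
      rcases Nat.eq_zero_or_pos j with rfl | hj0
      · exact Reachable.refl _
      · have hpj : p j < j := hp j hj0 hj
        have hpj' : p j < n := hpj.trans hj
        have hadj : (parentGraph n p).Adj ⟨j, hj⟩ ⟨p j, hpj'⟩ := by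
          refine ⟨?_, Or.inr ⟨hj0, rfl⟩⟩
          intro hcontra
          have h2 : j = p j := congrArg Fin.val hcontra
          omega
        exact hadj.reachable.trans (ih (p j) hpj hpj')
  rw [connected_iff]
  refine ⟨?_, ⟨⟨0, hn⟩⟩⟩
  intro x y
  exact (key x.1 x.2).trans (key y.1 y.2).symm

lemma parentGraph_isBridge (n : ℕ) (p : ℕ → ℕ)
    (hp : ∀ k, 0 < k → k < n → p k < k) {a b : Fin n}
    (hb0 : 0 < (b:ℕ)) (hab : (a:ℕ) = p (b:ℕ)) :
    (parentGraph n p).IsBridge s(a, b) := by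
  have hpb : p (b:ℕ) < (b:ℕ) := hp _ hb0 b.isLt
  have hna : a ≠ b := by
    intro h
    rw [h] at hab
    omega
  rw [isBridge_iff]
  refine ?_
  -- the "descendant of b" predicate, via iterated parents
  set q : ℕ → ℕ := fun y => if 0 < y ∧ y < n then p y else 0 with hq
  set desc : Fin n → Prop := fun x => ∃ r : ℕ, q^[r] (x:ℕ) = (b:ℕ) with hdesc
  have hqlt : ∀ y : ℕ, y < (b:ℕ) → q y < (b:ℕ) := by
    intro y hy
    by_cases h : 0 < y ∧ y < n
    · have := hp y h.1 h.2
      simp only [hq, if_pos h]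
      omega
    · simp only [hq, if_neg h]
      omega
  have hstay : ∀ (r : ℕ) (y : ℕ), y < (b:ℕ) → q^[r] y < (b:ℕ) := by
    intro r
    induction r with
    | zero => intro y hy; simpa using hy
    | succ r ih =>
      intro y hy
      rw [Function.iterate_succ_apply]
      exact ih _ (hqlt y hy)
  have hdescb : desc b := ⟨0, rfl⟩
  have hnota : ¬ desc a := by
    rintro ⟨r, hr⟩
    have : q^[r] (a:ℕ) < (b:ℕ) := hstay r _ (by omega)
    omega
  -- the invariant: adjacency in the edge-deleted graph preserves `desc`
  have helper : ∀ x y : Fin n, (0 < (y:ℕ) ∧ (x:ℕ) = p (y:ℕ)) → s(x, y) ≠ s(a, b) →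
      (desc x ↔ desc y) := by
    rintro x y ⟨hy0, hxy⟩ hne
    have hqy : q (y:ℕ) = (x:ℕ) := by
      simp only [hq, if_pos (And.intro hy0 y.isLt)]
      omega
    constructor
    · rintro ⟨r, hr⟩
      exact ⟨r + 1, by rw [Function.iterate_succ_apply, hqy, hr]⟩
    · rintro ⟨r, hr⟩
      have hyb : (y:ℕ) ≠ (b:ℕ) := by
        intro h
        have hyb' : y = b := Fin.ext h
        have hxa : x = a := by
          apply Fin.ext
          rw [hab, ← h]
          exact hxy
        exact hne (by rw [hyb', hxa])
      cases r with
      | zero => simp at hr; omega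
      | succ r =>
        rw [Function.iterate_succ_apply, hqy] at hr
        exact ⟨r, hr⟩
  have hinv : ∀ x y : Fin n,
      ((parentGraph n p) \ fromEdgeSet {s(a, b)}).Adj x y → (desc x ↔ desc y) := by
    intro x y hxy
    rw [sdiff_adj, fromEdgeSet_adj] at hxy
    obtain ⟨⟨hne', hrel⟩, hnd⟩ := hxy
    have hnotdel : s(x, y) ≠ s(a, b) := by
      intro h
      exact hnd ⟨by rw [h]; exact Set.mem_singleton _, hne'⟩
    rcases hrel with h | h
    · exact helper x y h hnotdel
    · exact (helper y x h (by rwa [Sym2.eq_swap] at hnotdel)).symm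
  intro hreach
  obtain ⟨W⟩ := hreach
  have hwalk : ∀ (x y : Fin n) (_ : ((parentGraph n p) \ fromEdgeSet {s(a, b)}).Walk x y),
      desc x ↔ desc y := by
    intro x y W
    induction W with
    | nil => rfl
    | cons h _ ih => exact (hinv _ _ h).trans ih
  exact hnota ((hwalk a b W).mpr hdescb)

lemma parentGraph_isTree (n : ℕ) (p : ℕ → ℕ) (hn : 0 < n)
    (hp : ∀ k, 0 < k → k < n → p k < k) : (parentGraph n p).IsTree := by
  rw [isTree_iff]
  refine ⟨parentGraph_connected n p hn hp, ?_⟩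
  rw [isAcyclic_iff_forall_adj_isBridge]
  intro x y hxy
  rcases hxy.2 with h | h
  · exact parentGraph_isBridge n p hp h.1 h.2
  · have := parentGraph_isBridge n p hp h.1 h.2
    rwa [Sym2.eq_swap] at this

/-- Trees transfer along graph isomorphisms. -/
lemma isTree_map {α β : Type} {G : SimpleGraph α} {H : SimpleGraph β} (φ : G ≃g H)
    (h : G.IsTree) : H.IsTree := by
  rw [isTree_iff] at h ⊢
  constructor
  · exact Connected.map φ.toHom (fun y => ⟨φ.symm y, by simp⟩) h.1
  · intro v c hc
    have hinj : Function.Injective (φ.symm.toHom : H →g G) := by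
      intro x y hxy
      exact φ.symm.toEquiv.injective hxy
    exact h.2 (c.map φ.symm.toHom) ((Walk.map_isCycle_iff_of_injective hinj).mpr hc)

/-- If some vertex lies in at least `n - 1` of the trees, then greedily growing a tree
from `v` (each step uses a new tree through `v`, which has a vertex outside the current
tree, hence a boundary edge) produces a rainbow tree with `n` vertices. -/
lemma exists_rainbow_of_common_vertex {V : Type} [Fintype V] (n t : ℕ) (hn : 2 ≤ n)
    (T : Fin t → (⊤ : SimpleGraph V).Subgraph)
    (htree : ∀ i, (T i).coe.IsTree) (hverts : ∀ i, (T i).verts.ncard = n)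
    (v : V) (S : Finset (Fin t)) (hS : S.card = n - 1)
    (hmem : ∀ i ∈ S, v ∈ (T i).verts) :
    HasRainbowTree T n := by
  classical
  -- enumerate the n-1 trees through v
  set ι : Fin (n - 1) → Fin t := fun a => ((S.orderIsoOfFin hS a : S) : Fin t) with hι
  have hιinj : Function.Injective ι := by
    intro a b hab
    exact (S.orderIsoOfFin hS).injective (Subtype.coe_injective hab)
  have hιS : ∀ a, ι a ∈ S := fun a => (S.orderIsoOfFin hS a).2
  have hn1 : 0 < n - 1 := by omega
  set κ : ℕ → Fin t := fun k => if h : k - 1 < n - 1 then ι ⟨k - 1, h⟩ else ι ⟨0, hn1⟩ with hκ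
  have hκeq : ∀ k (_h1 : 0 < k) (_h2 : k < n), κ k = ι ⟨k - 1, by omega⟩ := by
    intro k hk0 hkn
    simp only [hκ]
    rw [dif_pos (show k - 1 < n - 1 by omega)]
  -- the greedy construction
  have grow : ∀ j, 1 ≤ j → j ≤ n → ∃ (w : ℕ → V) (p : ℕ → ℕ),
      w 0 = v ∧ Set.InjOn w (Set.Iio j) ∧ (∀ k, 0 < k → k < j → p k < k) ∧
      (∀ k, 0 < k → k < j → s(w (p k), w k) ∈ (T (κ k)).edgeSet) := by
    intro j h1
    induction j, h1 using Nat.le_induction with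
    | base =>
      intro _
      refine ⟨fun _ => v, id, rfl, ?_, by omega, by omega⟩
      intro x hx y hy _
      simp only [Set.mem_Iio] at hx hy
      omega
    | succ j hj ih =>
      intro hjn
      obtain ⟨w, p, hw0, hwinj, hplt, hpedge⟩ := ih (by omega)
      -- the tree used at this step
      set i : Fin t := κ j with hi
      have hvi : v ∈ (T i).verts := by
        rw [hi, hκeq j (by omega) (by omega)]
        exact hmem _ (hιS _)
      -- current vertex set
      set S₀ : Finset V := (Finset.range j).image w with hS₀
      have hvS₀ : v ∈ S₀ := by
        rw [hS₀]
        exact Finset.mem_image.mpr ⟨0, Finset.mem_range.mpr (by omega), hw0⟩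
      -- there is a vertex of T i outside S₀
      have hex : ∃ u, u ∈ (T i).verts ∧ u ∉ (S₀ : Set V) := by
        by_contra hcon
        push_neg at hcon
        have hsub : (T i).verts ⊆ (S₀ : Set V) := fun x hx => hcon x hx
        have h1 : (T i).verts.ncard ≤ (S₀ : Set V).ncard :=
          Set.ncard_le_ncard hsub (S₀.finite_toSet)
        rw [hverts i, Set.ncard_coe_finset] at h1
        have h2 : S₀.card ≤ j := le_trans (Finset.card_image_le) (by simp)
        omega
      obtain ⟨u, hu, huS₀⟩ := hex
      -- a walk from v to u inside T i, and its boundary dart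
      have hreach : ((T i).coe).Reachable ⟨v, hvi⟩ ⟨u, hu⟩ :=
        (htree i).isConnected.preconnected _ _
      obtain ⟨W⟩ := hreach
      obtain ⟨d, _, hdfst, hdsnd⟩ :=
        W.exists_boundary_dart {x : ↥(T i).verts | (x : V) ∈ (S₀ : Set V)} hvS₀ huS₀
      obtain ⟨k₀, hk₀, hwk₀⟩ : ∃ k₀, k₀ < j ∧ w k₀ = (d.fst : V) := by
        have := hdfst
        simp only [Set.mem_setOf_eq, Finset.coe_image, hS₀] at this
        obtain ⟨k₀, hk₀, hwk₀⟩ := this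
        exact ⟨k₀, by simpa using hk₀, hwk₀⟩
      refine ⟨Function.update w j ((d.snd : V)), Function.update p j k₀, ?_, ?_, ?_, ?_⟩
      · rw [Function.update_of_ne (show (0:ℕ) ≠ j by omega)]
        exact hw0
      · intro x hx y hy hxy
        simp only [Set.mem_Iio] at hx hy
        by_cases hxj : x = j <;> by_cases hyj : y = j
        · omega
        · exfalso
          rw [hxj, Function.update_self, Function.update_of_ne hyj] at hxy
          refine hdsnd ?_
          simp only [Set.mem_setOf_eq]
          rw [hxy]
          exact Finset.mem_coe.mpr
            (Finset.mem_image.mpr ⟨y, Finset.mem_range.mpr (by omega), rfl⟩)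
        · exfalso
          rw [hyj, Function.update_self, Function.update_of_ne hxj] at hxy
          refine hdsnd ?_
          simp only [Set.mem_setOf_eq]
          rw [← hxy]
          exact Finset.mem_coe.mpr
            (Finset.mem_image.mpr ⟨x, Finset.mem_range.mpr (by omega), rfl⟩)
        · rw [Function.update_of_ne hxj, Function.update_of_ne hyj] at hxy
          exact hwinj (Set.mem_Iio.mpr (by omega)) (Set.mem_Iio.mpr (by omega)) hxy
      · intro k hk0 hkj
        by_cases hkj' : k = j
        · rw [hkj', Function.update_self]; omega
        · rw [Function.update_of_ne hkj']
          exact hplt k hk0 (by omega)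
      · intro k hk0 hkj
        by_cases hkj' : k = j
        · have hk₀j : k₀ ≠ j := by omega
          rw [hkj', Function.update_self j k₀ p, Function.update_self j ((d.snd : V)) w,
            Function.update_of_ne hk₀j ((d.snd : V)) w, hwk₀, ← hi]
          exact Subgraph.mem_edgeSet.mpr (by simpa using d.adj)
        · have hpkj : p k ≠ j := by have := hplt k hk0 (by omega); omega
          rw [Function.update_of_ne hkj', Function.update_of_ne hkj',
            Function.update_of_ne hpkj]
          exact hpedge k hk0 (by omega)
  -- assemble the rainbow tree
  obtain ⟨w, p, hw0, hwinj, hplt, hpedge⟩ := grow n (by omega) le_rfl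
  set R : (⊤ : SimpleGraph V).Subgraph :=
    { verts := ((Finset.range n).image w : Finset V)
      Adj := fun a b => ∃ k : ℕ, 0 < k ∧ k < n ∧
        ((a = w (p k) ∧ b = w k) ∨ (a = w k ∧ b = w (p k)))
      adj_sub := by
        intro a b hab
        obtain ⟨k, hk0, hkn, h | h⟩ := hab
        · rw [SimpleGraph.top_adj, h.1, h.2]
          intro hcon
          have hpk : p k < k := hplt k hk0 hkn
          have := hwinj (Set.mem_Iio.mpr (show p k < n by omega))
            (Set.mem_Iio.mpr hkn) hcon
          omega
        · rw [SimpleGraph.top_adj, h.1, h.2]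
          intro hcon
          have hpk : p k < k := hplt k hk0 hkn
          have := hwinj (Set.mem_Iio.mpr hkn)
            (Set.mem_Iio.mpr (show p k < n by omega)) hcon
          omega
      edge_vert := by
        intro a b hab
        obtain ⟨k, hk0, hkn, h | h⟩ := hab
        · rw [h.1]
          exact Finset.mem_coe.mpr (Finset.mem_image.mpr
            ⟨p k, Finset.mem_range.mpr (by have := hplt k hk0 hkn; omega), rfl⟩)
        · rw [h.1]
          exact Finset.mem_coe.mpr (Finset.mem_image.mpr
            ⟨k, Finset.mem_range.mpr hkn, rfl⟩)
      symm := by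
        constructor
        intro a b hab
        obtain ⟨k, hk0, hkn, h | h⟩ := hab
        · exact ⟨k, hk0, hkn, Or.inr ⟨h.2, h.1⟩⟩
        · exact ⟨k, hk0, hkn, Or.inl ⟨h.2, h.1⟩⟩ } with hR
  have hedge : ∀ e ∈ R.edgeSet, ∃ k, 0 < k ∧ k < n ∧ e = s(w (p k), w k) := by
    intro e he
    revert he
    induction e using Sym2.ind with
    | _ a b =>
      intro he
      rw [Subgraph.mem_edgeSet] at he
      obtain ⟨k, hk0, hkn, h | h⟩ := he
      · exact ⟨k, hk0, hkn, by rw [h.1, h.2]⟩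
      · exact ⟨k, hk0, hkn, by rw [h.1, h.2, Sym2.eq_swap]⟩
  -- the isomorphism with the abstract parent tree
  have hmemverts : ∀ i : Fin n, w (i : ℕ) ∈ R.verts := by
    intro i
    exact Finset.mem_coe.mpr (Finset.mem_image.mpr ⟨i, Finset.mem_range.mpr i.isLt, rfl⟩)
  set f : Fin n → ↥R.verts := fun i => ⟨w (i : ℕ), hmemverts i⟩ with hf
  have hfbij : Function.Bijective f := by
    constructor
    · intro a b hab
      have : w (a : ℕ) = w (b : ℕ) := congrArg Subtype.val hab
      exact Fin.ext (hwinj (Set.mem_Iio.mpr a.isLt) (Set.mem_Iio.mpr b.isLt) this)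
    · rintro ⟨x, hx⟩
      obtain ⟨k, hk, hwk⟩ := Finset.mem_image.mp (Finset.mem_coe.mp hx)
      exact ⟨⟨k, Finset.mem_range.mp hk⟩, Subtype.ext hwk⟩
  have hiso : Nonempty (parentGraph n p ≃g R.coe) := by
    refine ⟨⟨Equiv.ofBijective f hfbij, ?_⟩⟩
    intro i j
    rw [Subgraph.coe_adj]
    constructor
    · rintro ⟨k, hk0, hkn, h | h⟩
      · have hpk : p k < k := hplt k hk0 hkn
        have hi : (i : ℕ) = p k := hwinj (Set.mem_Iio.mpr i.isLt)
          (Set.mem_Iio.mpr (by omega)) h.1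
        have hj : (j : ℕ) = k := hwinj (Set.mem_Iio.mpr j.isLt)
          (Set.mem_Iio.mpr hkn) h.2
        refine ⟨fun hcon => ?_, Or.inl ⟨by omega, by rw [hi, hj]⟩⟩
        have := congrArg Fin.val hcon
        omega
      · have hpk : p k < k := hplt k hk0 hkn
        have hi : (i : ℕ) = k := hwinj (Set.mem_Iio.mpr i.isLt)
          (Set.mem_Iio.mpr hkn) h.1
        have hj : (j : ℕ) = p k := hwinj (Set.mem_Iio.mpr j.isLt)
          (Set.mem_Iio.mpr (by omega)) h.2
        refine ⟨fun hcon => ?_, Or.inr ⟨by omega, by rw [hi, hj]⟩⟩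
        have := congrArg Fin.val hcon
        omega
    · rintro ⟨hne, h | h⟩
      · exact ⟨(j : ℕ), h.1, j.isLt, Or.inl ⟨congrArg w h.2, rfl⟩⟩
      · exact ⟨(i : ℕ), h.1, i.isLt, Or.inr ⟨rfl, congrArg w h.2⟩⟩
  obtain ⟨φ⟩ := hiso
  refine ⟨R, ⟨isTree_map φ (parentGraph_isTree n p (by omega) hplt), ?_⟩, ?_⟩
  · -- the coloring
    refine ⟨fun e => if h : ∃ k, 0 < k ∧ k < n ∧ e = s(w (p k), w k)
        then κ h.choose else κ 1, ?_, ?_⟩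
    · intro e1 he1 e2 he2 hg
      have h1 := hedge e1 he1
      have h2 := hedge e2 he2
      simp only [] at hg
      rw [dif_pos h1, dif_pos h2] at hg
      obtain ⟨hk10, hk1n, he1'⟩ := h1.choose_spec
      obtain ⟨hk20, hk2n, he2'⟩ := h2.choose_spec
      rw [hκeq _ hk10 hk1n, hκeq _ hk20 hk2n] at hg
      have := hιinj hg
      have hkk : h1.choose = h2.choose := by
        have h' := congrArg Fin.val this
        simp only [] at h'
        omega
      rw [he1', he2', hkk]
    · intro e he
      have h1 := hedge e he
      simp only []
      rw [dif_pos h1]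
      obtain ⟨hk0, hkn, he'⟩ := h1.choose_spec
      have hmem' := hpedge _ hk0 hkn
      rwa [← he'] at hmem'
  · show (↑((Finset.range n).image w) : Set V).ncard = n
    rw [Set.ncard_coe_finset, Finset.card_image_of_injOn (by rw [Finset.coe_range]; exact hwinj),
      Finset.card_range]

theorem tree_transversal_bound {V : Type} [Fintype V]
    (n m t : ℕ) (hn : 2 ≤ n)
    (hm : Fintype.card V = m) (hdvd : n ∣ m)
    (T : Fin t → (⊤ : SimpleGraph V).Subgraph)
    (htree : ∀ i, (T i).coe.IsTree) (hverts : ∀ i, (T i).verts.ncard = n)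
    (hfree : ¬ HasRainbowTree T n) :
    t ≤ m * (n - 2) / n := by
  classical
  -- every vertex lies in at most n - 2 trees
  have hdeg : ∀ v : V, (Finset.univ.filter fun i => v ∈ (T i).verts).card ≤ n - 2 := by
    intro v
    by_contra hcon
    push_neg at hcon
    obtain ⟨S, hSsub, hScard⟩ := Finset.exists_subset_card_eq
      (show n - 1 ≤ (Finset.univ.filter fun i => v ∈ (T i).verts).card by omega)
    exact hfree (exists_rainbow_of_common_vertex n t hn T htree hverts v S hScard
      (fun i hi => (Finset.mem_filter.mp (hSsub hi)).2))
  -- double counting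
  have hncard : ∀ s : Set V, s.ncard = (Finset.univ.filter fun v => v ∈ s).card := by
    intro s
    rw [← Set.ncard_coe_finset (Finset.univ.filter fun v => v ∈ s)]
    congr 1
    ext x
    simp
  rw [Nat.le_div_iff_mul_le (by omega : 0 < n)]
  calc t * n = ∑ _i : Fin t, n := by simp [Finset.sum_const, mul_comm]
    _ = ∑ i : Fin t, (Finset.univ.filter fun v => v ∈ (T i).verts).card := by
        refine Finset.sum_congr rfl fun i _ => ?_
        rw [← hncard, hverts i]
    _ = ∑ i : Fin t, ∑ v : V, (if v ∈ (T i).verts then 1 else 0) := by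
        refine Finset.sum_congr rfl fun i _ => ?_
        rw [Finset.card_filter]
    _ = ∑ v : V, ∑ i : Fin t, (if v ∈ (T i).verts then 1 else 0) := Finset.sum_comm
    _ = ∑ v : V, (Finset.univ.filter fun i => v ∈ (T i).verts).card := by
        refine Finset.sum_congr rfl fun v _ => ?_
        rw [Finset.card_filter]
    _ ≤ ∑ _v : V, (n - 2) := Finset.sum_le_sum fun v _ => hdeg v
    _ = m * (n - 2) := by simp [Finset.sum_const, hm]
end

section
/- Let n ≥ 2, let m be a multiple of n, and let V be a vertex set with |V| = m partitioned into m/n parts V₁,…,V_{m/n}, each of size n. Let 𝒯 be a collection of trees consisting of, for each part V_j, exactly n-2 (not necessarily distinct) spanning trees of V_j. Then |𝒯| = m(n-2)/n and 𝒯 contains no rainbow tree with n vertices. -/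
theorem tree_transversal_extremal_construction {V : Type} [Fintype V]
    (n m : ℕ) (hn : 2 ≤ n)
    (hm : Fintype.card V = m) (hdvd : n ∣ m)
    (P : Fin (m / n) → Set V)
    (hdisj : Pairwise fun i j => Disjoint (P i) (P j))
    (hcover : (⋃ j, P j) = Set.univ)
    (hsize : ∀ j, (P j).ncard = n)
    (T : Fin (m / n) × Fin (n - 2) → (⊤ : SimpleGraph V).Subgraph)
    (htree : ∀ p, (T p).coe.IsTree)
    (hspan : ∀ p, (T p).verts = P p.1) :
    Fintype.card (Fin (m / n) × Fin (n - 2)) = m * (n - 2) / n ∧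
      ¬ HasRainbowTree T n := by
  classical
  constructor
  · obtain ⟨k, rfl⟩ := hdvd
    have hnpos : 0 < n := by omega
    have h1 : n * k / n = k := Nat.mul_div_cancel_left _ hnpos
    have h2 : n * k * (n - 2) / n = k * (n - 2) := by
      rw [mul_assoc, Nat.mul_div_cancel_left _ hnpos]
    rw [Fintype.card_prod, Fintype.card_fin, Fintype.card_fin, h1, h2]
  · rintro ⟨R, ⟨hRtree, g, hginj, hg⟩, hcard⟩
    -- the part index of each vertex
    have hmem : ∀ v : V, ∃ j, v ∈ P j := by
      intro v
      have : v ∈ ⋃ j, P j := hcover ▸ Set.mem_univ v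
      simpa using this
    choose f hf using hmem
    have huniq : ∀ v j, v ∈ P j → f v = j := by
      intro v j hv
      by_contra hne
      exact (hdisj hne).ne_of_mem (hf v) hv rfl
    -- adjacent vertices of R are in the same part
    have key : ∀ a b : R.verts, R.coe.Adj a b → f a.val = f b.val := by
      intro a b hab
      have he : s(a.val, b.val) ∈ R.edgeSet := hab
      have he' := hg _ he
      set p := g s(a.val, b.val)
      have ha : a.val ∈ (T p).verts :=
        (T p).edge_vert he'
      have hb : b.val ∈ (T p).verts :=
        (T p).edge_vert ((T p).adj_symm he')
      rw [hspan] at ha hb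
      rw [huniq _ _ ha, huniq _ _ hb]
    -- f is constant on R.verts by connectivity
    have hconn := hRtree.isConnected
    have hconst : ∀ a b : R.verts, f a.val = f b.val := by
      intro a b
      obtain ⟨w⟩ := hconn.preconnected a b
      induction w with
      | nil => rfl
      | cons h p ih => exact (key _ _ h).trans ih
    -- R.verts is nonempty
    have hfin : R.verts.Finite := Set.toFinite _
    have hne : R.verts.Nonempty := by
      rw [← Set.ncard_pos hfin, hcard]; omega
    obtain ⟨v₀, hv₀⟩ := hne
    set j := f v₀
    -- every edge of R is assigned to a pair with first component j
    have himg : g '' R.edgeSet ⊆ {p | p.1 = j} := by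
      rintro p ⟨e, he, rfl⟩
      induction e using Sym2.ind with
      | _ a b =>
      have hadj : R.Adj a b := he
      have ha : a ∈ R.verts := R.edge_vert hadj
      have he' := hg _ he
      have haT : a ∈ (T (g s(a, b))).verts := (T _).edge_vert he'
      rw [hspan] at haT
      have : f a = (g s(a, b)).1 := huniq _ _ haT
      have : f a = j := hconst ⟨a, ha⟩ ⟨v₀, hv₀⟩
      simp only [Set.mem_setOf_eq]
      rw [← huniq _ _ haT, this]
    -- count edges of R: n - 1
    have hfV : Fintype R.verts := hfin.fintype
    have hfE : Fintype R.coe.edgeSet := Fintype.ofFinite _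
    have hcardV : Fintype.card R.verts = n := by
      rw [← hcard, Set.ncard_eq_toFinset_card', Set.toFinset_card]
    have hedge : R.coe.edgeFinset.card + 1 = n := by
      rw [hRtree.card_edgeFinset, hcardV]
    have hEcoe : R.coe.edgeSet.ncard = n - 1 := by
      rw [Set.ncard_eq_toFinset_card']
      rw [show R.coe.edgeSet.toFinset = R.coe.edgeFinset from rfl]
      omega
    have hE : R.edgeSet.ncard = n - 1 := by
      rw [← R.image_coe_edgeSet_coe,
        Set.ncard_image_of_injective _ (Sym2.map.injective Subtype.val_injective), hEcoe]
    -- but there are only n - 2 available indices with first component j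
    have hsub : ({p : Fin (m / n) × Fin (n - 2) | p.1 = j} : Set _).ncard = n - 2 := by
      have : ({p : Fin (m / n) × Fin (n - 2) | p.1 = j} : Set _) =
          Prod.mk j '' Set.univ := by
        ext ⟨a, b⟩
        simp [eq_comm, Prod.ext_iff]
      rw [this, Set.ncard_image_of_injective _ (fun a b h => by simpa using congrArg Prod.snd h : Function.Injective (Prod.mk j)), Set.ncard_univ,
        Nat.card_eq_fintype_card, Fintype.card_fin]
    have hle : (g '' R.edgeSet).ncard ≤ n - 2 :=
      (Set.ncard_le_ncard himg (Set.toFinite _)).trans hsub.le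
    rw [Set.ncard_image_of_injOn hginj, hE] at hle
    omega
end
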